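/- arXiv:1906.06257 — 5 statements merged into one kernel-verified Lean document; each statement's English description precedes it below -/
import Mathlib

section
/- Let A be an n×n real symmetric tridiagonal matrix with all subdiagonal entries nonzero, and let B be the principal submatrix obtained by deleting the last row and column. Then the eigenvalues μ₁ < ⋯ < μ_{n−1} of B strictly interlace the eigenvalues ω₁ < ⋯ < ωₙ of A: ω₁ < μ₁ < ω₂ < ⋯ < μ_{n−1} < ωₙ. -/
open Polynomial Matrix Finset

/-- An eigenvector of an irreducible tridiagonal matrix whose last entry vanishes is zero. -/
lemma tridiag_eigvec_last (n : ℕ) (hn : 0 < n) (B : Matrix (Fin n) (Fin n) ℝ)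
    (hzero : ∀ i j : Fin n, (j : ℕ) + 2 ≤ (i : ℕ) → B i j = 0)
    (hsubd : ∀ i j : Fin n, (i : ℕ) = (j : ℕ) + 1 → B i j ≠ 0)
    (t : ℝ) (u : Fin n → ℝ) (hu : B *ᵥ u = t • u)
    (hlast : u ⟨n - 1, by omega⟩ = 0) : u = 0 := by
  have key : ∀ k : Fin n, (∀ j, k < j → u j = 0) → u k = 0 := by
    intro k hk
    by_cases hkl : (k : ℕ) = n - 1
    · have : k = ⟨n - 1, by omega⟩ := Fin.ext hkl
      rw [this]; exact hlast
    · have hk1 : (k : ℕ) + 1 < n := by have := k.isLt; omega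
      set r : Fin n := ⟨(k : ℕ) + 1, hk1⟩ with hr
      have hur : u r = 0 := hk r (by simp [Fin.lt_def, hr])
      have hrow : ∑ j, B r j * u j = 0 := by
        have := congrFun hu r
        simp only [Matrix.mulVec, dotProduct, Pi.smul_apply, smul_eq_mul] at this
        rw [this, hur, mul_zero]
      have hcol : ∑ j, B r j * u j = B r k * u k := by
        apply Finset.sum_eq_single
        · intro j _ hjk
          rcases lt_or_gt_of_ne hjk with hlt | hgt
          · rw [hzero r j (by simp only [hr]; rw [Fin.lt_def] at hlt; omega), zero_mul]
          · rw [hk j hgt, mul_zero]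
        · intro h; exact absurd (Finset.mem_univ k) h
      have := hcol ▸ hrow
      exact (mul_eq_zero.mp this).resolve_left (hsubd r k rfl)
  have main : ∀ d : ℕ, ∀ k : Fin n, n ≤ (k : ℕ) + d + 1 → u k = 0 := by
    intro d
    induction d with
    | zero =>
      intro k hkd
      apply key
      intro j hj
      rw [Fin.lt_def] at hj
      exact absurd j.isLt (by omega)
    | succ d ih =>
      intro k hkd
      apply key
      intro j hj
      rw [Fin.lt_def] at hj
      exact ih j (by omega)
  funext k
  exact main n k (by omega)

/-- sign of a product of nonzero reals. -/
lemma sign_prod_aux {ι : Type*} [DecidableEq ι] (s : Finset ι) (f : ι → ℝ)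
    (hf : ∀ k ∈ s, f k ≠ 0) :
    0 < (∏ k ∈ s, f k) * (-1 : ℝ) ^ (s.filter (fun k => f k < 0)).card := by
  classical
  induction s using Finset.induction with
  | empty => simp
  | @insert a s ha ih =>
    rw [Finset.filter_insert, Finset.prod_insert ha]
    have hfa : f a ≠ 0 := hf a (Finset.mem_insert_self a s)
    have ih' := ih (fun k hk => hf k (Finset.mem_insert_of_mem hk))
    by_cases h : f a < 0
    · rw [if_pos h, Finset.card_insert_of_notMem (fun hc => ha (Finset.mem_of_mem_filter a hc)),
        pow_succ]
      nlinarith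
    · rw [if_neg h]
      have : 0 < f a := lt_of_le_of_ne (not_lt.mp h) (Ne.symm hfa)
      nlinarith

lemma count_aux (n : ℕ) (hn : 0 < n) (s : ℕ → ℕ)
    (hmono : ∀ i, i + 1 < n → s (i + 1) ≤ s i)
    (hpar : ∀ i < n, (s i + i) % 2 = n % 2)
    (hub : ∀ i < n, s i ≤ n + 1) :
    ∀ i < n, s i = n - i := by
  have step : ∀ i, i + 1 < n → s (i + 1) + 1 ≤ s i := by
    intro i h
    have h1 := hmono i h
    have p1 := hpar i (by omega)
    have p2 := hpar (i + 1) h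
    omega
  have chain : ∀ d i, i + d < n → s (i + d) + d ≤ s i := by
    intro d
    induction d with
    | zero => intro i _; simp
    | succ d ih =>
      intro i h
      have h1 := step (i + d) (by omega)
      have h2 := ih i (by omega)
      have : i + (d + 1) = (i + d) + 1 := by omega
      rw [this]
      omega
  have hs0 : s 0 ≤ n := by
    have h1 := hub 0 hn
    have h2 := hpar 0 hn
    omega
  have hlast : 1 ≤ s (n - 1) := by
    have h2 := hpar (n - 1) (by omega)
    omega
  intro i hi
  have hupper : s i + i ≤ s 0 := by have := chain i 0 (by omega); simpa using this
  have hlower : s (n - 1) + (n - 1 - i) ≤ s i := by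
    have := chain (n - 1 - i) i (by omega)
    have e : i + (n - 1 - i) = n - 1 := by omega
    rwa [e] at this
  omega

lemma eval_charpoly {m : ℕ} (M : Matrix (Fin m) (Fin m) ℝ) (x : ℝ) :
    M.charpoly.eval x = (x • (1 : Matrix (Fin m) (Fin m) ℝ) - M).det := by
  rw [Matrix.charpoly, ← Polynomial.coe_evalRingHom, RingHom.map_det]
  congr 1
  ext i j
  by_cases h : i = j <;>
    simp [Matrix.charmatrix_apply, Matrix.one_apply, h]

lemma resolvent_identity (n : ℕ) (A : Matrix (Fin (n + 1)) (Fin (n + 1)) ℝ)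
    (B : Matrix (Fin n) (Fin n) ℝ) (hB : B = A.submatrix Fin.castSucc Fin.castSucc)
    (b : Fin n → ℝ) (hb : ∀ j, A j.castSucc (Fin.last n) = b j)
    (hb' : ∀ j, A (Fin.last n) j.castSucc = b j)
    (a : ℝ) (ha : A (Fin.last n) (Fin.last n) = a)
    (e : Fin n → ℝ) (U : Matrix (Fin n) (Fin n) ℝ)
    (hU : U * star U = 1) (hU' : star U * U = 1)
    (hspec : B = U * Matrix.diagonal e * star U)
    (c : Fin n → ℝ) (hc : ∀ k, c k = ∑ j, b j * U j k)
    (x : ℝ) (hx : ∀ l, x ≠ e l) :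
    A.charpoly.eval x
      = (x - a) * ∏ l, (x - e l)
        - ∑ k, (c k) ^ 2 * ∏ l ∈ Finset.univ.erase k, (x - e l) := by
  classical
  set M : Matrix (Fin n) (Fin n) ℝ := x • 1 - B with hM
  have hsmul : (x • (1 : Matrix (Fin n) (Fin n) ℝ)) = U * (x • 1) * star U := by
    rw [Matrix.mul_smul, Matrix.smul_mul, Matrix.mul_one, hU]
  have hMspec : M = U * Matrix.diagonal (fun l => x - e l) * star U := by
    rw [hM, hspec]
    conv_lhs => rw [hsmul]
    rw [← Matrix.sub_mul, ← Matrix.mul_sub, Matrix.smul_one_eq_diagonal, Matrix.diagonal_sub]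
  have hdetM : M.det = ∏ l, (x - e l) := by
    rw [hMspec, Matrix.det_mul, Matrix.det_mul, mul_comm (U.det), mul_assoc, ← Matrix.det_mul, hU,
      Matrix.det_one, mul_one, Matrix.det_diagonal]
  have hdet0 : M.det ≠ 0 := by
    rw [hdetM]
    exact Finset.prod_ne_zero_iff.mpr fun l _ => sub_ne_zero.mpr (hx l)
  have hMinv : M⁻¹ = U * Matrix.diagonal (fun l => (x - e l)⁻¹) * star U := by
    apply Matrix.inv_eq_right_inv
    have hone : (Matrix.diagonal fun i => (x - e i) * (x - e i)⁻¹)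
        = (1 : Matrix (Fin n) (Fin n) ℝ) := by
      ext i j
      rcases eq_or_ne i j with h | h
      · subst h; simp [mul_inv_cancel₀ (sub_ne_zero.mpr (hx i))]
      · simp [Matrix.diagonal_apply_ne _ h, Matrix.one_apply_ne h]
    calc M * (U * Matrix.diagonal (fun l => (x - e l)⁻¹) * star U)
        = U * (Matrix.diagonal (fun l => x - e l) *
            ((star U * U) * (Matrix.diagonal (fun l => (x - e l)⁻¹) * star U))) := by
          rw [hMspec]; simp only [Matrix.mul_assoc]
      _ = U * (Matrix.diagonal (fun l => x - e l) *
            (Matrix.diagonal (fun l => (x - e l)⁻¹) * star U)) := by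
          rw [hU', Matrix.one_mul]
      _ = U * (Matrix.diagonal (fun l => x - e l) *
            Matrix.diagonal (fun l => (x - e l)⁻¹) * star U) := by
          rw [Matrix.mul_assoc (Matrix.diagonal _)]
      _ = 1 := by
          rw [Matrix.diagonal_mul_diagonal, hone, Matrix.one_mul, hU]
  haveI : Invertible M := Matrix.invertibleOfIsUnitDet M (isUnit_iff_ne_zero.mpr hdet0)
  -- block decomposition
  set E : Fin n ⊕ Fin 1 ≃ Fin (n + 1) := finSumFinEquiv with hE
  have hEl : ∀ i : Fin n, E (Sum.inl i) = i.castSucc := fun i => rfl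
  have hEr : E (Sum.inr 0) = Fin.last n := by
    simp only [hE, finSumFinEquiv_apply_right]
    ext
    simp [Fin.natAdd]
  have hblock : (x • 1 - A).submatrix E E =
      Matrix.fromBlocks M (Matrix.of fun i (_ : Fin 1) => -(b i))
        (Matrix.of fun (_ : Fin 1) j => -(b j)) (Matrix.of fun _ _ => x - a) := by
    ext i j
    rcases i with i | i <;> rcases j with j | j
    · simp only [Matrix.submatrix_apply, hEl, Matrix.fromBlocks_apply₁₁, hM, hB,
        Matrix.sub_apply, Matrix.smul_apply, Matrix.submatrix_apply, smul_eq_mul]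
      congr 1
      by_cases h : i = j <;> simp [Matrix.one_apply, h, Fin.castSucc_inj]
    · have hj : j = 0 := Subsingleton.elim _ _
      subst hj
      simp only [Matrix.submatrix_apply, hEl, hEr, Matrix.fromBlocks_apply₁₂, Matrix.sub_apply,
        Matrix.smul_apply, Matrix.of_apply, smul_eq_mul, hb]
      rw [Matrix.one_apply_ne (Fin.castSucc_lt_last i).ne]
      ring
    · have hi : i = 0 := Subsingleton.elim _ _
      subst hi
      simp only [Matrix.submatrix_apply, hEl, hEr, Matrix.fromBlocks_apply₂₁, Matrix.sub_apply,
        Matrix.smul_apply, Matrix.of_apply, smul_eq_mul, hb']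
      rw [Matrix.one_apply_ne (Fin.castSucc_lt_last j).ne']
      ring
    · have hi : i = 0 := Subsingleton.elim _ _
      have hj : j = 0 := Subsingleton.elim _ _
      subst hi; subst hj
      simp only [Matrix.submatrix_apply, hEr, Matrix.fromBlocks_apply₂₂, Matrix.sub_apply,
        Matrix.smul_apply, Matrix.of_apply, smul_eq_mul, ha, Matrix.one_apply_eq]
      ring
  have hdetA : (x • 1 - A).det = M.det * ((x - a) - ∑ j, b j * (M⁻¹ *ᵥ b) j) := by
    rw [← Matrix.det_submatrix_equiv_self E, hblock, Matrix.det_fromBlocks₁₁]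
    congr 1
    rw [Matrix.det_fin_one, Matrix.invOf_eq_nonsing_inv]
    simp only [Matrix.sub_apply, Matrix.of_apply, Matrix.mul_apply, Matrix.mulVec,
      dotProduct, Finset.sum_mul]
    congr 1
    rw [Finset.sum_comm]
    apply Finset.sum_congr rfl
    intro j _
    rw [Finset.mul_sum]
    apply Finset.sum_congr rfl
    intro l _
    ring
  have hquad : ∑ j, b j * (M⁻¹ *ᵥ b) j = ∑ k, (c k) ^ 2 * (x - e k)⁻¹ := by
    rw [hMinv, ← Matrix.mulVec_mulVec, ← Matrix.mulVec_mulVec]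
    set w : Fin n → ℝ := star U *ᵥ b with hwdef
    have hw : ∀ k, w k = c k := by
      intro k
      simp only [hwdef, Matrix.mulVec, dotProduct, Matrix.star_apply, star_trivial, hc]
      exact Finset.sum_congr rfl fun j _ => mul_comm _ _
    have h1 : ∑ j, b j * (U *ᵥ (Matrix.diagonal (fun l => (x - e l)⁻¹) *ᵥ w)) j
        = dotProduct b (U *ᵥ (Matrix.diagonal (fun l => (x - e l)⁻¹) *ᵥ w)) := rfl
    rw [h1, Matrix.dotProduct_mulVec]
    have h2 : Matrix.vecMul b U = w := by
      funext k
      simp only [Matrix.vecMul, dotProduct, hw k, hc]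
    rw [h2]
    simp only [dotProduct, Matrix.mulVec_diagonal, hw]
    apply Finset.sum_congr rfl
    intro k _
    ring
  have hfin : A.charpoly.eval x = (x • 1 - A).det := eval_charpoly A x
  rw [hfin, hdetA, hquad, hdetM, mul_sub]
  congr 1
  · ring
  · rw [Finset.mul_sum]
    apply Finset.sum_congr rfl
    intro k _
    have hme := Finset.mul_prod_erase Finset.univ (fun l => x - e l) (Finset.mem_univ k)
    have hne : x - e k ≠ 0 := sub_ne_zero.mpr (hx k)
    field_simp
    rw [← hme]
    ring

lemma charpoly_eq_prod_spec (n : ℕ) (B : Matrix (Fin n) (Fin n) ℝ)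
    (e : Fin n → ℝ) (U : Matrix (Fin n) (Fin n) ℝ)
    (hU : U * star U = 1)
    (hspec : B = U * Matrix.diagonal e * star U) :
    B.charpoly = ∏ l, (X - C (e l)) := by
  apply Polynomial.eq_of_infinite_eval_eq
  have : {x : ℝ | eval x B.charpoly = eval x (∏ l, (X - C (e l)))} = Set.univ := by
    ext x
    simp only [Set.mem_setOf_eq, Set.mem_univ, iff_true]
    rw [eval_charpoly, eval_prod]
    simp only [eval_sub, eval_X, eval_C]
    have hsmul : (x • (1 : Matrix (Fin n) (Fin n) ℝ)) = U * (x • 1) * star U := by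
      rw [Matrix.mul_smul, Matrix.smul_mul, Matrix.mul_one, hU]
    have hMspec : x • 1 - B = U * Matrix.diagonal (fun l => x - e l) * star U := by
      rw [hspec]
      conv_lhs => rw [hsmul]
      rw [← Matrix.sub_mul, ← Matrix.mul_sub, Matrix.smul_one_eq_diagonal, Matrix.diagonal_sub]
    rw [hMspec, Matrix.det_mul, Matrix.det_mul, mul_comm (U.det), mul_assoc, ← Matrix.det_mul, hU,
      Matrix.det_one, mul_one, Matrix.det_diagonal]
  rw [this]
  exact Set.infinite_univ

/-- Strict interlacing of the eigenvalues of an irreducible real symmetric tridiagonal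
matrix and those of its trailing principal submatrix. -/
theorem tridiagonal_strict_interlacing
    (n : ℕ) (A : Matrix (Fin (n + 1)) (Fin (n + 1)) ℝ) (hA : A.IsHermitian)
    (htri : ∀ i j : Fin (n + 1), 1 < |(i : ℤ) - (j : ℤ)| → A i j = 0)
    (hsub : ∀ i j : Fin (n + 1), (j : ℕ) = (i : ℕ) + 1 → A i j ≠ 0)
    (B : Matrix (Fin n) (Fin n) ℝ)
    (hB : B = A.submatrix Fin.castSucc Fin.castSucc)
    (ω : Fin (n + 1) → ℝ) (hω : StrictMono ω)
    (hωroots : A.charpoly = ∏ i, (X - C (ω i)))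
    (μ : Fin n → ℝ) (hμ : StrictMono μ)
    (hμroots : B.charpoly = ∏ i, (X - C (μ i))) :
    ∀ i : Fin n, ω i.castSucc < μ i ∧ μ i < ω i.succ := by
  classical
  have hAsymm : ∀ p q, A p q = A q p := by
    intro p q
    conv_lhs => rw [← hA]
    simp [Matrix.conjTranspose_apply]
  rcases Nat.eq_zero_or_pos n with hn0 | hn
  · subst hn0; exact fun i => i.elim0
  set a : ℝ := A (Fin.last n) (Fin.last n) with hadef
  set b : Fin n → ℝ := fun j => A j.castSucc (Fin.last n) with hbdef
  have hBH : B.IsHermitian := hB ▸ hA.submatrix Fin.castSucc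
  set U : Matrix (Fin n) (Fin n) ℝ := (hBH.eigenvectorUnitary : Matrix (Fin n) (Fin n) ℝ)
    with hUdef
  set e : Fin n → ℝ := hBH.eigenvalues with hedef
  have hU : U * star U = 1 := by
    have := hBH.eigenvectorUnitary.2
    rw [Matrix.mem_unitaryGroup_iff] at this
    exact this
  have hU' : star U * U = 1 := by
    have := hBH.eigenvectorUnitary.2
    rw [Matrix.mem_unitaryGroup_iff'] at this
    exact this
  have hspec : B = U * Matrix.diagonal e * star U := by
    have := hBH.spectral_theorem
    simpa [RCLike.ofReal_real_eq_id] using this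
  set c : Fin n → ℝ := fun k => ∑ j, b j * U j k with hcdef
  have hident := resolvent_identity n A B hB b (fun j => rfl) (fun j => hAsymm _ _) a rfl e U
    hU hU' hspec c (fun k => rfl)
  -- polynomial identity
  set p2 : ℝ[X] := (X - C a) * ∏ l, (X - C (e l))
    - ∑ k, C ((c k) ^ 2) * ∏ l ∈ Finset.univ.erase k, (X - C (e l)) with hp2def
  have hpeq : A.charpoly = p2 := by
    apply Polynomial.eq_of_infinite_eval_eq
    apply Set.Infinite.mono (s := (Set.range e)ᶜ)
    · intro x hx
      have hx' : ∀ l, x ≠ e l := fun l h => hx ⟨l, h.symm⟩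
      have h2 : eval x p2 = (x - a) * ∏ l, (x - e l)
          - ∑ k, (c k) ^ 2 * ∏ l ∈ Finset.univ.erase k, (x - e l) := by
        simp [hp2def, eval_prod, eval_finset_sum]
      simp only [Set.mem_setOf_eq]
      rw [h2, hident x hx']
    · exact (Set.finite_range e).infinite_compl
  -- multiset of eigenvalues
  have hcharB : B.charpoly = ∏ l, (X - C (e l)) := charpoly_eq_prod_spec n B e U hU hspec
  have hμe : Multiset.map μ Finset.univ.val = Multiset.map e Finset.univ.val := by
    have hprod : (∏ j, (X - C (μ j))) = ∏ l, (X - C (e l)) := hμroots ▸ hcharB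
    have h1 : ∀ (f : Fin n → ℝ), (∏ j, (X - C (f j)))
        = (Multiset.map (fun r => X - C r) (Multiset.map f Finset.univ.val)).prod := by
      intro f
      rw [Finset.prod_eq_multiset_prod, Multiset.map_map]
      rfl
    have := congrArg Polynomial.roots ((h1 μ).symm.trans (hprod.trans (h1 e)))
    rwa [roots_multiset_prod_X_sub_C, roots_multiset_prod_X_sub_C] at this
  have heinj : Function.Injective e := by
    have hnodup : (Multiset.map e Finset.univ.val).Nodup := by
      rw [← hμe]
      exact Finset.univ.nodup.map hμ.injective
    intro k l h
    exact Multiset.inj_on_of_nodup_map hnodup k (Finset.mem_univ_val _) l (Finset.mem_univ_val _) h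
  -- the key fact, for every index i
  have key : ∀ i : Fin n, (∀ k, μ i - ω k ≠ 0) ∧
      (∏ k, (μ i - ω k)) * (∏ j ∈ Finset.univ.erase i, (μ i - μ j)) < 0 := by
    intro i
    have hmem : μ i ∈ Multiset.map e Finset.univ.val := by
      rw [← hμe]
      exact Multiset.mem_map.mpr ⟨i, Finset.mem_univ_val _, rfl⟩
    obtain ⟨k₀, -, hk₀⟩ := Multiset.mem_map.mp hmem
    have herase : ∏ l ∈ Finset.univ.erase k₀, (μ i - e l)
        = ∏ j ∈ Finset.univ.erase i, (μ i - μ j) := by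
      rw [Finset.prod_eq_multiset_prod, Finset.prod_eq_multiset_prod, Finset.erase_val,
        Finset.erase_val]
      have h1 : Multiset.map (fun l => μ i - e l) (Finset.univ.val.erase k₀)
          = Multiset.map (fun y => μ i - y) (Multiset.map e (Finset.univ.val.erase k₀)) := by
        rw [Multiset.map_map]; rfl
      have h2 : Multiset.map (fun j => μ i - μ j) (Finset.univ.val.erase i)
          = Multiset.map (fun y => μ i - y) (Multiset.map μ (Finset.univ.val.erase i)) := by
        rw [Multiset.map_map]; rfl
      rw [h1, h2, Multiset.map_erase e heinj, Multiset.map_erase μ hμ.injective, hk₀, hμe]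
    have hQne : (∏ j ∈ Finset.univ.erase i, (μ i - μ j)) ≠ 0 := by
      rw [Finset.prod_ne_zero_iff]
      intro j hj
      exact sub_ne_zero.mpr (fun h => (Finset.mem_erase.mp hj).1 (hμ.injective h.symm))
    -- c k₀ ≠ 0
    set ln : Fin n := ⟨n - 1, by omega⟩ with hlndef
    have hbz : ∀ j : Fin n, j ≠ ln → b j = 0 := by
      intro j hj
      have hj2 : (j : ℕ) + 2 ≤ n := by
        have h1 := j.isLt
        have h2 : (j : ℕ) ≠ n - 1 := fun h => hj (Fin.ext h)
        omega
      rw [hbdef]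
      apply htri
      simp only [Fin.coe_castSucc, Fin.val_last]
      rw [abs_sub_comm, abs_of_nonneg (by push_cast; omega)]
      push_cast; omega
    have hcsum : c k₀ = b ln * U ln k₀ := by
      rw [hcdef]
      apply Finset.sum_eq_single
      · intro j _ hj
        rw [hbz j hj, zero_mul]
      · intro h; exact absurd (Finset.mem_univ ln) h
    have hbln : b ln ≠ 0 := by
      rw [hbdef]
      apply hsub
      simp only [Fin.coe_castSucc, Fin.val_castSucc, Fin.val_last, Fin.val_mk]
      rw [hlndef, Fin.val_mk]
      omega
    set u : Fin n → ℝ := fun r => U r k₀ with hudef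
    have hueig : B *ᵥ u = e k₀ • u := hBH.mulVec_eigenvectorBasis k₀
    have hune : u ≠ 0 := by
      intro h0
      apply hBH.eigenvectorBasis.orthonormal.ne_zero k₀
      ext r
      exact congrFun h0 r
    have hUln : u ln ≠ 0 := by
      intro hz
      apply hune
      apply tridiag_eigvec_last n hn B ?_ ?_ (e k₀) u hueig
      · exact hz
      · intro p q hpq
        rw [hB]
        apply htri
        simp only [Fin.coe_castSucc]
        rw [abs_of_nonneg (by push_cast; omega)]
        push_cast; omega
      · intro p q hpq
        rw [hB, Matrix.submatrix_apply, hAsymm]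
        apply hsub
        simp only [Fin.coe_castSucc]
        omega
    have hc0 : c k₀ ≠ 0 := by
      rw [hcsum]
      exact mul_ne_zero hbln hUln
    -- the evaluation
    have hPival : ∏ k, (μ i - ω k)
        = -(c k₀) ^ 2 * ∏ j ∈ Finset.univ.erase i, (μ i - μ j) := by
      have h1 : eval (μ i) A.charpoly = ∏ k, (μ i - ω k) := by
        rw [hωroots]; simp [eval_prod]
      have h2 : eval (μ i) p2
          = -(c k₀) ^ 2 * ∏ l ∈ Finset.univ.erase k₀, (μ i - e l) := by
        simp only [hp2def, eval_sub, eval_mul, eval_finset_sum, eval_prod, eval_X, eval_C]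
        have hz : ∏ l, (μ i - e l) = 0 :=
          Finset.prod_eq_zero (Finset.mem_univ k₀) (by rw [hk₀, sub_self])
        rw [hz, mul_zero]
        rw [Finset.sum_eq_single k₀]
        · ring
        · intro k _ hkk
          have : ∏ l ∈ Finset.univ.erase k, (μ i - e l) = 0 :=
            Finset.prod_eq_zero (Finset.mem_erase.mpr ⟨hkk.symm, Finset.mem_univ k₀⟩)
              (by rw [hk₀, sub_self])
          rw [this, mul_zero]
        · intro h; exact absurd (Finset.mem_univ k₀) h
      rw [← h1, hpeq, h2, herase]
    constructor
    · intro k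
      intro hzero
      apply hQne
      have : (∏ k, (μ i - ω k)) = 0 := Finset.prod_eq_zero (Finset.mem_univ k) hzero
      rw [hPival] at this
      rcases mul_eq_zero.mp this with h | h
      · exact absurd h (by simp [pow_eq_zero_iff, hc0])
      · exact h
    · rw [hPival]
      have h1 : 0 < (c k₀) ^ 2 :=
        lt_of_le_of_ne (sq_nonneg _) (Ne.symm (pow_ne_zero 2 hc0))
      have h2 : 0 < (∏ j ∈ Finset.univ.erase i, (μ i - μ j)) ^ 2 :=
        lt_of_le_of_ne (sq_nonneg _) (Ne.symm (pow_ne_zero 2 hQne))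
      nlinarith
  -- counting
  set scard : ℕ → ℕ := fun m =>
    if h : m < n then ((Finset.univ : Finset (Fin (n + 1))).filter
      fun k => μ ⟨m, h⟩ - ω k < 0).card else 0 with hscard
  have hpar : ∀ m < n, (scard m + m) % 2 = n % 2 := by
    intro m hm
    set i' : Fin n := ⟨m, hm⟩ with hi'def
    obtain ⟨hne, hlt⟩ := key i'
    set P := ∏ k, (μ i' - ω k) with hPdef
    set Q := ∏ j ∈ Finset.univ.erase i', (μ i' - μ j) with hQdef
    have hP := sign_prod_aux Finset.univ (fun k => μ i' - ω k) (fun k _ => hne k)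
    have hQfacts : ∀ j ∈ Finset.univ.erase i', μ i' - μ j ≠ 0 := fun j hj =>
      sub_ne_zero.mpr (fun h => (Finset.mem_erase.mp hj).1 (hμ.injective h.symm))
    have hQ := sign_prod_aux (Finset.univ.erase i') (fun j => μ i' - μ j) hQfacts
    have hcardQ : ((Finset.univ.erase i').filter fun j => μ i' - μ j < 0).card
        = n - 1 - m := by
      have hset : ((Finset.univ.erase i').filter fun j => μ i' - μ j < 0)
          = Finset.Ioi i' := by
        ext j
        simp only [Finset.mem_filter, Finset.mem_erase, Finset.mem_univ, Finset.mem_Ioi,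
          true_and, and_true, sub_neg]
        constructor
        · rintro ⟨_, hlt'⟩; exact hμ.lt_iff_lt.mp hlt'
        · intro h; exact ⟨(ne_of_gt h : j ≠ i'), hμ h⟩
      rw [hset, Fin.card_Ioi]
    rw [hcardQ] at hQ
    set s1 := (Finset.univ.filter fun k => μ i' - ω k < 0).card with hs1def
    have hmul := mul_pos hP hQ
    by_cases hev : Even (s1 + (n - 1 - m))
    · exfalso
      have hone : (-1 : ℝ) ^ s1 * (-1 : ℝ) ^ (n - 1 - m) = 1 := by
        rw [← pow_add]; exact hev.neg_one_pow
      have heq : (P * (-1 : ℝ) ^ s1) * (Q * (-1 : ℝ) ^ (n - 1 - m))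
          = (P * Q) * ((-1 : ℝ) ^ s1 * (-1 : ℝ) ^ (n - 1 - m)) := by ring
      rw [heq, hone, mul_one] at hmul
      linarith
    · rw [Nat.not_even_iff] at hev
      have hsm : scard m = s1 := by rw [hscard]; simp only [dif_pos hm]; rfl
      omega
  have hmono : ∀ m, m + 1 < n → scard (m + 1) ≤ scard m := by
    intro m hm1
    have hm : m < n := by omega
    rw [hscard]
    simp only [dif_pos hm1, dif_pos hm]
    apply Finset.card_le_card
    intro k hk
    simp only [Finset.mem_filter, Finset.mem_univ, true_and, sub_neg] at *
    have hmm : μ (⟨m, hm⟩ : Fin n) < μ ⟨m + 1, hm1⟩ := hμ (by simp [Fin.lt_def])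
    linarith
  have hub : ∀ m < n, scard m ≤ n + 1 := by
    intro m hm
    rw [hscard]
    simp only [dif_pos hm]
    calc ((Finset.univ : Finset (Fin (n + 1))).filter fun k => μ ⟨m, hm⟩ - ω k < 0).card
        ≤ (Finset.univ : Finset (Fin (n + 1))).card := Finset.card_filter_le _ _
      _ = n + 1 := by simp
  have hcount := count_aux n hn scard hmono hpar hub
  intro i
  have hsc : ((Finset.univ : Finset (Fin (n + 1))).filter fun k => μ i - ω k < 0).card
      = n - (i : ℕ) := by
    have h1 := hcount i i.isLt
    rw [hscard] at h1
    simp only [dif_pos i.isLt] at h1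
    simpa using h1
  obtain ⟨hne, -⟩ := key i
  constructor
  · by_contra hcon
    push_neg at hcon
    have hlt : μ i < ω i.castSucc :=
      lt_of_le_of_ne hcon (fun h => hne i.castSucc (by rw [h, sub_self]))
    have hsub1 : Finset.Ici i.castSucc
        ⊆ (Finset.univ.filter fun k => μ i - ω k < 0) := by
      intro k hk
      simp only [Finset.mem_Ici] at hk
      simp only [Finset.mem_filter, Finset.mem_univ, true_and, sub_neg]
      exact lt_of_lt_of_le hlt (hω.monotone hk)
    have hcard := Finset.card_le_card hsub1
    rw [Fin.card_Ici, hsc] at hcard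
    simp only [Fin.coe_castSucc] at hcard
    have := i.isLt
    omega
  · by_contra hcon
    push_neg at hcon
    have hlt : ω i.succ < μ i :=
      lt_of_le_of_ne hcon (fun h => hne i.succ (by rw [← h, sub_self]))
    have hsub2 : (Finset.univ.filter fun k => μ i - ω k < 0) ⊆ Finset.Ioi i.succ := by
      intro k hk
      simp only [Finset.mem_filter, Finset.mem_univ, true_and, sub_neg] at hk
      simp only [Finset.mem_Ioi]
      exact hω.lt_iff_lt.mp (lt_trans hlt hk)
    have hcard := Finset.card_le_card hsub2
    rw [Fin.card_Ioi, hsc] at hcard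
    simp only [Fin.val_succ] at hcard
    have := i.isLt
    omega
end

section
/- Given real numbers ω₁ < μ₁ < ω₂ < ⋯ < μ_{n−1} < ωₙ, there exists a real symmetric tridiagonal n×n matrix J with positive off-diagonal entries such that the spectrum of J is {ω₁,…,ωₙ} and the spectrum of the principal submatrix of J obtained by deleting the last row and column is {μ₁,…,μ_{n−1}}. Moreover, such J is unique. -/
open Polynomial Matrix

lemma charmatrix_sub {n : ℕ} (M : Matrix (Fin (n+1)) (Fin (n+1)) ℝ) :
    (charmatrix M).submatrix Fin.castSucc Fin.castSucc
      = charmatrix (M.submatrix Fin.castSucc Fin.castSucc) := by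
  ext i j
  by_cases h : i = j
  · subst h; simp [charmatrix_apply_eq]
  · rw [Matrix.submatrix_apply, charmatrix_apply_ne _ _ _ (by simpa [Fin.castSucc_inj] using h),
      charmatrix_apply_ne _ _ _ h, Matrix.submatrix_apply]

lemma charpoly_tridiag_rec {n : ℕ} (M : Matrix (Fin (n+2)) (Fin (n+2)) ℝ)
    (htri : ∀ k l : Fin (n+2), 1 < |(k : ℤ) - (l : ℤ)| → M k l = 0) :
    M.charpoly = (X - C (M (Fin.last (n+1)) (Fin.last (n+1)))) *
        (M.submatrix Fin.castSucc Fin.castSucc).charpoly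
      - C (M ((Fin.last n).castSucc) (Fin.last (n+1)) * M (Fin.last (n+1)) ((Fin.last n).castSucc)) *
        ((M.submatrix Fin.castSucc Fin.castSucc).submatrix Fin.castSucc Fin.castSucc).charpoly := by
  have hne1 : (Fin.last (n+1)) ≠ (Fin.last n).castSucc := by
    simp [Fin.ext_iff]
  have h1 : M.charpoly = ∑ j : Fin (n+2), (-1:ℝ[X]) ^ ((Fin.last (n+1) : ℕ) + (j:ℕ)) *
      (charmatrix M) (Fin.last (n+1)) j *
      Matrix.det ((charmatrix M).submatrix (Fin.last (n+1)).succAbove j.succAbove) :=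
    Matrix.det_succ_row _ _
  rw [Fin.sum_univ_castSucc, Fin.sum_univ_castSucc] at h1
  have hz : ∀ j : Fin n, (-1:ℝ[X]) ^ ((Fin.last (n+1) : ℕ) + ((j.castSucc.castSucc : Fin (n+2)):ℕ)) *
      (charmatrix M) (Fin.last (n+1)) j.castSucc.castSucc *
      Matrix.det ((charmatrix M).submatrix (Fin.last (n+1)).succAbove (j.castSucc.castSucc).succAbove) = 0 := by
    intro j
    have hne : (Fin.last (n+1)) ≠ (j.castSucc.castSucc : Fin (n+2)) := by
      simp [Fin.ext_iff]; omega
    rw [charmatrix_apply_ne _ _ _ hne, htri _ _ (by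
      simp only [Fin.val_last, Fin.coe_castSucc]
      have := j.isLt; rw [abs_of_nonneg] <;> omega)]
    simp
  rw [Finset.sum_eq_zero (fun j _ => hz j), zero_add] at h1
  -- the diagonal term
  have hdiag : (-1:ℝ[X]) ^ ((Fin.last (n+1) : ℕ) + ((Fin.last (n+1)) : ℕ)) *
      (charmatrix M) (Fin.last (n+1)) (Fin.last (n+1)) *
      Matrix.det ((charmatrix M).submatrix (Fin.last (n+1)).succAbove (Fin.last (n+1)).succAbove)
      = (X - C (M (Fin.last (n+1)) (Fin.last (n+1)))) *
        (M.submatrix Fin.castSucc Fin.castSucc).charpoly := by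
    rw [charmatrix_apply_eq, Fin.succAbove_last, charmatrix_sub]
    rw [Even.neg_one_pow ⟨(Fin.last (n+1) : ℕ), rfl⟩, one_mul]
    rfl
  -- the off-diagonal term
  set N := (charmatrix M).submatrix (Fin.last (n+1)).succAbove ((Fin.last n).castSucc).succAbove with hN
  have e1 : ((Fin.last n).castSucc : Fin (n+2)).succAbove (Fin.last n) = Fin.last (n+1) := by
    rw [Fin.succAbove_of_le_castSucc _ _ (le_refl _), Fin.succ_last]
  have e2 : ∀ j : Fin n, ((Fin.last n).castSucc : Fin (n+2)).succAbove j.castSucc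
      = j.castSucc.castSucc := by
    intro j
    rw [Fin.succAbove_of_castSucc_lt]
    exact Fin.castSucc_lt_castSucc_iff.mpr (Fin.castSucc_lt_last j)
  have hdetN : N.det = -C (M ((Fin.last n).castSucc) (Fin.last (n+1))) *
      ((M.submatrix Fin.castSucc Fin.castSucc).submatrix Fin.castSucc Fin.castSucc).charpoly := by
    have h2 : N.det = ∑ i : Fin (n+1), (-1:ℝ[X]) ^ ((i:ℕ) + ((Fin.last n):ℕ)) *
        N i (Fin.last n) * Matrix.det (N.submatrix i.succAbove (Fin.last n).succAbove) :=
      Matrix.det_succ_column _ _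
    rw [Fin.sum_univ_castSucc] at h2
    have hz2 : ∀ i : Fin n, (-1:ℝ[X]) ^ (((i.castSucc : Fin (n+1)):ℕ) + ((Fin.last n):ℕ)) *
        N i.castSucc (Fin.last n) *
        Matrix.det (N.submatrix (i.castSucc).succAbove (Fin.last n).succAbove) = 0 := by
      intro i
      have : N i.castSucc (Fin.last n) = 0 := by
        rw [hN, Matrix.submatrix_apply, Fin.succAbove_last, e1]
        have hne : (i.castSucc.castSucc : Fin (n+2)) ≠ Fin.last (n+1) := by
          simp [Fin.ext_iff]; omega
        rw [charmatrix_apply_ne _ _ _ hne, htri _ _ (by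
          simp only [Fin.val_last, Fin.coe_castSucc]
          have := i.isLt; rw [abs_of_nonpos] <;> omega)]
        simp
      rw [this]; ring
    rw [Finset.sum_eq_zero (fun i _ => hz2 i), zero_add] at h2
    have hNent : N (Fin.last n) (Fin.last n) = -C (M ((Fin.last n).castSucc) (Fin.last (n+1))) := by
      rw [hN, Matrix.submatrix_apply, Fin.succAbove_last, e1]
      exact charmatrix_apply_ne _ _ _ hne1.symm
    have hmin : N.submatrix (Fin.last n).succAbove (Fin.last n).succAbove
        = charmatrix ((M.submatrix Fin.castSucc Fin.castSucc).submatrix Fin.castSucc Fin.castSucc) := by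
      rw [Fin.succAbove_last, ← charmatrix_sub, ← charmatrix_sub]
      ext i j
      rw [hN]
      simp only [Matrix.submatrix_apply, Fin.succAbove_last, e2]
    rw [h2, hNent, hmin, Even.neg_one_pow ⟨(Fin.last n : ℕ), rfl⟩, one_mul]
    rfl
  rw [h1, hdiag, hdetN]
  rw [charmatrix_apply_ne _ _ _ hne1]
  have hsign : ((-1:ℝ[X]) ^ ((Fin.last (n+1) : ℕ) + (((Fin.last n).castSucc : Fin (n+2)):ℕ))) = -1 :=
    Odd.neg_one_pow ⟨n, by simp [Fin.val_last]; ring⟩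
  rw [hsign, Polynomial.C_mul]
  ring

lemma sign_roots {n : ℕ} (μ : Fin (n+1) → ℝ) (hmono : StrictMono μ) (s : ℝ[X])
    (hdeg : s.natDegree ≤ n)
    (hsig : ∀ i : Fin (n+1), 0 < (-1:ℝ)^(n - (i:ℕ)) * s.eval (μ i)) :
    ∃ c : ℝ, 0 < c ∧ ∃ ν : Fin n → ℝ,
      (∀ i : Fin n, μ i.castSucc < ν i ∧ ν i < μ i.succ) ∧ s = C c * ∏ i, (X - C (ν i)) := by
  have hlast : 0 < s.eval (μ (Fin.last n)) := by
    have := hsig (Fin.last n); simpa using this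
  have hs0 : s ≠ 0 := fun h => by simp [h] at hlast
  -- roots in each gap
  have hroot : ∀ i : Fin n, ∃ x, (μ i.castSucc < x ∧ x < μ i.succ) ∧ s.eval x = 0 := by
    intro i
    have hic : (i.castSucc : ℕ) = (i : ℕ) := rfl
    have his : (i.succ : ℕ) = (i : ℕ) + 1 := rfl
    have hin : (i : ℕ) < n := i.isLt
    have h1 := hsig i.castSucc
    have h2 := hsig i.succ
    rw [hic] at h1; rw [his] at h2
    have hk : n - (i : ℕ) = (n - ((i:ℕ)+1)) + 1 := by omega
    set k := n - ((i:ℕ)+1) with hkdef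
    rw [hk, pow_succ] at h1
    have hle : μ i.castSucc ≤ μ i.succ := (hmono (show i.castSucc < i.succ from Fin.castSucc_lt_succ)).le
    have hcont : ContinuousOn (fun x => s.eval x) (Set.Icc (μ i.castSucc) (μ i.succ)) :=
      (Polynomial.continuous s).continuousOn
    rcases Nat.even_or_odd k with he | ho
    · have hp2 : 0 < s.eval (μ i.succ) := by
        rw [he.neg_one_pow, one_mul] at h2; exact h2
      have hp1 : s.eval (μ i.castSucc) < 0 := by
        rw [he.neg_one_pow, one_mul] at h1; nlinarith
      have := intermediate_value_Ioo hle hcont (Set.mem_Ioo.mpr ⟨hp1, hp2⟩)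
      rcases this with ⟨x, hx, hx0⟩
      exact ⟨x, ⟨hx.1, hx.2⟩, hx0⟩
    · have hp2 : s.eval (μ i.succ) < 0 := by
        rw [ho.neg_one_pow] at h2; nlinarith
      have hp1 : 0 < s.eval (μ i.castSucc) := by
        rw [ho.neg_one_pow] at h1; nlinarith
      have := intermediate_value_Ioo' hle hcont (Set.mem_Ioo.mpr ⟨hp2, hp1⟩)
      rcases this with ⟨x, hx, hx0⟩
      exact ⟨x, ⟨hx.1, hx.2⟩, hx0⟩
  choose ν hν hν0 using hroot
  have hνmono : StrictMono ν := by
    intro i j hij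
    calc ν i < μ i.succ := (hν i).2
    _ ≤ μ j.castSucc := hmono.monotone (by
        rw [Fin.le_def, Fin.val_succ, Fin.coe_castSucc]
        exact Fin.lt_def.mp hij)
    _ < ν j := (hν j).1
  have hνinj : Function.Injective ν := hνmono.injective
  -- the multiset of the ν's is contained in the roots
  have hT : (Finset.univ.val.map ν : Multiset ℝ) ≤ s.roots := by
    rw [Multiset.le_iff_count]
    intro a
    by_cases ha : a ∈ Finset.univ.val.map ν
    · rcases Multiset.mem_map.mp ha with ⟨i, _, rfl⟩
      have hnd : (Finset.univ.val.map ν).Nodup :=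
        Finset.univ.nodup.map hνinj
      rw [Multiset.count_eq_one_of_mem hnd ha]
      have : ν i ∈ s.roots := by
        rw [Polynomial.mem_roots hs0]; exact hν0 i
      exact Multiset.one_le_count_iff_mem.mpr this
    · rw [Multiset.count_eq_zero_of_notMem ha]; omega
  have hcardle : s.roots.card ≤ n := le_trans (Polynomial.card_roots' s) hdeg
  have hcardge : n ≤ s.roots.card := by
    have := Multiset.card_le_card hT
    simpa using this
  have hroots : s.roots = Finset.univ.val.map ν :=
    (Multiset.eq_of_le_of_card_le hT (by simpa using hcardle)).symm
  have hcard : s.roots.card = s.natDegree := by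
    have : n ≤ s.natDegree := le_trans hcardge (Polynomial.card_roots' s)
    omega
  have hfact := Polynomial.C_leadingCoeff_mul_prod_multiset_X_sub_C hcard
  have hprod : (s.roots.map fun a => X - C a).prod = ∏ i, (X - C (ν i)) := by
    rw [hroots, Multiset.map_map]
    rfl
  have hfact2 : s = C s.leadingCoeff * ∏ i, (X - C (ν i)) := by
    rw [← hprod, hfact]
  -- positivity of the leading coefficient
  have hcpos : 0 < s.leadingCoeff := by
    have heval : s.eval (μ (Fin.last n)) =
        s.leadingCoeff * ∏ i, (μ (Fin.last n) - ν i) := by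
      conv_lhs => rw [hfact2]
      simp [Polynomial.eval_prod]
    have hpos : 0 < ∏ i, (μ (Fin.last n) - ν i) := by
      apply Finset.prod_pos
      intro i _
      have : ν i < μ (Fin.last n) :=
        lt_of_lt_of_le (hν i).2 (hmono.monotone (Fin.le_last _))
      linarith
    nlinarith [hlast, heval]
  exact ⟨s.leadingCoeff, hcpos, ν, fun i => ⟨(hν i).1, (hν i).2⟩, hfact2⟩

lemma prod_sign {N : ℕ} (x : ℝ) (ω : Fin N → ℝ) (k : ℕ) (hk : k ≤ N)
    (h : ∀ j : Fin N, ((j:ℕ) < k → ω j < x) ∧ (k ≤ (j:ℕ) → x < ω j)) :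
    0 < (-1:ℝ)^(N - k) * ∏ j, (x - ω j) := by
  classical
  set A := Finset.univ.filter (fun j : Fin N => (j:ℕ) < k) with hA
  set B := Finset.univ.filter (fun j : Fin N => k ≤ (j:ℕ)) with hB
  have hsplit : (Finset.univ : Finset (Fin N)) = A ∪ B := by
    ext j; simp [hA, hB]; omega
  have hdisj : Disjoint A B := by
    rw [Finset.disjoint_filter]; intro j _ hj; omega
  have hBcard : B.card = N - k := by
    have h1 : A.card + B.card = N := by
      show (Finset.univ.filter (fun j : Fin N => (j:ℕ) < k)).card
        + (Finset.univ.filter (fun j : Fin N => k ≤ (j:ℕ))).card = N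
      have e : Finset.univ.filter (fun j : Fin N => k ≤ (j:ℕ))
          = Finset.univ.filter (fun j : Fin N => ¬ (j:ℕ) < k) := by ext j; simp
      rw [e, Finset.card_filter_add_card_filter_not]; simp
    have h2 : A.card = k := by
      have he : A = (Finset.range k).attachFin
          (fun m hm => lt_of_lt_of_le (Finset.mem_range.mp hm) hk) := by
        ext j; simp [hA, Finset.mem_attachFin]
      rw [he, Finset.card_attachFin, Finset.card_range]
    omega
  have hprod : ∏ j, (x - ω j) = (∏ j ∈ A, (x - ω j)) * ∏ j ∈ B, (x - ω j) := by
    rw [hsplit, Finset.prod_union hdisj]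
  have hBneg : ∏ j ∈ B, (x - ω j) = (-1:ℝ)^(N-k) * ∏ j ∈ B, (ω j - x) := by
    rw [← hBcard, ← Finset.prod_const (-1:ℝ), ← Finset.prod_mul_distrib]
    apply Finset.prod_congr rfl; intro j _; ring
  have hApos : 0 < ∏ j ∈ A, (x - ω j) := by
    apply Finset.prod_pos; intro j hj
    rw [hA, Finset.mem_filter] at hj
    have := (h j).1 hj.2; linarith
  have hBpos : 0 < ∏ j ∈ B, (ω j - x) := by
    apply Finset.prod_pos; intro j hj
    rw [hB, Finset.mem_filter] at hj
    have := (h j).2 hj.2; linarith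
  rw [hprod, hBneg]
  have hsq : ((-1:ℝ)^(N-k)) * ((-1:ℝ)^(N-k)) = 1 := by
    rw [← pow_add]; exact Even.neg_one_pow ⟨N-k, by ring⟩
  have : 0 < ((-1:ℝ) ^ (N - k) * (-1:ℝ) ^ (N - k)) * ((∏ j ∈ A, (x - ω j)) * ∏ j ∈ B, (ω j - x)) := by
    rw [hsq, one_mul]; exact mul_pos hApos hBpos
  nlinarith [this]

def borderMat {n : ℕ} (J' : Matrix (Fin (n+1)) (Fin (n+1)) ℝ) (a b : ℝ) :
    Matrix (Fin (n+2)) (Fin (n+2)) ℝ :=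
  Matrix.of fun i j =>
    if hi : i = Fin.last (n+1) then
      (if j = Fin.last (n+1) then a else if j = (Fin.last n).castSucc then b else 0)
    else if hj : j = Fin.last (n+1) then
      (if i = (Fin.last n).castSucc then b else 0)
    else J' (i.castPred hi) (j.castPred hj)

lemma castSucc_ne_last' {n : ℕ} (i : Fin (n+1)) : i.castSucc ≠ Fin.last (n+1) :=
  (Fin.castSucc_lt_last i).ne

lemma borderMat_castSucc {n : ℕ} (J' : Matrix (Fin (n+1)) (Fin (n+1)) ℝ) (a b : ℝ)
    (i j : Fin (n+1)) : borderMat J' a b i.castSucc j.castSucc = J' i j := by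
  simp only [borderMat, Matrix.of_apply, dif_neg (castSucc_ne_last' i),
    dif_neg (castSucc_ne_last' j), Fin.castPred_castSucc]

lemma borderMat_last_last {n : ℕ} (J' : Matrix (Fin (n+1)) (Fin (n+1)) ℝ) (a b : ℝ) :
    borderMat J' a b (Fin.last (n+1)) (Fin.last (n+1)) = a := by
  simp [borderMat]

lemma borderMat_last_castSucc {n : ℕ} (J' : Matrix (Fin (n+1)) (Fin (n+1)) ℝ) (a b : ℝ)
    (j : Fin (n+1)) : borderMat J' a b (Fin.last (n+1)) j.castSucc
      = if j = Fin.last n then b else 0 := by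
  simp only [borderMat, Matrix.of_apply, dif_pos rfl, if_neg (castSucc_ne_last' j),
    Fin.castSucc_inj]
  simp

lemma borderMat_castSucc_last {n : ℕ} (J' : Matrix (Fin (n+1)) (Fin (n+1)) ℝ) (a b : ℝ)
    (i : Fin (n+1)) : borderMat J' a b i.castSucc (Fin.last (n+1))
      = if i = Fin.last n then b else 0 := by
  simp only [borderMat, Matrix.of_apply, dif_neg (castSucc_ne_last' i), dif_pos rfl,
    Fin.castSucc_inj]
  simp

lemma borderMat_sub {n : ℕ} (J' : Matrix (Fin (n+1)) (Fin (n+1)) ℝ) (a b : ℝ) :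
    (borderMat J' a b).submatrix Fin.castSucc Fin.castSucc = J' := by
  ext i j; exact borderMat_castSucc J' a b i j

lemma decomp_unique {m : ℕ} (q : ℝ[X]) (hq : q.Monic) (hqd : q.natDegree = m+1)
    (a₁ a₂ c₁ c₂ : ℝ) (r₁ r₂ : ℝ[X]) (hr₁ : r₁.Monic) (hrd₁ : r₁.natDegree = m)
    (hr₂ : r₂.Monic) (hrd₂ : r₂.natDegree = m) (hc₁ : c₁ ≠ 0) (hc₂ : c₂ ≠ 0)
    (heq : (X - C a₁) * q - C c₁ * r₁ = (X - C a₂) * q - C c₂ * r₂) :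
    a₁ = a₂ ∧ c₁ = c₂ ∧ r₁ = r₂ := by
  have key : C (a₂ - a₁) * q = C c₁ * r₁ - C c₂ * r₂ := by
    rw [map_sub]; linear_combination heq
  have hdeg_rhs : (C c₁ * r₁ - C c₂ * r₂).natDegree ≤ m := by
    apply le_trans (Polynomial.natDegree_sub_le _ _)
    simp only [max_le_iff]
    exact ⟨le_trans (Polynomial.natDegree_C_mul_le _ _) (le_of_eq hrd₁),
      le_trans (Polynomial.natDegree_C_mul_le _ _) (le_of_eq hrd₂)⟩
  have ha : a₁ = a₂ := by
    by_contra hne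
    have h0 : (a₂ - a₁) ≠ 0 := sub_ne_zero.mpr (Ne.symm hne)
    have hd : (C (a₂ - a₁) * q).natDegree = m + 1 := by
      rw [Polynomial.natDegree_C_mul h0, hqd]
    rw [key] at hd
    omega
  subst ha
  have key2 : C c₁ * r₁ = C c₂ * r₂ := by
    have h1 : C (a₁ - a₁) * q = 0 := by simp
    have := key.symm.trans h1
    exact sub_eq_zero.mp this
  have hcc : c₁ = c₂ := by
    have := congrArg (fun p => Polynomial.coeff p m) key2
    simpa [Polynomial.coeff_C_mul, hr₁.coeff_natDegree, hr₂.coeff_natDegree,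
      hrd₁ ▸ hr₁.coeff_natDegree, hrd₂ ▸ hr₂.coeff_natDegree] using this
  subst hcc
  exact ⟨rfl, rfl, mul_left_cancel₀ (Polynomial.C_ne_zero.mpr hc₁) key2⟩

theorem jacobiAux (n : ℕ) : ∀ (ω : Fin (n + 1) → ℝ) (μ : Fin n → ℝ),
    (∀ i : Fin n, ω i.castSucc < μ i ∧ μ i < ω i.succ) →
    ∃! J : Matrix (Fin (n + 1)) (Fin (n + 1)) ℝ,
      J.IsSymm ∧
      (∀ k l : Fin (n + 1), 1 < |(k : ℤ) - (l : ℤ)| → J k l = 0) ∧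
      (∀ k : Fin n, 0 < J k.castSucc k.succ) ∧
      J.charpoly = ∏ i, (X - C (ω i)) ∧
      (J.submatrix Fin.castSucc Fin.castSucc).charpoly = ∏ i, (X - C (μ i)) := by
  induction n with
  | zero =>
    intro ω μ _
    have hc1 : ∀ M : Matrix (Fin 1) (Fin 1) ℝ, M.charpoly = X - C (M 0 0) := by
      intro M
      rw [Matrix.charpoly, Matrix.det_fin_one, charmatrix_apply_eq]
    refine ⟨Matrix.of (fun _ _ => ω 0), ⟨?_, ?_, ?_, ?_, ?_⟩, ?_⟩
    · ext i j; rfl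
    · intro k l h
      rw [Fin.fin_one_eq_zero k, Fin.fin_one_eq_zero l] at h
      simp at h
    · exact fun k => k.elim0
    · rw [hc1, Fin.prod_univ_one]; rfl
    · rw [Matrix.charpoly, Matrix.det_fin_zero]
      rw [Finset.prod_of_isEmpty]
    · intro K hK
      obtain ⟨_, _, _, hchar, _⟩ := hK
      rw [hc1, Fin.prod_univ_one] at hchar
      have hK0 : K 0 0 = ω 0 := by
        have := congrArg (fun p => Polynomial.coeff p 0) hchar
        simpa using this
      ext i j
      rw [Fin.fin_one_eq_zero i, Fin.fin_one_eq_zero j, hK0]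
      rfl
  | succ m ih =>
    intro ω μ hinter
    have hωmono : StrictMono ω :=
      Fin.strictMono_iff_lt_succ.mpr (fun i => lt_trans (hinter i).1 (hinter i).2)
    have hμmono : StrictMono μ := by
      apply Fin.strictMono_iff_lt_succ.mpr
      intro i
      calc μ i.castSucc < ω i.castSucc.succ := (hinter i.castSucc).2
      _ = ω i.succ.castSucc := by rw [Fin.succ_castSucc]
      _ < μ i.succ := (hinter i.succ).1
    set a : ℝ := (∑ i, ω i) - (∑ i, μ i) with ha
    set p : ℝ[X] := ∏ i, (X - C (ω i)) with hp
    set q : ℝ[X] := ∏ i, (X - C (μ i)) with hq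
    have hpm : p.Monic := monic_prod_of_monic _ _ (fun i _ => monic_X_sub_C _)
    have hqm : q.Monic := monic_prod_of_monic _ _ (fun i _ => monic_X_sub_C _)
    have hpd : p.natDegree = m + 2 := by
      rw [hp, Polynomial.natDegree_prod _ _ (fun i _ => X_sub_C_ne_zero _)]
      simp
    have hqd : q.natDegree = m + 1 := by
      rw [hq, Polynomial.natDegree_prod _ _ (fun i _ => X_sub_C_ne_zero _)]
      simp
    have hqtop : q.coeff (m+1) = 1 := by
      have := hqm.coeff_natDegree; rwa [hqd] at this
    have hptop : p.coeff (m+2) = 1 := by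
      have := hpm.coeff_natDegree; rwa [hpd] at this
    have hqnext : q.coeff m = -(∑ i, μ i) := by
      have h1 := Polynomial.prod_X_sub_C_nextCoeff (s := (Finset.univ : Finset (Fin (m+1)))) μ
      rw [Polynomial.nextCoeff_of_natDegree_pos (by rw [hqd]; omega), hqd] at h1
      simpa using h1
    have hpnext : p.coeff (m+1) = -(∑ i, ω i) := by
      have h1 := Polynomial.prod_X_sub_C_nextCoeff (s := (Finset.univ : Finset (Fin (m+2)))) ω
      rw [Polynomial.nextCoeff_of_natDegree_pos (by rw [hpd]; omega), hpd] at h1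
      simpa using h1
    set s : ℝ[X] := (X - C a) * q - p with hs
    have hsdeg : s.natDegree ≤ m := by
      rw [Polynomial.natDegree_le_iff_coeff_eq_zero]
      intro N hN
      have hexp : ∀ k : ℕ, s.coeff (k+1) = q.coeff k - a * q.coeff (k+1) - p.coeff (k+1) := by
        intro k
        rw [hs, Polynomial.coeff_sub, sub_mul, Polynomial.coeff_sub,
          Polynomial.coeff_X_mul, Polynomial.coeff_C_mul]
      obtain ⟨k, rfl⟩ : ∃ k, N = k + 1 := ⟨N - 1, by omega⟩
      rcases Nat.lt_or_ge k (m+2) with hk | hk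
      · rcases Nat.eq_or_lt_of_le (Nat.le_of_lt_succ hk) with hk2 | hk2
        · -- k = m+1, N = m+2
          rw [hexp, hk2, hqtop, hptop,
            Polynomial.coeff_eq_zero_of_natDegree_lt (by omega : q.natDegree < m+2)]
          ring
        · -- k = m, N = m+1
          have : k = m := by omega
          rw [hexp, this, hqnext, hqtop, hpnext, ha]
          ring
      · -- N ≥ m+3
        rw [hexp,
          Polynomial.coeff_eq_zero_of_natDegree_lt (by omega : q.natDegree < k),
          Polynomial.coeff_eq_zero_of_natDegree_lt (by omega : q.natDegree < k+1),
          Polynomial.coeff_eq_zero_of_natDegree_lt (by omega : p.natDegree < k+1)]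
        ring
    have hqeval : ∀ i : Fin (m+1), q.eval (μ i) = 0 := by
      intro i
      rw [hq, Polynomial.eval_prod]
      exact Finset.prod_eq_zero (Finset.mem_univ i) (by simp)
    have hpeval : ∀ x : ℝ, p.eval x = ∏ j, (x - ω j) := by
      intro x; rw [hp, Polynomial.eval_prod]; simp
    have hsig : ∀ i : Fin (m+1), 0 < (-1:ℝ)^(m - (i:ℕ)) * s.eval (μ i) := by
      intro i
      have hseval : s.eval (μ i) = -(∏ j, (μ i - ω j)) := by
        rw [hs, Polynomial.eval_sub, Polynomial.eval_mul, hqeval i, hpeval, mul_zero, zero_sub]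
      have hps := prod_sign (μ i) ω ((i:ℕ)+1) (by omega) (by
        intro j
        constructor
        · intro hj
          calc ω j ≤ ω i.castSucc := hωmono.monotone (by
              rw [Fin.le_def, Fin.coe_castSucc]; omega)
          _ < μ i := (hinter i).1
        · intro hj
          calc μ i < ω i.succ := (hinter i).2
          _ ≤ ω j := hωmono.monotone (by rw [Fin.le_def, Fin.val_succ]; omega))
      rw [show m + 2 - ((i:ℕ)+1) = (m - (i:ℕ)) + 1 from by have := i.isLt; omega,
        pow_succ] at hps
      rw [hseval]
      calc (0:ℝ) < (-1)^(m - (i:ℕ)) * -1 * ∏ j, (μ i - ω j) := hps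
      _ = (-1)^(m - (i:ℕ)) * -(∏ j, (μ i - ω j)) := by ring
    obtain ⟨c, hc, ν, hνint, hsfact⟩ := sign_roots μ hμmono s hsdeg hsig
    obtain ⟨J', hJ'props, hJ'uniq⟩ := ih μ ν hνint
    obtain ⟨hJ'symm, hJ'tri, hJ'pos, hJ'char, hJ'subchar⟩ := hJ'props
    set b : ℝ := Real.sqrt c with hbdef
    have hb : 0 < b := Real.sqrt_pos.mpr hc
    have hb2 : b * b = c := Real.mul_self_sqrt hc.le
    set r : ℝ[X] := ∏ i, (X - C (ν i)) with hr
    have hrm : r.Monic := monic_prod_of_monic _ _ (fun i _ => monic_X_sub_C _)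
    have hrd : r.natDegree = m := by
      rw [hr, Polynomial.natDegree_prod _ _ (fun i _ => X_sub_C_ne_zero _)]
      simp
    set J : Matrix (Fin (m+2)) (Fin (m+2)) ℝ := borderMat J' a b with hJ
    have hJtri : ∀ k l : Fin (m + 2), 1 < |(k : ℤ) - (l : ℤ)| → J k l = 0 := by
      intro k l hkl
      rcases Fin.eq_castSucc_or_eq_last k with ⟨k', rfl⟩ | rfl <;>
        rcases Fin.eq_castSucc_or_eq_last l with ⟨l', rfl⟩ | rfl
      · rw [hJ, borderMat_castSucc]
        exact hJ'tri k' l' (by simpa using hkl)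
      · rw [hJ, borderMat_castSucc_last, if_neg]
        intro h
        rw [h] at hkl
        simp [Fin.val_last] at hkl
      · rw [hJ, borderMat_last_castSucc, if_neg]
        intro h
        rw [h] at hkl
        simp [Fin.val_last] at hkl
      · simp at hkl
    have hJsymm : J.IsSymm := by
      rw [Matrix.IsSymm]
      ext k l
      rw [Matrix.transpose_apply]
      rcases Fin.eq_castSucc_or_eq_last k with ⟨k', rfl⟩ | rfl <;>
        rcases Fin.eq_castSucc_or_eq_last l with ⟨l', rfl⟩ | rfl
      · rw [hJ, borderMat_castSucc, borderMat_castSucc]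
        exact hJ'symm.apply k' l'
      · rw [hJ, borderMat_castSucc_last, borderMat_last_castSucc]
      · rw [hJ, borderMat_castSucc_last, borderMat_last_castSucc]
      · rfl
    have hJpos : ∀ k : Fin (m + 1), 0 < J k.castSucc k.succ := by
      intro k
      rcases Fin.eq_castSucc_or_eq_last k with ⟨k', rfl⟩ | rfl
      · rw [hJ, Fin.succ_castSucc, borderMat_castSucc]
        exact hJ'pos k'
      · rw [hJ, Fin.succ_last, borderMat_castSucc_last, if_pos rfl]
        exact hb
    have hJfact : J.charpoly = p := by
      rw [charpoly_tridiag_rec J hJtri]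
      rw [hJ, borderMat_last_last, borderMat_sub, hJ'char]
      have e1 : borderMat J' a b ((Fin.last m).castSucc) (Fin.last (m+1)) = b := by
        rw [borderMat_castSucc_last, if_pos rfl]
      have e2 : borderMat J' a b (Fin.last (m+1)) ((Fin.last m).castSucc) = b := by
        rw [borderMat_last_castSucc, if_pos rfl]
      rw [e1, e2, hJ'subchar, hb2, ← hsfact, ← hq, hs]
      ring
    have hJsub : (J.submatrix Fin.castSucc Fin.castSucc).charpoly = q := by
      rw [hJ, borderMat_sub, hJ'char]
    refine ⟨J, ⟨hJsymm, hJtri, hJpos, hJfact, hJsub⟩, ?_⟩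
    intro K hK
    obtain ⟨hKsymm, hKtri, hKpos, hKchar, hKsub⟩ := hK
    set aK : ℝ := K (Fin.last (m+1)) (Fin.last (m+1)) with haK
    set bK : ℝ := K ((Fin.last m).castSucc) (Fin.last (m+1)) with hbK
    have hbKsymm : K (Fin.last (m+1)) ((Fin.last m).castSucc) = bK :=
      hKsymm.apply ((Fin.last m).castSucc) (Fin.last (m+1))
    have hbKpos : 0 < bK := by
      have := hKpos (Fin.last m)
      rwa [Fin.succ_last] at this
    set rK : ℝ[X] := ((K.submatrix Fin.castSucc Fin.castSucc).submatrix
      Fin.castSucc Fin.castSucc).charpoly with hrK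
    have hrKm : rK.Monic := Matrix.charpoly_monic _
    have hrKd : rK.natDegree = m := by
      rw [hrK, Matrix.charpoly_natDegree_eq_dim, Fintype.card_fin]
    have hKrec := charpoly_tridiag_rec K hKtri
    rw [hKchar, hKsub, hbKsymm, ← hbK, ← haK, ← hrK] at hKrec
    have h1 : (X - C a) * q - C c * r = p := by
      rw [← hsfact, hs]; ring
    obtain ⟨haa, hcc, hrr⟩ := decomp_unique q hqm hqd a aK c (bK*bK) r rK hrm hrd hrKm hrKd
      (ne_of_gt hc) (ne_of_gt (mul_pos hbKpos hbKpos)) (h1.trans hKrec)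
    have hbb : bK = b := by
      rw [hbdef, hcc]
      exact (Real.sqrt_mul_self hbKpos.le).symm
    have hK' : K.submatrix Fin.castSucc Fin.castSucc = J' := by
      apply hJ'uniq
      refine ⟨hKsymm.submatrix _, ?_, ?_, hKsub, ?_⟩
      · intro k l h
        exact hKtri k.castSucc l.castSucc (by simpa using h)
      · intro k
        have h2 := hKpos k.castSucc
        rw [Fin.succ_castSucc] at h2
        exact h2
      · rw [← hrK, ← hrr, hr]
    ext i j
    rcases Fin.eq_castSucc_or_eq_last i with ⟨i', rfl⟩ | rfl <;>
      rcases Fin.eq_castSucc_or_eq_last j with ⟨j', rfl⟩ | rfl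
    · rw [hJ, borderMat_castSucc]
      exact congrFun (congrFun hK' i') j'
    · rw [hJ, borderMat_castSucc_last]
      by_cases h : i' = Fin.last m
      · subst h
        rw [if_pos rfl, ← hbK]
        exact hbb
      · rw [if_neg h]
        apply hKtri
        have hlt : (i' : ℕ) < m := by
          rcases Nat.lt_or_ge (i' : ℕ) m with h2 | h2
          · exact h2
          · exact absurd (Fin.ext (by omega : (i' : ℕ) = m)) h
        simp only [Fin.coe_castSucc, Fin.val_last]
        rw [abs_of_nonpos] <;> omega
    · rw [hJ, borderMat_last_castSucc]
      rw [hKsymm.apply j'.castSucc (Fin.last (m+1))]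
      by_cases h : j' = Fin.last m
      · subst h
        rw [if_pos rfl, ← hbK]
        exact hbb
      · rw [if_neg h]
        apply hKtri
        have hlt : (j' : ℕ) < m := by
          rcases Nat.lt_or_ge (j' : ℕ) m with h2 | h2
          · exact h2
          · exact absurd (Fin.ext (by omega : (j' : ℕ) = m)) h
        simp only [Fin.coe_castSucc, Fin.val_last]
        rw [abs_of_nonpos] <;> omega
    · rw [hJ, borderMat_last_last, ← haK]
      exact haa.symm

/-- Inverse eigenvalue theorem for Jacobi matrices: given strictly interlacing data
`ω₁ < μ₁ < ω₂ < ⋯ < μ_{n-1} < ω_n`, there is a unique real symmetric tridiagonal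
matrix with positive off-diagonal entries whose spectrum is the `ω`'s and whose
trailing principal submatrix has spectrum the `μ`'s. -/
theorem jacobi_inverse_eigenvalue_problem
    (n : ℕ) (ω : Fin (n + 1) → ℝ) (μ : Fin n → ℝ)
    (hinter : ∀ i : Fin n, ω i.castSucc < μ i ∧ μ i < ω i.succ) :
    ∃! J : Matrix (Fin (n + 1)) (Fin (n + 1)) ℝ,
      J.IsSymm ∧
      (∀ k l : Fin (n + 1), 1 < |(k : ℤ) - (l : ℤ)| → J k l = 0) ∧
      (∀ k : Fin n, 0 < J k.castSucc k.succ) ∧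
      J.charpoly = ∏ i, (X - C (ω i)) ∧
      (J.submatrix Fin.castSucc Fin.castSucc).charpoly = ∏ i, (X - C (μ i)) := by
  exact jacobiAux n ω μ hinter
end

section
/- Let A be a real symmetric matrix whose graph is a tree T on n vertices. Then the number of distinct eigenvalues of A is at least d(T), the diameter of T measured as the number of vertices on a longest path in T. -/
open Polynomial Matrix

/-- Powers of a matrix act on an eigenvector by powers of the eigenvalue. -/
lemma matrix_pow_mulVec_eig {n : ℕ} (A : Matrix (Fin n) (Fin n) ℝ) (v : Fin n → ℝ) (μ : ℝ)
    (hv : A *ᵥ v = μ • v) (k : ℕ) : (A ^ k) *ᵥ v = μ ^ k • v := by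
  induction k with
  | zero => simp
  | succ k ih =>
    rw [pow_succ', ← Matrix.mulVec_mulVec, ih, Matrix.mulVec_smul, hv, smul_smul, ← pow_succ]

/-- Polynomials of a matrix act on an eigenvector by the evaluation at the eigenvalue. -/
lemma matrix_aeval_mulVec_eig {n : ℕ} (A : Matrix (Fin n) (Fin n) ℝ) (v : Fin n → ℝ) (μ : ℝ)
    (hv : A *ᵥ v = μ • v) (p : ℝ[X]) :
    (Polynomial.aeval A p) *ᵥ v = p.eval μ • v := by
  induction p using Polynomial.induction_on' with
  | add p q hp hq => simp [map_add, Matrix.add_mulVec, hp, hq, add_smul]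
  | monomial k c =>
    rw [aeval_monomial, eval_monomial, ← Matrix.mulVec_mulVec,
      matrix_pow_mulVec_eig A v μ hv, Matrix.mulVec_smul,
      Algebra.algebraMap_eq_smul_one, Matrix.smul_mulVec, Matrix.one_mulVec,
      smul_smul, mul_comm]

/-- A polynomial vanishing at all eigenvalues of a hermitian matrix annihilates it. -/
lemma matrix_aeval_eq_zero {n : ℕ} {A : Matrix (Fin n) (Fin n) ℝ} (hA : A.IsHermitian)
    (q : ℝ[X]) (hq : ∀ i, q.eval (hA.eigenvalues i) = 0) :
    Polynomial.aeval A q = 0 := by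
  have key : ∀ j, (Polynomial.aeval A q) *ᵥ ⇑(hA.eigenvectorBasis j) = 0 := fun j => by
    rw [matrix_aeval_mulVec_eig A _ _ (hA.mulVec_eigenvectorBasis j), hq j, zero_smul]
  have hlin : Matrix.mulVecLin (Polynomial.aeval A q) = 0 := by
    apply (hA.eigenvectorBasis.toBasis.map (WithLp.linearEquiv 2 ℝ (Fin n → ℝ))).ext
    intro j
    simpa [Module.Basis.map_apply] using key j
  ext i j
  have h0 : (Polynomial.aeval A q) *ᵥ Pi.single j 1 = 0 := by
    have := congrFun (congrArg DFunLike.coe hlin) (Pi.single j 1)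
    simpa using this
  have h1 := congrFun h0 i
  simpa [Matrix.mulVec_single_one] using h1

/-- Entries of powers of `A` vanish below the graph distance. -/
lemma matrix_pow_entry_eq_zero {n : ℕ} {T : SimpleGraph (Fin n)} (hT : T.IsTree)
    {A : Matrix (Fin n) (Fin n) ℝ}
    (hgraph : ∀ i j : Fin n, i ≠ j → (A i j ≠ 0 ↔ T.Adj i j)) :
    ∀ (j : ℕ) (u w : Fin n), j < T.dist u w → (A ^ j) u w = 0 := by
  intro j
  induction j with
  | zero =>
    intro u w h
    have hne : u ≠ w := by rintro rfl; simp [SimpleGraph.dist_self] at h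
    simp [Matrix.one_apply_ne hne]
  | succ j ih =>
    intro u w h
    rw [pow_succ, Matrix.mul_apply]
    apply Finset.sum_eq_zero
    intro v _
    by_cases hvw : A v w = 0
    · simp [hvw]
    rcases eq_or_ne v w with rfl | hne
    · rw [ih u v (by omega), zero_mul]
    · have hadj : T.Adj v w := (hgraph v w hne).mp hvw
      have h1 : T.dist u w ≤ T.dist u v + T.dist v w := hT.isConnected.dist_triangle
      have h2 : T.dist v w = 1 := SimpleGraph.dist_eq_one_iff_adj.mpr hadj
      rw [ih u v (by omega), zero_mul]

/-- The entry of `A ^ dist u w` at `(u, w)` is nonzero. -/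
lemma matrix_pow_dist_entry_ne_zero {n : ℕ} {T : SimpleGraph (Fin n)} (hT : T.IsTree)
    {A : Matrix (Fin n) (Fin n) ℝ}
    (hgraph : ∀ i j : Fin n, i ≠ j → (A i j ≠ 0 ↔ T.Adj i j)) :
    ∀ (k : ℕ) (u w : Fin n), T.dist u w = k → (A ^ k) u w ≠ 0 := by
  intro k
  induction k with
  | zero =>
    intro u w h
    obtain rfl : u = w := (hT.isConnected.dist_eq_zero_iff).mp h
    simp
  | succ k ih =>
    intro u w hdist
    have huw : u ≠ w := by
      rintro rfl
      rw [SimpleGraph.dist_self] at hdist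
      omega
    obtain ⟨p0, hp0⟩ := hT.isConnected.exists_walk_length_eq_dist u w
    have hbpath : p0.bypass.IsPath := p0.bypass_isPath
    have hbl : p0.bypass.length = k + 1 := by
      have h1 := p0.length_bypass_le
      have h2 := SimpleGraph.dist_le p0.bypass
      omega
    obtain ⟨v, huv, q, hcons⟩ := p0.bypass.exists_eq_cons_of_ne huw
    rw [hcons] at hbpath hbl
    have hql : q.length = k := by simpa using hbl
    have hqpath : q.IsPath ∧ u ∉ q.support := by
      rwa [SimpleGraph.Walk.cons_isPath_iff] at hbpath
    have hvw : T.dist v w = k := by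
      have h1 : T.dist v w ≤ k := hql ▸ SimpleGraph.dist_le q
      have h2 : T.dist u w ≤ T.dist u v + T.dist v w := hT.isConnected.dist_triangle
      have h3 : T.dist u v = 1 := SimpleGraph.dist_eq_one_iff_adj.mpr huv
      omega
    rw [pow_succ', Matrix.mul_apply, Finset.sum_eq_single v]
    · exact mul_ne_zero ((hgraph u v huv.ne).mpr huv) (ih v w hvw)
    · intro x _ hxv
      by_cases hx : A u x = 0
      · rw [hx, zero_mul]
      rcases eq_or_ne u x with rfl | hux
      · rw [matrix_pow_entry_eq_zero hT hgraph k u w (by omega), mul_zero]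
      have hadj : T.Adj u x := (hgraph u x hux).mp hx
      by_cases hz : (A ^ k) x w = 0
      · rw [hz, mul_zero]
      exfalso
      have hdx : T.dist x w ≤ k := by
        by_contra hlt
        exact hz (matrix_pow_entry_eq_zero hT hgraph k x w (by omega))
      obtain ⟨r0, hr0⟩ := hT.isConnected.exists_walk_length_eq_dist x w
      have hrpath : r0.bypass.IsPath := r0.bypass_isPath
      have hrl : r0.bypass.length ≤ k := by
        have := r0.length_bypass_le
        omega
      have hus : u ∉ r0.bypass.support := by
        intro humem
        have h1 := SimpleGraph.dist_le (r0.bypass.dropUntil u humem)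
        have h2 := r0.bypass.length_dropUntil_le humem
        omega
      have hpath1 : (SimpleGraph.Walk.cons hadj r0.bypass).IsPath := hrpath.cons hus
      obtain ⟨P, -, hPuniq⟩ := hT.existsUnique_path u w
      have e1 := hPuniq _ hpath1
      have e2 := hPuniq _ hbpath
      have hxveq : x = v := by
        have := congrArg (fun W => SimpleGraph.Walk.getVert W 1) (e1.trans e2.symm)
        simpa using this
      exact hxv hxveq
    · intro hv
      exact absurd (Finset.mem_univ v) hv

/-- The number of distinct eigenvalues of a real symmetric matrix whose graph is a
tree `T` is at least the number of vertices on any path in `T` (hence at least the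
diameter of `T` measured in vertices). -/
theorem distinct_eigenvalues_ge_diameter
    (n : ℕ) (T : SimpleGraph (Fin n)) (hT : T.IsTree)
    (A : Matrix (Fin n) (Fin n) ℝ) (hA : A.IsHermitian)
    (hgraph : ∀ i j : Fin n, i ≠ j → (A i j ≠ 0 ↔ T.Adj i j)) :
    ∀ (u w : Fin n) (p : T.Walk u w), p.IsPath →
      p.length + 1 ≤ (Finset.univ.image hA.eigenvalues).card := by
  intro u w p hp
  set S : Finset ℝ := Finset.univ.image hA.eigenvalues with hS
  have hlen : p.length = T.dist u w := by
    obtain ⟨p0, hp0⟩ := hT.isConnected.exists_walk_length_eq_dist u w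
    have h1 := SimpleGraph.dist_le p
    have h3 := p0.length_bypass_le
    have h4 : p = p0.bypass := (hT.existsUnique_path u w).unique hp p0.bypass_isPath
    have h5 : p.length = p0.bypass.length := by rw [h4]
    omega
  by_contra hcon
  push_neg at hcon
  have hm : S.card ≤ p.length := by omega
  set k := p.length with hk
  set q : ℝ[X] := ∏ μ ∈ S, (X - C μ) with hqdef
  have hmonic : q.Monic := monic_prod_of_monic _ _ (fun μ _ => monic_X_sub_C μ)
  have hdeg : q.natDegree = S.card := by
    rw [hqdef, Polynomial.natDegree_prod_of_monic _ _ (fun μ _ => monic_X_sub_C μ)]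
    simp [natDegree_X_sub_C]
  have hq0 : Polynomial.aeval A q = 0 := by
    apply matrix_aeval_eq_zero hA
    intro i
    rw [hqdef, eval_prod]
    apply Finset.prod_eq_zero (Finset.mem_image_of_mem _ (Finset.mem_univ i))
    simp
  set r : ℝ[X] := X ^ k %ₘ q with hrdef
  have hAk : A ^ k = Polynomial.aeval A r := by
    have hsplit : r + q * (X ^ k /ₘ q) = X ^ k := Polynomial.modByMonic_add_div _ q
    have := congrArg (Polynomial.aeval A) hsplit
    rw [map_add, _root_.map_mul, hq0, zero_mul, add_zero, Polynomial.aeval_X_pow] at this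
    exact this.symm
  have hentry : (A ^ k) u w = 0 := by
    by_cases hr0 : r = 0
    · rw [hAk, hr0, map_zero]
      rfl
    have hrd : r.natDegree < k := by
      have hdlt : r.degree < q.degree := Polynomial.degree_modByMonic_lt _ hmonic
      have := Polynomial.natDegree_lt_natDegree hr0 hdlt
      omega
    rw [hAk, Polynomial.aeval_eq_sum_range, Matrix.sum_apply]
    apply Finset.sum_eq_zero
    intro i hi
    have hik : i < k := by
      have := Finset.mem_range.mp hi
      omega
    rw [Matrix.smul_apply, matrix_pow_entry_eq_zero hT hgraph i u w (by omega), smul_zero]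
  exact matrix_pow_dist_entry_ne_zero hT hgraph k u w hlen.symm (hk ▸ hentry)
end

section
/- Let A be a real symmetric matrix whose graph is a tree T, and let λ be an eigenvalue of A with m_A(λ) ≥ 2. Then there exists a vertex u of T with deg_T(u) ≥ 3 such that m_{A(u)}(λ) = m_A(λ) + 1, and at least three components T₁, T₂, T₃ of T − u satisfy m_{A[T_i]}(λ) ≥ 1. -/
open Polynomial
open scoped Classical

/-- The characteristic polynomial of the principal submatrix of `A` indexed by `S`. -/
noncomputable def charpolyOn {n : ℕ} (A : Matrix (Fin n) (Fin n) ℝ)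
    (S : Finset (Fin n)) : Polynomial ℝ :=
  (A.submatrix (fun x : {a // a ∈ S} => (x : Fin n))
    (fun x : {a // a ∈ S} => (x : Fin n))).charpoly

/-- The component of `G - v` containing `u`: all vertices reachable from `u`
by a walk avoiding `v`. -/
noncomputable def branchAt {n : ℕ} (G : SimpleGraph (Fin n)) (v u : Fin n) :
    Finset (Fin n) :=
  Finset.univ.filter (fun w => ∃ p : G.Walk u w, v ∉ p.support)


namespace PW
open Matrix

section LinAlg
variable {ι : Type*} [Fintype ι] [DecidableEq ι]

lemma map_one_C : (1 : Matrix ι ι ℝ).map (C : ℝ →+* ℝ[X]) = 1 :=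
  Matrix.map_one _ (map_zero _) (map_one _)

lemma charpoly_conj (P Q M : Matrix ι ι ℝ) (hPQ : P * Q = 1) :
    (P * M * Q).charpoly = M.charpoly := by
  have hmapPQ : P.map (C : ℝ →+* ℝ[X]) * Q.map (C : ℝ →+* ℝ[X]) = 1 := by
    rw [← Matrix.map_mul, hPQ, map_one_C]
  have hscalar : (Matrix.scalar ι (X : ℝ[X])) = (X : ℝ[X]) • (1 : Matrix ι ι ℝ[X]) := by
    ext i j
    by_cases h : i = j <;> simp [Matrix.scalar_apply, Matrix.diagonal_apply, h, Matrix.one_apply]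
  have key : charmatrix (P * M * Q) =
      P.map (C : ℝ →+* ℝ[X]) * charmatrix M * Q.map (C : ℝ →+* ℝ[X]) := by
    simp only [charmatrix, RingHom.mapMatrix_apply]
    rw [mul_sub, sub_mul, hscalar, mul_smul_comm, smul_mul_assoc, mul_one, hmapPQ,
      ← Matrix.map_mul, ← Matrix.map_mul]
  rw [Matrix.charpoly, key, det_mul, det_mul, Matrix.charpoly]
  have hdet : (P.map (C : ℝ →+* ℝ[X])).det * (Q.map (C : ℝ →+* ℝ[X])).det = 1 := by
    rw [← det_mul, hmapPQ, det_one]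
  calc (P.map (C : ℝ →+* ℝ[X])).det * (charmatrix M).det * (Q.map (C : ℝ →+* ℝ[X])).det
      = (P.map (C : ℝ →+* ℝ[X])).det * (Q.map (C : ℝ →+* ℝ[X])).det * (charmatrix M).det := by
        ring
    _ = (charmatrix M).det := by rw [hdet, one_mul]

lemma charpoly_diagonal (d : ι → ℝ) :
    (Matrix.diagonal d).charpoly = ∏ i, (X - C (d i)) := by
  have h : charmatrix (Matrix.diagonal d) = Matrix.diagonal (fun i => X - C (d i)) := by
    ext i j
    by_cases h : i = j
    · subst h; simp
    · simp [h, Matrix.diagonal_apply_ne _ h]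
  rw [Matrix.charpoly, h, det_diagonal]

lemma rootMultiplicity_prod_linear (c : ι → ℝ) (lam : ℝ) (s : Finset ι) :
    ((∏ i ∈ s, (X - C (c i))).rootMultiplicity lam)
      = (s.filter (fun i => c i = lam)).card := by
  induction s using Finset.induction with
  | empty => simp
  | @insert a s ha ih =>
    have hne : (∏ i ∈ s, (X - C (c i))) ≠ 0 :=
      Finset.prod_ne_zero_iff.2 fun i _ => X_sub_C_ne_zero _
    rw [Finset.prod_insert ha,
      Polynomial.rootMultiplicity_mul (mul_ne_zero (X_sub_C_ne_zero _) hne),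
      Polynomial.rootMultiplicity_X_sub_C, ih, Finset.filter_insert]
    by_cases h : c a = lam
    · rw [if_pos h, if_pos h.symm, Finset.card_insert_of_notMem (by simp [ha])]
      omega
    · rw [if_neg h, if_neg (fun hh => h hh.symm)]
      omega


lemma isHermitian_of_isSymm {M : Matrix ι ι ℝ} (h : M.IsSymm) : M.IsHermitian := by
  rwa [Matrix.IsHermitian, Matrix.conjTranspose_eq_transpose_of_trivial]


lemma rootMultiplicity_charpoly_symm {M : Matrix ι ι ℝ} (hM : M.IsSymm) (lam : ℝ) :
    M.charpoly.rootMultiplicity lam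
      = Module.finrank ℝ (LinearMap.ker (M - lam • (1 : Matrix ι ι ℝ)).mulVecLin) := by
  have hH : M.IsHermitian := isHermitian_of_isSymm hM
  set U : Matrix ι ι ℝ := (Matrix.IsHermitian.eigenvectorUnitary hH : Matrix ι ι ℝ) with hUdef
  have hU1 : U * star U = 1 :=
    (Matrix.mem_unitaryGroup_iff).mp (Matrix.IsHermitian.eigenvectorUnitary hH).2
  have hU2 : star U * U = 1 :=
    (Matrix.mem_unitaryGroup_iff').mp (Matrix.IsHermitian.eigenvectorUnitary hH).2
  have hspec : M = U * Matrix.diagonal hH.eigenvalues * star U := by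
    have h := hH.spectral_theorem
    rwa [RCLike.ofReal_real_eq_id, Function.id_comp] at h
  have hcp0 : M.charpoly = (Matrix.diagonal hH.eigenvalues).charpoly := by
    conv_lhs => rw [hspec]
    exact charpoly_conj _ _ _ hU1
  have hcp : M.charpoly.rootMultiplicity lam
      = (Finset.univ.filter (fun i => hH.eigenvalues i = lam)).card := by
    rw [hcp0, charpoly_diagonal, rootMultiplicity_prod_linear]
  have hMsub : M - lam • (1 : Matrix ι ι ℝ)
      = U * Matrix.diagonal (fun i => hH.eigenvalues i - lam) * star U := by
    have hd : Matrix.diagonal (fun i => hH.eigenvalues i - lam)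
        = Matrix.diagonal hH.eigenvalues - lam • (1 : Matrix ι ι ℝ) := by
      ext i j
      by_cases h : i = j
      · subst h; simp [Matrix.one_apply]
      · simp [Matrix.diagonal_apply_ne _ h, Matrix.one_apply_ne h]
    rw [hd, mul_sub, sub_mul, ← hspec]
    congr 1
    rw [mul_smul_comm, smul_mul_assoc, mul_one, hU1]
  have hdetU : IsUnit U.det := by
    apply IsUnit.of_mul_eq_one (star U).det
    rw [← det_mul, hU1, det_one]
  have hdetsU : IsUnit (star U).det := by
    apply IsUnit.of_mul_eq_one U.det
    rw [← det_mul, hU2, det_one]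
  have hrank : (M - lam • (1 : Matrix ι ι ℝ)).rank
      = Fintype.card {i // hH.eigenvalues i - lam ≠ 0} := by
    rw [hMsub, Matrix.rank_mul_eq_left_of_isUnit_det _ _ hdetsU,
      Matrix.rank_mul_eq_right_of_isUnit_det _ _ hdetU, Matrix.rank_diagonal]
  have hrn := LinearMap.finrank_range_add_finrank_ker (M - lam • (1 : Matrix ι ι ℝ)).mulVecLin
  rw [Module.finrank_pi] at hrn
  have h1 : Module.finrank ℝ (LinearMap.range (M - lam • (1 : Matrix ι ι ℝ)).mulVecLin)
      = (Finset.univ.filter (fun i => hH.eigenvalues i ≠ lam)).card := by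
    have : (M - lam • (1 : Matrix ι ι ℝ)).rank
        = Module.finrank ℝ (LinearMap.range (M - lam • (1 : Matrix ι ι ℝ)).mulVecLin) := rfl
    rw [← this, hrank, Fintype.card_subtype]
    congr 1
    apply Finset.filter_congr
    intro i _
    simp [sub_eq_zero]
  have hsplit := Finset.card_filter_add_card_filter_not
    (s := (Finset.univ : Finset ι)) (p := fun i => hH.eigenvalues i = lam)
  rw [Finset.card_univ] at hsplit
  rw [hcp]
  have hfc : (Finset.univ.filter (fun i => ¬ hH.eigenvalues i = lam)).card
      = (Finset.univ.filter (fun i => hH.eigenvalues i ≠ lam)).card := rfl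
  omega

end LinAlg

section Eig
variable {N : ℕ} (A : Matrix (Fin N) (Fin N) ℝ) (lam : ℝ)

/-- vectors supported on `S` satisfying the eigen-equation at every index of `S`. -/
noncomputable def eigOn (S : Finset (Fin N)) : Submodule ℝ (Fin N → ℝ) where
  carrier := {x | (∀ i, i ∉ S → x i = 0) ∧ ∀ i ∈ S, A.mulVec x i = lam * x i}
  add_mem' := by
    rintro x y ⟨hx0, hx⟩ ⟨hy0, hy⟩
    refine ⟨fun i hi => by simp [hx0 i hi, hy0 i hi], fun i hi => ?_⟩
    rw [Matrix.mulVec_add]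
    simp only [Pi.add_apply]
    rw [hx i hi, hy i hi]
    ring
  zero_mem' := by
    refine ⟨fun i _ => rfl, fun i _ => ?_⟩
    rw [Matrix.mulVec_zero]
    simp
  smul_mem' := by
    rintro c x ⟨hx0, hx⟩
    refine ⟨fun i hi => by simp [hx0 i hi], fun i hi => ?_⟩
    rw [Matrix.mulVec_smul]
    simp only [Pi.smul_apply, smul_eq_mul]
    rw [hx i hi]
    ring

noncomputable def mOn (S : Finset (Fin N)) : ℕ := Module.finrank ℝ (eigOn A lam S)

lemma mem_eigOn {S : Finset (Fin N)} {x : Fin N → ℝ} :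
    x ∈ eigOn A lam S ↔ (∀ i, i ∉ S → x i = 0) ∧ ∀ i ∈ S, A.mulVec x i = lam * x i :=
  Iff.rfl

/-- extension by zero -/
noncomputable def extZero (S : Finset (Fin N)) : ({a // a ∈ S} → ℝ) →ₗ[ℝ] (Fin N → ℝ) where
  toFun y i := if h : i ∈ S then y ⟨i, h⟩ else 0
  map_add' y z := by
    funext i
    by_cases h : i ∈ S <;> simp [h]
  map_smul' c y := by
    funext i
    by_cases h : i ∈ S <;> simp [h]

lemma extZero_injective (S : Finset (Fin N)) : Function.Injective (extZero (N := N) S) := by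
  intro y z h
  funext j
  have := congrFun h (j : Fin N)
  simpa [extZero, j.2] using this

lemma mulVec_submatrix (Mf : Matrix (Fin N) (Fin N) ℝ) (S : Finset (Fin N))
    (y : {a // a ∈ S} → ℝ) (i : Fin N) (hi : i ∈ S) :
    ((Mf.submatrix (fun x : {a // a ∈ S} => (x : Fin N))
      (fun x : {a // a ∈ S} => (x : Fin N))).mulVec y) ⟨i, hi⟩
      = Mf.mulVec (extZero S y) i := by
  unfold Matrix.mulVec dotProduct
  have h1 : ∑ j : Fin N, Mf i j * (extZero S y) j
      = ∑ j ∈ S, Mf i j * (extZero S y) j := by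
    refine (Finset.sum_subset (Finset.subset_univ S) ?_).symm
    intro j _ hj
    simp [extZero, hj]
  rw [h1, ← Finset.sum_attach S (fun j => Mf i j * (extZero S y) j)]
  rw [Finset.univ_eq_attach]
  apply Finset.sum_congr rfl
  intro j _
  simp [extZero, j.2, Matrix.submatrix_apply]

lemma submatrix_sub_smul_one (S : Finset (Fin N)) :
    (A.submatrix (fun x : {a // a ∈ S} => (x : Fin N)) (fun x : {a // a ∈ S} => (x : Fin N)))
        - lam • (1 : Matrix {a // a ∈ S} {a // a ∈ S} ℝ)
      = (A - lam • (1 : Matrix (Fin N) (Fin N) ℝ)).submatrix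
          (fun x : {a // a ∈ S} => (x : Fin N)) (fun x : {a // a ∈ S} => (x : Fin N)) := by
  ext i j
  by_cases h : i = j
  · subst h
    simp [Matrix.one_apply, Matrix.submatrix_apply]
  · have h2 : (i : Fin N) ≠ (j : Fin N) := fun hc => h (Subtype.ext hc)
    simp [Matrix.one_apply_ne h, Matrix.one_apply_ne h2, Matrix.submatrix_apply]

lemma eigOn_eq_map (S : Finset (Fin N)) :
    eigOn A lam S = Submodule.map (extZero S)
      (LinearMap.ker ((A.submatrix (fun x : {a // a ∈ S} => (x : Fin N))
        (fun x : {a // a ∈ S} => (x : Fin N)))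
        - lam • (1 : Matrix {a // a ∈ S} {a // a ∈ S} ℝ)).mulVecLin) := by
  have key : ∀ (y : {a // a ∈ S} → ℝ) (i : Fin N) (hi : i ∈ S),
      (((A.submatrix (fun x : {a // a ∈ S} => (x : Fin N))
        (fun x : {a // a ∈ S} => (x : Fin N)))
        - lam • (1 : Matrix {a // a ∈ S} {a // a ∈ S} ℝ)).mulVec y) ⟨i, hi⟩
      = A.mulVec (extZero S y) i - lam * (extZero S y) i := by
    intro y i hi
    rw [submatrix_sub_smul_one, mulVec_submatrix, Matrix.sub_mulVec]
    simp only [Pi.sub_apply]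
    congr 1
    rw [Matrix.smul_mulVec, Matrix.one_mulVec]
    simp
  ext x
  constructor
  · rintro ⟨hx0, hx⟩
    refine ⟨fun j => x j, ?_, ?_⟩
    · rw [SetLike.mem_coe, LinearMap.mem_ker]
      funext j
      rw [Matrix.mulVecLin_apply]
      have hext : extZero S (fun j : {a // a ∈ S} => x (j : Fin N)) = x := by
        funext i
        by_cases h : i ∈ S
        · simp [extZero, h]
        · simp [extZero, h, hx0 i h]
      have := key (fun j : {a // a ∈ S} => x (j : Fin N)) j j.2
      rw [Subtype.eta] at this
      rw [this, hext, hx j j.2]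
      simp
    · funext i
      by_cases h : i ∈ S
      · simp [extZero, h]
      · simp [extZero, h, hx0 i h]
  · rintro ⟨y, hy, rfl⟩
    rw [SetLike.mem_coe, LinearMap.mem_ker] at hy
    constructor
    · intro i hi
      simp [extZero, hi]
    · intro i hi
      have := key y i hi
      have h0 : (((A.submatrix (fun x : {a // a ∈ S} => (x : Fin N))
          (fun x : {a // a ∈ S} => (x : Fin N)))
          - lam • (1 : Matrix {a // a ∈ S} {a // a ∈ S} ℝ)).mulVec y) ⟨i, hi⟩ = 0 := by
        rw [← Matrix.mulVecLin_apply, hy]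
        rfl
      rw [h0] at this
      linarith [this]

lemma charpolyOn_rootMult (hsymm : A.IsSymm) (S : Finset (Fin N)) :
    (charpolyOn A S).rootMultiplicity lam = mOn A lam S := by
  have hsub : (A.submatrix (fun x : {a // a ∈ S} => (x : Fin N))
      (fun x : {a // a ∈ S} => (x : Fin N))).IsSymm := by
    ext i j
    simp only [Matrix.transpose_apply, Matrix.submatrix_apply]
    exact congrFun (congrFun hsymm _) _
  rw [charpolyOn, rootMultiplicity_charpoly_symm hsub lam, mOn, eigOn_eq_map]
  exact ((LinearEquiv.finrank_eq
    (Submodule.equivMapOfInjective (extZero S) (extZero_injective S)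
      (LinearMap.ker ((A.submatrix (fun x : {a // a ∈ S} => (x : Fin N))
        (fun x : {a // a ∈ S} => (x : Fin N)))
        - lam • (1 : Matrix {a // a ∈ S} {a // a ∈ S} ℝ)).mulVecLin))).symm).symm

section Helpers

variable {K : Type*} {V : Type*} [Field K] [AddCommGroup V] [Module K V]
  [FiniteDimensional K V]

lemma finrank_ker_restrict (E : Submodule K V) (f : V →ₗ[K] K) :
    Module.finrank K E
      = Module.finrank K (E ⊓ LinearMap.ker f : Submodule K V)
        + Module.finrank K (LinearMap.range (f.comp E.subtype)) := by
  have h1 := LinearMap.finrank_range_add_finrank_ker (f.comp E.subtype)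
  have h2 : Module.finrank K (LinearMap.ker (f.comp E.subtype))
      = Module.finrank K (E ⊓ LinearMap.ker f : Submodule K V) := by
    have hk : LinearMap.ker (f.comp E.subtype) = Submodule.comap E.subtype
        (LinearMap.ker f) := LinearMap.ker_comp _ _
    rw [hk, ← Submodule.map_comap_subtype]
    exact LinearEquiv.finrank_eq (Submodule.equivMapOfInjective E.subtype
      (Submodule.injective_subtype E) _)
  omega

lemma finrank_le_inf_ker (E : Submodule K V) (f : V →ₗ[K] K) :
    Module.finrank K E
      ≤ Module.finrank K (E ⊓ LinearMap.ker f : Submodule K V) + 1 := by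
  have h := finrank_ker_restrict E f
  have hr : Module.finrank K (LinearMap.range (f.comp E.subtype)) ≤ 1 := by
    have := Submodule.finrank_le (LinearMap.range (f.comp E.subtype))
    simpa using this
  omega

lemma finrank_inf_ker_eq (E : Submodule K V) (f : V →ₗ[K] K)
    (h : ∃ y ∈ E, f y ≠ 0) :
    Module.finrank K (E ⊓ LinearMap.ker f : Submodule K V) + 1
      = Module.finrank K E := by
  have hk := finrank_ker_restrict E f
  obtain ⟨y, hyE, hy⟩ := h
  have hr : LinearMap.range (f.comp E.subtype) = ⊤ := by
    rw [LinearMap.range_eq_top]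
    intro c
    refine ⟨(c / f y) • ⟨y, hyE⟩, ?_⟩
    simp [LinearMap.comp_apply, div_mul_cancel₀, hy]
  rw [hr] at hk
  rw [finrank_top] at hk
  rw [Module.finrank_self] at hk
  omega

end Helpers

/-- the functional x ↦ (A x)_v - lam x_v -/
noncomputable def phiAt (v : Fin N) : (Fin N → ℝ) →ₗ[ℝ] ℝ :=
  (LinearMap.proj v).comp (A - lam • (1 : Matrix (Fin N) (Fin N) ℝ)).mulVecLin

lemma phiAt_apply (v : Fin N) (x : Fin N → ℝ) :
    phiAt A lam v x = A.mulVec x v - lam * x v := by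
  simp only [phiAt, LinearMap.comp_apply, LinearMap.proj_apply, Matrix.mulVecLin_apply,
    Matrix.sub_mulVec, Matrix.smul_mulVec, Matrix.one_mulVec, Pi.sub_apply,
    Pi.smul_apply, smul_eq_mul]

lemma eigOn_erase_inf_le {S : Finset (Fin N)} {v : Fin N} (hv : v ∈ S) :
    eigOn A lam (S.erase v) ⊓ LinearMap.ker (phiAt A lam v) ≤ eigOn A lam S := by
  rintro x ⟨hx, hker⟩
  obtain ⟨hx0, hxe⟩ := (mem_eigOn A lam).mp hx
  have hxv : x v = 0 := hx0 v (Finset.notMem_erase v S)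
  rw [SetLike.mem_coe, LinearMap.mem_ker, phiAt_apply] at hker
  refine (mem_eigOn A lam).mpr ⟨fun i hi => ?_, fun i hi => ?_⟩
  · apply hx0
    intro hmem
    exact hi (Finset.mem_of_mem_erase hmem)
  · by_cases h : i = v
    · subst h
      linarith [hker]
    · exact hxe i (Finset.mem_erase.mpr ⟨h, hi⟩)

lemma eigOn_inf_proj_le {S : Finset (Fin N)} (v : Fin N) :
    eigOn A lam S ⊓ LinearMap.ker (LinearMap.proj (R := ℝ) (φ := fun _ : Fin N => ℝ) v)
      ≤ eigOn A lam (S.erase v) := by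
  rintro x ⟨hx, hker⟩
  obtain ⟨hx0, hxe⟩ := (mem_eigOn A lam).mp hx
  rw [SetLike.mem_coe, LinearMap.mem_ker] at hker
  have hxv : x v = 0 := hker
  refine (mem_eigOn A lam).mpr ⟨fun i hi => ?_, fun i hi => ?_⟩
  · by_cases h : i = v
    · subst h; exact hxv
    · exact hx0 i (fun hmem => hi (Finset.mem_erase.mpr ⟨h, hmem⟩))
  · exact hxe i (Finset.mem_of_mem_erase hi)

/-- interlacing, upper: deleting a vertex increases multiplicity by at most one. -/
lemma mOn_erase_le (S : Finset (Fin N)) (v : Fin N) :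
    mOn A lam (S.erase v) ≤ mOn A lam S + 1 := by
  by_cases hv : v ∈ S
  · have h1 := finrank_le_inf_ker (eigOn A lam (S.erase v)) (phiAt A lam v)
    have h2 : Module.finrank ℝ
        (eigOn A lam (S.erase v) ⊓ LinearMap.ker (phiAt A lam v) : Submodule ℝ _)
        ≤ mOn A lam S :=
      Submodule.finrank_mono (eigOn_erase_inf_le A lam hv)
    unfold mOn at *
    omega
  · rw [Finset.erase_eq_of_notMem hv]
    omega

/-- interlacing, lower. -/
lemma mOn_le_erase (S : Finset (Fin N)) (v : Fin N) :
    mOn A lam S ≤ mOn A lam (S.erase v) + 1 := by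
  have h1 := finrank_le_inf_ker (eigOn A lam S)
    (LinearMap.proj (R := ℝ) (φ := fun _ : Fin N => ℝ) v)
  have h2 : Module.finrank ℝ
      (eigOn A lam S ⊓ LinearMap.ker (LinearMap.proj (R := ℝ) (φ := fun _ : Fin N => ℝ) v) :
        Submodule ℝ _)
      ≤ mOn A lam (S.erase v) :=
    Submodule.finrank_mono (eigOn_inf_proj_le A lam v)
  unfold mOn at *
  omega

/-- Parter's lemma, linear-algebra form. -/
lemma parter_linear (hsymm : A.IsSymm) {S : Finset (Fin N)} {v : Fin N} (hv : v ∈ S)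
    {y : Fin N → ℝ} (hy : y ∈ eigOn A lam (S.erase v))
    (hyv : A.mulVec y v ≠ 0) :
    mOn A lam (S.erase v) = mOn A lam S + 1 := by
  obtain ⟨hy0, hye⟩ := (mem_eigOn A lam).mp hy
  have hyv0 : y v = 0 := hy0 v (Finset.notMem_erase v S)
  -- (a) every z in eigOn S vanishes at v
  have hvan : ∀ z ∈ eigOn A lam S, z v = 0 := by
    intro z hz
    obtain ⟨hz0, hze⟩ := (mem_eigOn A lam).mp hz
    have hsum1 : ∑ i, (A.mulVec y i - lam * y i) * z i = (A.mulVec y v) * z v := by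
      rw [Finset.sum_eq_single_of_mem v (Finset.mem_univ v)]
      · rw [hyv0]; ring
      · intro i _ hi
        by_cases h : i ∈ S
        · have : i ∈ S.erase v := Finset.mem_erase.mpr ⟨hi, h⟩
          rw [hye i this]; ring
        · rw [hz0 i h]; ring
    have hswap : (A.mulVec y) ⬝ᵥ z = y ⬝ᵥ (A.mulVec z) := by
      rw [Matrix.dotProduct_mulVec, ← Matrix.mulVec_transpose, hsymm]
    have hsum2 : ∑ i, (A.mulVec y i - lam * y i) * z i
        = ∑ i, (A.mulVec z i - lam * z i) * y i := by
      simp only [sub_mul]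
      rw [Finset.sum_sub_distrib, Finset.sum_sub_distrib]
      congr 1
      · calc ∑ i, (A *ᵥ y) i * z i = (A *ᵥ y) ⬝ᵥ z := rfl
          _ = y ⬝ᵥ (A *ᵥ z) := hswap
          _ = ∑ i, (A *ᵥ z) i * y i := by
              show (∑ i, y i * (A *ᵥ z) i) = _
              apply Finset.sum_congr rfl
              intro i _
              ring
      · apply Finset.sum_congr rfl
        intro i _
        ring
    have hzero : ∑ i, (A.mulVec z i - lam * z i) * y i = 0 := by
      apply Finset.sum_eq_zero
      intro i _
      by_cases h : i ∈ S
      · rw [hze i h]; ring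
      · have : y i = 0 := hy0 i (fun hmem => h (Finset.mem_of_mem_erase hmem))
        rw [this]; ring
    rw [hsum2, hzero] at hsum1
    rcases mul_eq_zero.mp hsum1.symm with h | h
    · exact absurd h hyv
    · exact h
  -- (b) eigOn S is the kernel of phi restricted
  have hEeq : eigOn A lam S
      = eigOn A lam (S.erase v) ⊓ LinearMap.ker (phiAt A lam v) := by
    apply le_antisymm
    · intro z hz
      obtain ⟨hz0, hze⟩ := (mem_eigOn A lam).mp hz
      have hzv := hvan z hz
      refine Submodule.mem_inf.mpr ⟨?_, ?_⟩
      · refine (mem_eigOn A lam).mpr ⟨fun i hi => ?_, fun i hi => hze i (Finset.mem_of_mem_erase hi)⟩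
        by_cases h : i = v
        · subst h; exact hzv
        · exact hz0 i (fun hmem => hi (Finset.mem_erase.mpr ⟨h, hmem⟩))
      · rw [LinearMap.mem_ker, phiAt_apply, hze v hv, hzv]
        ring
    · exact eigOn_erase_inf_le A lam hv
  have hwit : ∃ y' ∈ eigOn A lam (S.erase v), phiAt A lam v y' ≠ 0 := by
    refine ⟨y, hy, ?_⟩
    rw [phiAt_apply, hyv0]
    simpa using hyv
  have hfin := finrank_inf_ker_eq (eigOn A lam (S.erase v)) (phiAt A lam v) hwit
  unfold mOn
  rw [hEeq]
  omega

lemma mOn_empty : mOn A lam ∅ = 0 := by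
  have : eigOn A lam ∅ = ⊥ := by
    apply le_antisymm
    · rintro x ⟨hx0, _⟩
      have : x = 0 := funext fun i => hx0 i (Finset.notMem_empty i)
      simp [this]
    · exact bot_le
  rw [mOn, this, finrank_bot]

lemma mulVec_eq_zero_on (x : Fin N → ℝ) (i : Fin N)
    (h : ∀ j, A i j = 0 ∨ x j = 0) : A.mulVec x i = 0 := by
  unfold Matrix.mulVec dotProduct
  apply Finset.sum_eq_zero
  intro j _
  rcases h j with h | h <;> simp [h]

lemma mOn_split (hsymm : A.IsSymm) {S C : Finset (Fin N)} (hCS : C ⊆ S)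
    (hsep : ∀ i ∈ C, ∀ j ∈ S \ C, A i j = 0) :
    mOn A lam S = mOn A lam C + mOn A lam (S \ C) := by
  have hsymm' : ∀ i j, A i j = A j i := by
    intro i j
    have := congrFun (congrFun hsymm j) i
    simpa [Matrix.transpose_apply] using this
  have hsep2 : ∀ i ∈ S \ C, ∀ j ∈ C, A i j = 0 := by
    intro i hi j hj
    rw [hsymm' i j]
    exact hsep j hj i hi
  have hCle : eigOn A lam C ≤ eigOn A lam S := by
    rintro x ⟨hx0, hxe⟩
    refine ⟨fun i hi => hx0 i (fun h => hi (hCS h)), fun i hi => ?_⟩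
    by_cases hiC : i ∈ C
    · exact hxe i hiC
    · have hzero : A.mulVec x i = 0 := by
        apply mulVec_eq_zero_on
        intro j
        by_cases hjC : j ∈ C
        · exact Or.inl (hsep2 i (Finset.mem_sdiff.mpr ⟨hi, hiC⟩) j hjC)
        · exact Or.inr (hx0 j hjC)
      rw [hzero, hx0 i hiC, mul_zero]
  have hRle : eigOn A lam (S \ C) ≤ eigOn A lam S := by
    rintro x ⟨hx0, hxe⟩
    refine ⟨fun i hi => hx0 i (fun h => hi (Finset.mem_sdiff.mp h).1), fun i hi => ?_⟩
    by_cases hiR : i ∈ S \ C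
    · exact hxe i hiR
    · have hiC : i ∈ C := by
        rcases Finset.mem_sdiff.not.mp hiR with h
        by_contra hc
        exact h ⟨hi, hc⟩
      have hzero : A.mulVec x i = 0 := by
        apply mulVec_eq_zero_on
        intro j
        by_cases hjR : j ∈ S \ C
        · exact Or.inl (hsep i hiC j hjR)
        · exact Or.inr (hx0 j hjR)
      rw [hzero, hx0 i hiR, mul_zero]
  have hsup : eigOn A lam C ⊔ eigOn A lam (S \ C) = eigOn A lam S := by
    apply le_antisymm (sup_le hCle hRle)
    intro x hx
    obtain ⟨hx0, hxe⟩ := (mem_eigOn A lam).mp hx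
    set xC : Fin N → ℝ := fun i => if i ∈ C then x i else 0 with hxC
    set xR : Fin N → ℝ := fun i => if i ∈ S \ C then x i else 0 with hxR
    have hdecomp : x = xC + xR := by
      funext i
      show x i = (if i ∈ C then x i else 0) + (if i ∈ S \ C then x i else 0)
      by_cases hiC : i ∈ C
      · rw [if_pos hiC, if_neg (fun h => (Finset.mem_sdiff.mp h).2 hiC), add_zero]
      · rw [if_neg hiC]
        by_cases hiS : i ∈ S
        · rw [if_pos (Finset.mem_sdiff.mpr ⟨hiS, hiC⟩), zero_add]
        · rw [if_neg (fun h => hiS (Finset.mem_sdiff.mp h).1), hx0 i hiS, add_zero]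
    have hmv : ∀ i, A.mulVec x i = A.mulVec xC i + A.mulVec xR i := by
      intro i
      rw [hdecomp, Matrix.mulVec_add]
      rfl
    have hxCm : xC ∈ eigOn A lam C := by
      refine ⟨fun i hi => by simp only [hxC]; rw [if_neg hi], fun i hi => ?_⟩
      have hR0 : A.mulVec xR i = 0 := by
        apply mulVec_eq_zero_on
        intro j
        by_cases hjR : j ∈ S \ C
        · exact Or.inl (hsep i hi j hjR)
        · exact Or.inr (by simp only [hxR]; rw [if_neg hjR])
      have := hmv i
      rw [hR0, add_zero] at this
      rw [← this, hxe i (hCS hi)]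
      simp only [hxC]
      rw [if_pos hi]
    have hxRm : xR ∈ eigOn A lam (S \ C) := by
      refine ⟨fun i hi => by simp only [hxR]; rw [if_neg hi], fun i hi => ?_⟩
      have hC0 : A.mulVec xC i = 0 := by
        apply mulVec_eq_zero_on
        intro j
        by_cases hjC : j ∈ C
        · exact Or.inl (hsep2 i hi j hjC)
        · exact Or.inr (by simp only [hxC]; rw [if_neg hjC])
      have := hmv i
      rw [hC0, zero_add] at this
      rw [← this, hxe i (Finset.mem_sdiff.mp hi).1]
      simp only [hxR]
      rw [if_pos hi]
    rw [hdecomp]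
    exact Submodule.add_mem_sup hxCm hxRm
  have hinf : eigOn A lam C ⊓ eigOn A lam (S \ C) = ⊥ := by
    apply le_antisymm
    · rintro x ⟨⟨hxC0, _⟩, ⟨hxR0, _⟩⟩
      have : x = 0 := by
        funext i
        by_cases hiC : i ∈ C
        · exact hxR0 i (fun h => (Finset.mem_sdiff.mp h).2 hiC)
        · exact hxC0 i hiC
      simp [this]
    · exact bot_le
  have := Submodule.finrank_sup_add_finrank_inf_eq (eigOn A lam C) (eigOn A lam (S \ C))
  rw [hsup, hinf, finrank_bot] at this
  unfold mOn
  omega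

end Eig

section Graph
variable {N : ℕ} (T : SimpleGraph (Fin N))

/-- connected within `S` -/
def conn (S : Finset (Fin N)) (a b : Fin N) : Prop :=
  ∃ p : T.Walk a b, ∀ x ∈ p.support, x ∈ S

lemma conn.mem_left {S : Finset (Fin N)} {a b : Fin N} (h : conn T S a b) : a ∈ S := by
  obtain ⟨p, hp⟩ := h
  exact hp a p.start_mem_support

lemma conn.mem_right {S : Finset (Fin N)} {a b : Fin N} (h : conn T S a b) : b ∈ S := by
  obtain ⟨p, hp⟩ := h
  exact hp b p.end_mem_support

lemma conn_refl {S : Finset (Fin N)} {a : Fin N} (ha : a ∈ S) : conn T S a a := by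
  refine ⟨SimpleGraph.Walk.nil, ?_⟩
  intro x hx
  simp at hx
  subst hx
  exact ha

lemma conn.symm {S : Finset (Fin N)} {a b : Fin N} (h : conn T S a b) : conn T S b a := by
  obtain ⟨p, hp⟩ := h
  refine ⟨p.reverse, ?_⟩
  intro x hx
  rw [SimpleGraph.Walk.support_reverse, List.mem_reverse] at hx
  exact hp x hx

lemma conn.trans {S : Finset (Fin N)} {a b c : Fin N}
    (h1 : conn T S a b) (h2 : conn T S b c) : conn T S a c := by
  obtain ⟨p, hp⟩ := h1
  obtain ⟨q, hq⟩ := h2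
  refine ⟨p.append q, ?_⟩
  intro x hx
  rw [SimpleGraph.Walk.mem_support_append_iff] at hx
  rcases hx with hx | hx
  · exact hp x hx
  · exact hq x hx

lemma conn.adj_extend {S : Finset (Fin N)} {a b c : Fin N}
    (h : conn T S a b) (hadj : T.Adj b c) (hc : c ∈ S) : conn T S a c := by
  obtain ⟨p, hp⟩ := h
  refine ⟨p.concat hadj, ?_⟩
  intro x hx
  rw [SimpleGraph.Walk.support_concat, List.mem_append] at hx
  rcases hx with hx | hx
  · exact hp x hx
  · simp at hx
    subst hx
    exact hc

/-- the branch (connected component) of `S - v` containing `w` -/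
noncomputable def branchIn (S : Finset (Fin N)) (v w : Fin N) : Finset (Fin N) :=
  (S.erase v).filter (fun j => conn T (S.erase v) w j)

lemma mem_branchIn_iff {S : Finset (Fin N)} {v w j : Fin N} :
    j ∈ branchIn T S v w ↔ conn T (S.erase v) w j := by
  constructor
  · intro h
    exact (Finset.mem_filter.mp h).2
  · intro h
    exact Finset.mem_filter.mpr ⟨h.mem_right T, h⟩

lemma branchIn_subset {S : Finset (Fin N)} {v w : Fin N} :
    branchIn T S v w ⊆ S.erase v := Finset.filter_subset _ _

lemma self_mem_branchIn {S : Finset (Fin N)} {v w : Fin N} (h : w ∈ S.erase v) :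
    w ∈ branchIn T S v w := (mem_branchIn_iff T).mpr (conn_refl T h)

lemma branchIn_eq_of_mem {S : Finset (Fin N)} {v w x : Fin N}
    (h : x ∈ branchIn T S v w) : branchIn T S v x = branchIn T S v w := by
  have hwx : conn T (S.erase v) w x := (mem_branchIn_iff T).mp h
  ext j
  rw [mem_branchIn_iff, mem_branchIn_iff]
  constructor
  · intro hxj
    exact hwx.trans T hxj
  · intro hwj
    exact (hwx.symm T).trans T hwj

lemma adj_mem_branchIn {S : Finset (Fin N)} {v w i j : Fin N}
    (hi : i ∈ branchIn T S v w) (hj : j ∈ S.erase v) (hadj : T.Adj i j) :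
    j ∈ branchIn T S v w := by
  rw [mem_branchIn_iff] at hi ⊢
  exact hi.adj_extend T hadj hj

def SConn (S : Finset (Fin N)) : Prop := ∀ a ∈ S, ∀ b ∈ S, conn T S a b

lemma support_mem_branchIn {S : Finset (Fin N)} {v w j : Fin N}
    (p : T.Walk w j) (hp : ∀ x ∈ p.support, x ∈ S.erase v) :
    ∀ x ∈ p.support, x ∈ branchIn T S v w := by
  intro x hx
  rw [mem_branchIn_iff]
  exact ⟨p.takeUntil x hx, fun y hy =>
    hp y (SimpleGraph.Walk.support_takeUntil_subset _ hx hy)⟩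

lemma branchIn_sconn {S : Finset (Fin N)} {v w : Fin N} :
    SConn T (branchIn T S v w) := by
  intro a ha b hb
  obtain ⟨p, hp⟩ := (mem_branchIn_iff T).mp ha
  obtain ⟨q, hq⟩ := (mem_branchIn_iff T).mp hb
  exact (conn.symm T ⟨p, support_mem_branchIn T p hp⟩).trans T
    ⟨q, support_mem_branchIn T q hq⟩

lemma exists_attach {S : Finset (Fin N)} (hconn : SConn T S) {v x : Fin N}
    (hv : v ∈ S) (hx : x ∈ S.erase v) :
    ∃ nb, T.Adj v nb ∧ x ∈ branchIn T S v nb := by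
  have hxv : x ≠ v := (Finset.mem_erase.mp hx).1
  have hxS : x ∈ S := (Finset.mem_erase.mp hx).2
  obtain ⟨p0, hp0⟩ := hconn x hxS v hv
  set q : T.Path x v := p0.toPath with hqdef
  have hqS : ∀ y ∈ (q : T.Walk x v).support, y ∈ S := fun y hy =>
    hp0 y (SimpleGraph.Walk.support_toPath_subset p0 hy)
  set r : T.Walk v x := (q : T.Walk x v).reverse with hrdef
  have hrP : r.IsPath := q.2.reverse
  have hrS : ∀ y ∈ r.support, y ∈ S := by
    intro y hy
    rw [hrdef, SimpleGraph.Walk.support_reverse, List.mem_reverse] at hy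
    exact hqS y hy
  have hrnil : ¬ r.Nil := by
    intro hnil
    rw [SimpleGraph.Walk.nil_iff_length_eq] at hnil
    exact hxv (SimpleGraph.Walk.eq_of_length_eq_zero hnil).symm
  obtain ⟨nb, hadj, r', hr'⟩ := SimpleGraph.Walk.not_nil_iff.mp hrnil
  have hvnot : v ∉ r'.support := by
    have := hrP.2
    rw [hr'] at this
    simp only [SimpleGraph.Walk.support_cons] at this
    exact (List.nodup_cons.mp this).1
  refine ⟨nb, hadj, (mem_branchIn_iff T).mpr ⟨r', ?_⟩⟩
  intro y hy
  refine Finset.mem_erase.mpr ⟨?_, ?_⟩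
  · rintro rfl
    exact hvnot hy
  · apply hrS
    rw [hr', SimpleGraph.Walk.support_cons]
    exact List.mem_cons_of_mem _ hy

lemma attach_unique (hT : T.IsTree) {S : Finset (Fin N)} {v w j : Fin N}
    (hw : T.Adj v w) (hj : j ∈ branchIn T S v w) (hadj : T.Adj v j) : j = w := by
  obtain ⟨p0, hp0⟩ := (mem_branchIn_iff T).mp hj
  set q : T.Path w j := p0.toPath with hqdef
  have hqS : ∀ y ∈ (q : T.Walk w j).support, y ∈ S.erase v := fun y hy =>
    hp0 y (SimpleGraph.Walk.support_toPath_subset p0 hy)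
  have hvq : v ∉ (q : T.Walk w j).support := by
    intro hy
    exact Finset.notMem_erase v S (hqS v hy)
  have hpath1 : (SimpleGraph.Walk.cons hw (q : T.Walk w j)).IsPath :=
    (SimpleGraph.Walk.cons_isPath_iff _ _).mpr ⟨q.2, hvq⟩
  have hpath2 : (SimpleGraph.Walk.cons hadj (SimpleGraph.Walk.nil)).IsPath := by
    simp [SimpleGraph.Walk.cons_isPath_iff, hadj.ne]
  obtain ⟨up, _, huniq⟩ := hT.existsUnique_path v j
  have heq : SimpleGraph.Walk.cons hw (q : T.Walk w j)
      = SimpleGraph.Walk.cons hadj (SimpleGraph.Walk.nil) := by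
    rw [huniq _ hpath1, huniq _ hpath2]
  have hlen := congrArg SimpleGraph.Walk.length heq
  simp only [SimpleGraph.Walk.length_cons, SimpleGraph.Walk.length_nil] at hlen
  have hq0 : (q : T.Walk w j).length = 0 := by omega
  exact (SimpleGraph.Walk.eq_of_length_eq_zero hq0).symm

lemma walk_zero_pair (x : Fin N → ℝ) (S : Finset (Fin N)) :
    ∀ {a b : Fin N} (p : T.Walk a b), (∀ y ∈ p.support, y ∈ S) →
      x a ≠ 0 → x b = 0 →
      ∃ v w, v ∈ S ∧ w ∈ S ∧ T.Adj w v ∧ x w ≠ 0 ∧ x v = 0 := by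
  intro a b p
  induction p with
  | nil =>
    intro _ ha hb
    exact absurd hb ha
  | @cons a c b h q ih =>
    intro hsup ha hb
    by_cases hc : x c = 0
    · refine ⟨c, a, ?_, ?_, h, ha, hc⟩
      · apply hsup
        rw [SimpleGraph.Walk.support_cons]
        exact List.mem_cons_of_mem _ q.start_mem_support
      · apply hsup
        rw [SimpleGraph.Walk.support_cons]
        exact List.mem_cons_self
    · exact ih (fun y hy => hsup y (by
        rw [SimpleGraph.Walk.support_cons]
        exact List.mem_cons_of_mem _ hy)) hc hb

lemma sconn_univ (hT : T.IsTree) : SConn T (Finset.univ : Finset (Fin N)) := by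
  intro a _ b _
  obtain ⟨p⟩ := hT.isConnected.preconnected a b
  exact ⟨p, fun y _ => Finset.mem_univ y⟩

end Graph

section Mixed
variable {N : ℕ} (T : SimpleGraph (Fin N)) (A : Matrix (Fin N) (Fin N) ℝ) (lam : ℝ)

lemma sep_branch (hgraph : ∀ i j : Fin N, i ≠ j → (A i j ≠ 0 ↔ T.Adj i j))
    {S : Finset (Fin N)} {v w i j : Fin N}
    (hi : i ∈ branchIn T S v w) (hj : j ∈ S.erase v) (hjB : j ∉ branchIn T S v w) :
    A i j = 0 := by
  by_contra h
  have hne : i ≠ j := fun he => hjB (he ▸ hi)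
  exact hjB (adj_mem_branchIn T hi hj ((hgraph i j hne).mp h))

lemma mOn_split_branch (hsymm : A.IsSymm)
    (hgraph : ∀ i j : Fin N, i ≠ j → (A i j ≠ 0 ↔ T.Adj i j))
    {S U : Finset (Fin N)} {v w : Fin N}
    (hU : U ⊆ S.erase v) (hBU : branchIn T S v w ⊆ U) :
    mOn A lam U
      = mOn A lam (branchIn T S v w) + mOn A lam (U \ branchIn T S v w) :=
  mOn_split A lam hsymm hBU (fun i hi j hj =>
    sep_branch T A hgraph hi (hU (Finset.mem_sdiff.mp hj).1) (Finset.mem_sdiff.mp hj).2)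

lemma mem_branch_congr {S : Finset (Fin N)} {v a z j : Fin N}
    (hza : z ∈ branchIn T S v a) (hjz : j ∈ branchIn T S v z) :
    j ∈ branchIn T S v a := by
  rw [← branchIn_eq_of_mem T hza]
  exact hjz

lemma branch_disjoint {S : Finset (Fin N)} {v a b z : Fin N}
    (hb : b ∉ branchIn T S v a)
    (hza : z ∈ branchIn T S v a) (hzb : z ∈ branchIn T S v b) : False := by
  have h1 : branchIn T S v z = branchIn T S v a := branchIn_eq_of_mem T hza
  have h2 : branchIn T S v z = branchIn T S v b := branchIn_eq_of_mem T hzb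
  have hbS : b ∈ S.erase v := by
    have := (mem_branchIn_iff T).mp hzb
    exact this.mem_left T
  exact hb (h1 ▸ h2.symm ▸ self_mem_branchIn T hbS)

lemma mOn_zero_of_branches (hsymm : A.IsSymm)
    (hgraph : ∀ i j : Fin N, i ≠ j → (A i j ≠ 0 ↔ T.Adj i j))
    {S : Finset (Fin N)} {v : Fin N} :
    ∀ (k : ℕ) (U : Finset (Fin N)), U.card ≤ k → U ⊆ S.erase v →
      (∀ x ∈ U, branchIn T S v x ⊆ U) →
      (∀ x ∈ U, mOn A lam (branchIn T S v x) = 0) → mOn A lam U = 0 := by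
  intro k
  induction k with
  | zero =>
    intro U hcard _ _ _
    have : U = ∅ := Finset.card_eq_zero.mp (Nat.le_zero.mp hcard)
    rw [this]
    exact mOn_empty A lam
  | succ k ih =>
    intro U hcard hUsub hclosed hzero
    rcases U.eq_empty_or_nonempty with rfl | ⟨x, hx⟩
    · exact mOn_empty A lam
    · have hB : branchIn T S v x ⊆ U := hclosed x hx
      have hxB : x ∈ branchIn T S v x := self_mem_branchIn T (hUsub hx)
      have hsplit := mOn_split_branch T A lam hsymm hgraph (w := x) hUsub hB
      have hz := hzero x hx
      have hUB : (U \ branchIn T S v x) ⊂ U := by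
        refine Finset.ssubset_iff_of_subset (Finset.sdiff_subset) |>.mpr ?_
        exact ⟨x, hx, fun hmem => (Finset.mem_sdiff.mp hmem).2 hxB⟩
      have hrec : mOn A lam (U \ branchIn T S v x) = 0 := by
        apply ih
        · have := Finset.card_lt_card hUB
          omega
        · exact Finset.Subset.trans (Finset.sdiff_subset) hUsub
        · intro y hy
          intro z hz'
          have hyU := (Finset.mem_sdiff.mp hy).1
          have hyB := (Finset.mem_sdiff.mp hy).2
          refine Finset.mem_sdiff.mpr ⟨hclosed y hyU hz', fun hzB => ?_⟩
          exact branch_disjoint T (v := v) (a := x) (b := y) hyB hzB hz'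
        · intro y hy
          exact hzero y (Finset.mem_sdiff.mp hy).1
      omega

lemma branch_witness (hsymm : A.IsSymm)
    (hgraph : ∀ i j : Fin N, i ≠ j → (A i j ≠ 0 ↔ T.Adj i j)) (hT : T.IsTree)
    {S : Finset (Fin N)} {v w : Fin N}
    (hv : v ∈ S) (hAdj : T.Adj v w) {x : Fin N → ℝ}
    (hx : x ∈ eigOn A lam S) (hxv : x v = 0) (hxw : x w ≠ 0) :
    ∃ y ∈ eigOn A lam (S.erase v), A.mulVec y v ≠ 0 := by
  obtain ⟨hx0, hxe⟩ := (mem_eigOn A lam).mp hx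
  have hsymm' : ∀ i j, A i j = A j i := by
    intro i j
    have := congrFun (congrFun hsymm j) i
    simpa [Matrix.transpose_apply] using this
  have hwS : w ∈ S := by
    by_contra h
    exact hxw (hx0 w h)
  have hwE : w ∈ S.erase v := Finset.mem_erase.mpr ⟨hAdj.ne', hwS⟩
  set B := branchIn T S v w with hBdef
  have hwB : w ∈ B := self_mem_branchIn T hwE
  have hvB : v ∉ B := fun h => Finset.notMem_erase v S (branchIn_subset T h)
  set y : Fin N → ℝ := fun i => if i ∈ B then x i else 0 with hydef
  have hy0 : ∀ i, i ∉ S.erase v → y i = 0 := by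
    intro i hi
    have : i ∉ B := fun h => hi (branchIn_subset T h)
    simp only [hydef]
    rw [if_neg this]
  have hye : ∀ i ∈ S.erase v, A.mulVec y i = lam * y i := by
    intro i hi
    by_cases hiB : i ∈ B
    · have hxmy : A.mulVec (fun j => x j - y j) i = 0 := by
        apply mulVec_eq_zero_on
        intro j
        by_cases hjB : j ∈ B
        · right; simp only [hydef]; rw [if_pos hjB]; ring
        · by_cases hjv : j = v
          · right; subst hjv; simp only [hydef]; rw [if_neg hvB, hxv]; ring
          · by_cases hjS : j ∈ S
            · exact Or.inl (sep_branch T A hgraph hiB (Finset.mem_erase.mpr ⟨hjv, hjS⟩) hjB)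
            · right; simp only [hydef]; rw [if_neg hjB, hx0 j hjS]; ring
      have hdecomp : x = y + (fun j => x j - y j) := by
        funext j
        simp
      have hmv : A.mulVec x i = A.mulVec y i + A.mulVec (fun j => x j - y j) i := by
        conv_lhs => rw [hdecomp]
        rw [Matrix.mulVec_add]
        rfl
      rw [hxmy, add_zero] at hmv
      rw [← hmv, hxe i (Finset.mem_erase.mp hi).2]
      simp only [hydef]
      rw [if_pos hiB]
    · have h0 : A.mulVec y i = 0 := by
        apply mulVec_eq_zero_on
        intro j
        by_cases hjB : j ∈ B
        · left
          rw [hsymm' i j]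
          exact sep_branch T A hgraph hjB hi hiB
        · right; simp only [hydef]; rw [if_neg hjB]
      rw [h0]
      simp only [hydef]
      rw [if_neg hiB, mul_zero]
  have hsum : A.mulVec y v = A v w * x w := by
    unfold Matrix.mulVec dotProduct
    rw [Finset.sum_eq_single_of_mem w (Finset.mem_univ w)]
    · simp only [hydef]
      rw [if_pos hwB]
    · intro j _ hjw
      by_cases hjB : j ∈ B
      · have hjv : j ≠ v := (Finset.mem_erase.mp (branchIn_subset T hjB)).1
        have hAvj : A v j = 0 := by
          by_contra h
          have hadj : T.Adj v j := (hgraph v j (Ne.symm hjv)).mp h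
          exact hjw (attach_unique T hT hAdj hjB hadj)
        show A v j * y j = 0
        rw [hAvj, zero_mul]
      · show A v j * y j = 0
        simp only [hydef]
        rw [if_neg hjB, mul_zero]
  refine ⟨y, (mem_eigOn A lam).mpr ⟨hy0, hye⟩, ?_⟩
  rw [hsum]
  exact mul_ne_zero ((hgraph v w hAdj.ne).mpr hAdj) hxw

lemma exists_parter_vertex (hsymm : A.IsSymm)
    (hgraph : ∀ i j : Fin N, i ≠ j → (A i j ≠ 0 ↔ T.Adj i j)) (hT : T.IsTree)
    {S : Finset (Fin N)} (hSconn : SConn T S) (hm : 2 ≤ mOn A lam S) :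
    ∃ v ∈ S, mOn A lam (S.erase v) = mOn A lam S + 1 := by
  have hSne : S.Nonempty := by
    rcases S.eq_empty_or_nonempty with rfl | h
    · rw [mOn_empty] at hm; omega
    · exact h
  obtain ⟨v₀, hv₀⟩ := hSne
  have h1 := finrank_le_inf_ker (eigOn A lam S)
    (LinearMap.proj (R := ℝ) (φ := fun _ : Fin N => ℝ) v₀)
  have hpos : 0 < Module.finrank ℝ
      (eigOn A lam S ⊓ LinearMap.ker (LinearMap.proj (R := ℝ)
        (φ := fun _ : Fin N => ℝ) v₀) : Submodule ℝ _) := by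
    have : 2 ≤ Module.finrank ℝ (eigOn A lam S) := hm
    omega
  have hne : (eigOn A lam S ⊓ LinearMap.ker (LinearMap.proj (R := ℝ)
      (φ := fun _ : Fin N => ℝ) v₀) : Submodule ℝ _) ≠ ⊥ := by
    intro h
    rw [h, finrank_bot] at hpos
    omega
  obtain ⟨x, hxmem, hxne⟩ := Submodule.ne_bot_iff _ |>.mp hne
  obtain ⟨hxE, hxv₀⟩ := Submodule.mem_inf.mp hxmem
  have hxv₀' : x v₀ = 0 := hxv₀
  obtain ⟨hx0, hxe⟩ := (mem_eigOn A lam).mp hxE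
  obtain ⟨w', hw'⟩ := Function.ne_iff.mp hxne
  have hw'S : w' ∈ S := by
    by_contra h
    exact hw' (hx0 w' h)
  obtain ⟨p, hp⟩ := hSconn w' hw'S v₀ hv₀
  obtain ⟨v, w, hvS, hwS, hadj, hxw, hxv⟩ :=
    walk_zero_pair T x S p hp hw' hxv₀'
  obtain ⟨y, hy, hyv⟩ := branch_witness T A lam hsymm hgraph hT hvS hadj.symm hxE hxv hxw
  exact ⟨v, hvS, parter_linear A lam hsymm hvS hy hyv⟩

/-- three components of `S - u` carrying the eigenvalue -/
def Dec3 (S : Finset (Fin N)) (u : Fin N) : Prop :=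
  ∃ w₁ w₂ w₃ : Fin N, w₁ ∈ S.erase u ∧ w₂ ∈ S.erase u ∧ w₃ ∈ S.erase u ∧
    w₂ ∉ branchIn T S u w₁ ∧ w₃ ∉ branchIn T S u w₁ ∧ w₃ ∉ branchIn T S u w₂ ∧
    1 ≤ mOn A lam (branchIn T S u w₁) ∧ 1 ≤ mOn A lam (branchIn T S u w₂) ∧
    1 ≤ mOn A lam (branchIn T S u w₃)

/-- two components of `S - u` carrying the eigenvalue -/
def Dec2 (S : Finset (Fin N)) (u : Fin N) : Prop :=
  ∃ w₁ w₂ : Fin N, w₁ ∈ S.erase u ∧ w₂ ∈ S.erase u ∧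
    w₂ ∉ branchIn T S u w₁ ∧
    1 ≤ mOn A lam (branchIn T S u w₁) ∧ 1 ≤ mOn A lam (branchIn T S u w₂)

lemma dichotomy (hsymm : A.IsSymm)
    (hgraph : ∀ i j : Fin N, i ≠ j → (A i j ≠ 0 ↔ T.Adj i j))
    {S : Finset (Fin N)} {v : Fin N}
    (hm : 2 ≤ mOn A lam S)
    (hparter : mOn A lam (S.erase v) = mOn A lam S + 1) :
    Dec3 T A lam S v ∨
      ∃ c₀ ∈ S.erase v, 2 ≤ mOn A lam (branchIn T S v c₀) ∧
        (mOn A lam (branchIn T S v c₀) ≤ mOn A lam S ∨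
          ∀ x ∈ S.erase v, 1 ≤ mOn A lam (branchIn T S v x) →
            x ∈ branchIn T S v c₀) := by
  set W := (S.erase v).filter (fun x => 1 ≤ mOn A lam (branchIn T S v x)) with hWdef
  have hWne : W.Nonempty := by
    by_contra h
    rw [Finset.not_nonempty_iff_eq_empty] at h
    have hzero : mOn A lam (S.erase v) = 0 := by
      apply mOn_zero_of_branches T A lam hsymm hgraph (S := S) (v := v)
        (S.erase v).card (S.erase v) le_rfl (Finset.Subset.refl _)
        (fun x _ => branchIn_subset T)
      intro x hx
      by_contra hxm
      have : x ∈ W := Finset.mem_filter.mpr ⟨hx, by omega⟩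
      rw [h] at this
      exact absurd this (Finset.notMem_empty x)
    omega
  obtain ⟨w₁, hw₁⟩ := hWne
  have hw₁E : w₁ ∈ S.erase v := (Finset.mem_filter.mp hw₁).1
  have hw₁m : 1 ≤ mOn A lam (branchIn T S v w₁) := (Finset.mem_filter.mp hw₁).2
  have hsplit1 := mOn_split_branch T A lam hsymm hgraph (w := w₁)
    (Finset.Subset.refl (S.erase v)) (branchIn_subset T)
  by_cases hW1 : ∀ x ∈ W, x ∈ branchIn T S v w₁
  · right
    have hrest : mOn A lam ((S.erase v) \ branchIn T S v w₁) = 0 := by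
      apply mOn_zero_of_branches T A lam hsymm hgraph (S := S) (v := v)
        _ _ le_rfl (Finset.Subset.trans Finset.sdiff_subset (Finset.Subset.refl _))
      · intro y hy z hz
        have hyE := (Finset.mem_sdiff.mp hy).1
        have hyB := (Finset.mem_sdiff.mp hy).2
        refine Finset.mem_sdiff.mpr ⟨branchIn_subset T hz, fun hzB => ?_⟩
        exact branch_disjoint T hyB hzB hz
      · intro y hy
        by_contra hym
        have hyW : y ∈ W := Finset.mem_filter.mpr ⟨(Finset.mem_sdiff.mp hy).1, by omega⟩
        exact (Finset.mem_sdiff.mp hy).2 (hW1 y hyW)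
    refine ⟨w₁, hw₁E, by omega, Or.inr ?_⟩
    intro x hxE hxm
    exact hW1 x (Finset.mem_filter.mpr ⟨hxE, hxm⟩)
  · push_neg at hW1
    obtain ⟨w₂, hw₂W, hw₂B⟩ := hW1
    have hw₂E : w₂ ∈ S.erase v := (Finset.mem_filter.mp hw₂W).1
    have hw₂m : 1 ≤ mOn A lam (branchIn T S v w₂) := (Finset.mem_filter.mp hw₂W).2
    by_cases hW2 : ∀ x ∈ W, x ∈ branchIn T S v w₁ ∨ x ∈ branchIn T S v w₂
    · right
      have hB2sub : branchIn T S v w₂ ⊆ (S.erase v) \ branchIn T S v w₁ := by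
        intro z hz
        exact Finset.mem_sdiff.mpr ⟨branchIn_subset T hz,
          fun hz1 => branch_disjoint T hw₂B hz1 hz⟩
      have hsplit2 := mOn_split_branch T A lam hsymm hgraph (w := w₂)
        (Finset.Subset.trans Finset.sdiff_subset (Finset.Subset.refl _)) hB2sub
      have hrest : mOn A lam
          (((S.erase v) \ branchIn T S v w₁) \ branchIn T S v w₂) = 0 := by
        apply mOn_zero_of_branches T A lam hsymm hgraph (S := S) (v := v)
          _ _ le_rfl
          (Finset.Subset.trans Finset.sdiff_subset Finset.sdiff_subset)
        · intro y hy z hz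
          have hy1 := Finset.mem_sdiff.mp hy
          have hy2 := Finset.mem_sdiff.mp hy1.1
          refine Finset.mem_sdiff.mpr ⟨Finset.mem_sdiff.mpr
            ⟨branchIn_subset T hz, fun hz1 => branch_disjoint T hy2.2 hz1 hz⟩,
            fun hz2 => branch_disjoint T hy1.2 hz2 hz⟩
        · intro y hy
          by_contra hym
          have hy1 := Finset.mem_sdiff.mp hy
          have hy2 := Finset.mem_sdiff.mp hy1.1
          have hyW : y ∈ W := Finset.mem_filter.mpr ⟨hy2.1, by omega⟩
          rcases hW2 y hyW with h | h
          · exact hy2.2 h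
          · exact hy1.2 h
      by_cases hc : 2 ≤ mOn A lam (branchIn T S v w₁)
      · exact ⟨w₁, hw₁E, hc, Or.inl (by omega)⟩
      · refine ⟨w₂, hw₂E, by omega, Or.inl (by omega)⟩
    · left
      push_neg at hW2
      obtain ⟨w₃, hw₃W, hw₃1, hw₃2⟩ := hW2
      exact ⟨w₁, w₂, w₃, hw₁E, hw₂E, (Finset.mem_filter.mp hw₃W).1,
        hw₂B, hw₃1, hw₃2, hw₁m, hw₂m, (Finset.mem_filter.mp hw₃W).2⟩

lemma walk_confined {U Wc : Finset (Fin N)}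
    (hclosed : ∀ j ∈ Wc, ∀ k ∈ U, T.Adj j k → k ∈ Wc) :
    ∀ {a y : Fin N} (p : T.Walk a y), (∀ z ∈ p.support, z ∈ U) → a ∈ Wc → y ∈ Wc := by
  intro a y p
  induction p with
  | nil => intro _ h; exact h
  | @cons a c y h q ih =>
    intro hsup ha
    have hcU : c ∈ U := hsup c (by
      rw [SimpleGraph.Walk.support_cons]
      exact List.mem_cons_of_mem _ q.start_mem_support)
    exact ih (fun z hz => hsup z (by
      rw [SimpleGraph.Walk.support_cons]
      exact List.mem_cons_of_mem _ hz)) (hclosed a ha c hcU h)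

lemma glue (hsymm : A.IsSymm)
    (hgraph : ∀ i j : Fin N, i ≠ j → (A i j ≠ 0 ↔ T.Adj i j)) (hT : T.IsTree)
    {S : Finset (Fin N)} (hSconn : SConn T S) {v c₀ u' : Fin N}
    (hv : v ∈ S) (hc₀ : c₀ ∈ S.erase v)
    (hparter : mOn A lam (S.erase v) = mOn A lam S + 1)
    (hu' : u' ∈ branchIn T S v c₀)
    (hCpart : mOn A lam ((branchIn T S v c₀).erase u')
      = mOn A lam (branchIn T S v c₀) + 1)
    (hdec : Dec3 T A lam (branchIn T S v c₀) u') :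
    mOn A lam (S.erase u') = mOn A lam S + 1 ∧
      (Dec3 T A lam S u' ∨
        (mOn A lam (branchIn T S v c₀) = mOn A lam S + 1 ∧ Dec2 T A lam S u')) := by
  classical
  have hsymm' : ∀ i j, A i j = A j i := by
    intro i j
    have := congrFun (congrFun hsymm j) i
    simpa [Matrix.transpose_apply] using this
  set C := branchIn T S v c₀ with hCdef
  obtain ⟨b₀, hb₀adj, hc₀b⟩ := exists_attach T hSconn hv hc₀
  have hCb : C = branchIn T S v b₀ := branchIn_eq_of_mem T hc₀b
  have hb₀E : b₀ ∈ S.erase v := ((mem_branchIn_iff T).mp hc₀b).mem_left T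
  have hb₀C : b₀ ∈ C := by
    rw [hCb]
    exact self_mem_branchIn T hb₀E
  have hCsub : C ⊆ S.erase v := branchIn_subset T
  have hu'E : u' ∈ S.erase v := hCsub hu'
  have hu'S : u' ∈ S := (Finset.mem_erase.mp hu'E).2
  have hu'v : u' ≠ v := (Finset.mem_erase.mp hu'E).1
  have hvu' : v ∈ S.erase u' := Finset.mem_erase.mpr ⟨Ne.symm hu'v, hv⟩
  have hvC : v ∉ C := fun h => Finset.notMem_erase v S (hCsub h)
  have hCeSe : C.erase u' ⊆ S.erase u' := by
    intro z hz
    exact Finset.mem_erase.mpr ⟨(Finset.mem_erase.mp hz).1,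
      (Finset.mem_erase.mp (hCsub (Finset.mem_erase.mp hz).2)).2⟩
  have hF1 : ∀ i ∈ C, ∀ j ∈ S, j ∉ C → A i j ≠ 0 → j = v ∧ i = b₀ := by
    intro i hi j hjS hjC hne0
    have hij : i ≠ j := fun h => hjC (h ▸ hi)
    have hadj : T.Adj i j := (hgraph _ _ hij).mp hne0
    by_cases hjv : j = v
    · subst hjv
      refine ⟨rfl, ?_⟩
      rw [hCb] at hi
      exact attach_unique T hT hb₀adj hi hadj.symm
    · exfalso
      have := sep_branch T A hgraph (hCb ▸ hi : i ∈ branchIn T S v b₀)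
        (Finset.mem_erase.mpr ⟨hjv, hjS⟩) (fun h => hjC (hCb ▸ h))
      exact hne0 this
  set Cs := branchIn T C u' b₀ with hCsdef
  have hCs_sub : Cs ⊆ C.erase u' := branchIn_subset T
  have hCsC : ∀ i ∈ Cs, i ∈ C := fun i hi => (Finset.mem_erase.mp (hCs_sub hi)).2
  have hclosure : ∀ x, x ∈ C.erase u' → x ∉ Cs →
      ∀ j ∈ branchIn T C u' x, ∀ k ∈ S.erase u', T.Adj j k →
        k ∈ branchIn T C u' x := by
    intro x hx hxCs j hj k hk hadj
    have hjCe : j ∈ C.erase u' := branchIn_subset T hj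
    by_cases hkC : k ∈ C
    · exact adj_mem_branchIn T hj
        (Finset.mem_erase.mpr ⟨(Finset.mem_erase.mp hk).1, hkC⟩) hadj
    · exfalso
      have hjk : j ≠ k := fun h => hkC (h ▸ (Finset.mem_erase.mp hjCe).2)
      have hne0 : A j k ≠ 0 := (hgraph j k hjk).mpr hadj
      obtain ⟨_, hjb⟩ := hF1 j (Finset.mem_erase.mp hjCe).2 k
        (Finset.mem_erase.mp hk).2 hkC hne0
      rw [hjb] at hj
      have heq : Cs = branchIn T C u' x := branchIn_eq_of_mem T hj
      exact hxCs (heq ▸ self_mem_branchIn T hx)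
  have htransfer : ∀ x, x ∈ C.erase u' → x ∉ Cs →
      branchIn T S u' x = branchIn T C u' x := by
    intro x hx hxCs
    apply Finset.Subset.antisymm
    · intro j hj
      obtain ⟨p, hp⟩ := (mem_branchIn_iff T).mp hj
      exact walk_confined T (hclosure x hx hxCs) p hp (self_mem_branchIn T hx)
    · intro j hj
      rw [mem_branchIn_iff] at hj ⊢
      obtain ⟨p, hp⟩ := hj
      exact ⟨p, fun z hz => hCeSe (hp z hz)⟩
  set R := (S.erase v) \ C with hRdef
  set D := branchIn T S u' v with hDdef
  have hvD : v ∈ D := self_mem_branchIn T hvu'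
  have hDsub : D ⊆ S.erase u' := branchIn_subset T
  have hR_D : ∀ x ∈ R, x ∈ D := by
    intro x hx
    have hxE : x ∈ S.erase v := (Finset.mem_sdiff.mp hx).1
    have hxC : x ∉ C := (Finset.mem_sdiff.mp hx).2
    obtain ⟨n, hnadj, hxn⟩ := exists_attach T hSconn hv hxE
    have hnE : n ∈ S.erase v := ((mem_branchIn_iff T).mp hxn).mem_left T
    have hbrC : ∀ z, z ∈ branchIn T S v n → z ∉ C := by
      intro z hz hzC
      have h1 : branchIn T S v z = branchIn T S v n := branchIn_eq_of_mem T hz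
      have h2 : branchIn T S v z = branchIn T S v c₀ := branchIn_eq_of_mem T hzC
      exact hxC (hCdef ▸ (h2 ▸ (h1.symm ▸ hxn)))
    obtain ⟨p, hp⟩ := branchIn_sconn T n (self_mem_branchIn T hnE) x hxn
    rw [hDdef, mem_branchIn_iff]
    refine ⟨SimpleGraph.Walk.cons hnadj p, ?_⟩
    intro z hz
    rw [SimpleGraph.Walk.support_cons] at hz
    rcases List.mem_cons.mp hz with rfl | hz
    · exact hvu'
    · have hzB := hp z hz
      have hzE : z ∈ S.erase v := branchIn_subset T hzB
      refine Finset.mem_erase.mpr ⟨?_, (Finset.mem_erase.mp hzE).2⟩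
      rintro rfl
      exact hbrC z hzB hu'
  have hCs_D : ∀ x ∈ Cs, x ∈ D := by
    intro x hx
    obtain ⟨p, hp⟩ := (mem_branchIn_iff T).mp hx
    rw [hDdef, mem_branchIn_iff]
    refine ⟨SimpleGraph.Walk.cons hb₀adj p, ?_⟩
    intro z hz
    rw [SimpleGraph.Walk.support_cons] at hz
    rcases List.mem_cons.mp hz with rfl | hz
    · exact hvu'
    · exact hCeSe (hp z hz)
  have hDnotC : ∀ x, x ∈ C.erase u' → x ∉ Cs → x ∈ D → False := by
    intro x hx hxCs hxD
    obtain ⟨p, hp⟩ := (mem_branchIn_iff T).mp hxD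
    have hvb := walk_confined T (hclosure x hx hxCs) p.reverse
      (fun z hz => hp z (by
        rw [SimpleGraph.Walk.support_reverse, List.mem_reverse] at hz
        exact hz)) (self_mem_branchIn T hx)
    exact hvC ((Finset.mem_erase.mp (branchIn_subset T hvb)).2)
  have hDE_eq : D.erase v = Cs ∪ R := by
    ext x
    constructor
    · intro hx
      have hxv : x ≠ v := (Finset.mem_erase.mp hx).1
      have hxD : x ∈ D := (Finset.mem_erase.mp hx).2
      have hxSE : x ∈ S.erase u' := hDsub hxD
      by_cases hxC : x ∈ C
      · have hxCe : x ∈ C.erase u' :=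
          Finset.mem_erase.mpr ⟨(Finset.mem_erase.mp hxSE).1, hxC⟩
        by_cases hxCs : x ∈ Cs
        · exact Finset.mem_union_left _ hxCs
        · exact absurd hxD (fun h => hDnotC x hxCe hxCs h)
      · refine Finset.mem_union_right _ (Finset.mem_sdiff.mpr ⟨?_, hxC⟩)
        exact Finset.mem_erase.mpr ⟨hxv, (Finset.mem_erase.mp hxSE).2⟩
    · intro hx
      rcases Finset.mem_union.mp hx with hx | hx
      · refine Finset.mem_erase.mpr ⟨?_, hCs_D x hx⟩
        intro h
        exact hvC (hCsC x hx |> (h ▸ ·)) |>.elim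
      · refine Finset.mem_erase.mpr ⟨?_, hR_D x hx⟩
        intro h
        exact Finset.notMem_erase v S (h ▸ (Finset.mem_sdiff.mp hx).1)
  have hcompl : (S.erase u') \ ((C.erase u') \ Cs) = D := by
    ext x
    constructor
    · intro hx
      have hxSE : x ∈ S.erase u' := (Finset.mem_sdiff.mp hx).1
      have hxnot := (Finset.mem_sdiff.mp hx).2
      by_cases hxv : x = v
      · subst hxv; exact hvD
      · by_cases hxC : x ∈ C
        · have hxCe : x ∈ C.erase u' :=
            Finset.mem_erase.mpr ⟨(Finset.mem_erase.mp hxSE).1, hxC⟩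
          have hxCs : x ∈ Cs := by
            by_contra h
            exact hxnot (Finset.mem_sdiff.mpr ⟨hxCe, h⟩)
          exact hCs_D x hxCs
        · refine hR_D x (Finset.mem_sdiff.mpr ⟨?_, hxC⟩)
          exact Finset.mem_erase.mpr ⟨hxv, (Finset.mem_erase.mp hxSE).2⟩
    · intro hx
      refine Finset.mem_sdiff.mpr ⟨hDsub hx, fun h => ?_⟩
      exact hDnotC x (Finset.mem_sdiff.mp h).1 (Finset.mem_sdiff.mp h).2 hx
  have s1 : mOn A lam (S.erase v) = mOn A lam C + mOn A lam R :=
    mOn_split_branch T A lam hsymm hgraph (w := c₀)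
      (Finset.Subset.refl (S.erase v)) (branchIn_subset T)
  have s2 : mOn A lam (C.erase u')
      = mOn A lam Cs + mOn A lam ((C.erase u') \ Cs) :=
    mOn_split_branch T A lam hsymm hgraph (w := b₀)
      (Finset.Subset.refl (C.erase u')) (branchIn_subset T)
  have hCs_DE : Cs ⊆ D.erase v := by
    rw [hDE_eq]; exact Finset.subset_union_left
  have hDEsd : (D.erase v) \ Cs = R := by
    rw [hDE_eq]
    ext x
    simp only [Finset.mem_sdiff, Finset.mem_union]
    constructor
    · rintro ⟨h1 | h1, h2⟩
      · exact absurd h1 h2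
      · exact h1
    · intro h
      refine ⟨Or.inr h, fun hx => ?_⟩
      exact (Finset.mem_sdiff.mp h).2 (hCsC x hx)
  have s3 : mOn A lam (D.erase v) = mOn A lam Cs + mOn A lam R := by
    have hs := mOn_split A lam hsymm hCs_DE (fun i hi j hj => by
      rw [hDEsd] at hj
      exact sep_branch T A hgraph (hCb ▸ hCsC i hi : i ∈ branchIn T S v b₀)
        (Finset.mem_sdiff.mp hj).1
        (fun h => (Finset.mem_sdiff.mp hj).2 (hCb ▸ h)))
    rw [hDEsd] at hs
    exact hs
  have s4 : mOn A lam (S.erase u')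
      = mOn A lam ((C.erase u') \ Cs) + mOn A lam D := by
    have hsub : (C.erase u') \ Cs ⊆ S.erase u' :=
      fun x hx => hCeSe (Finset.mem_sdiff.mp hx).1
    have hs := mOn_split A lam hsymm hsub (fun i hi j hj => by
      rw [hcompl] at hj
      have hiCe := (Finset.mem_sdiff.mp hi).1
      have hiCs := (Finset.mem_sdiff.mp hi).2
      have hiC : i ∈ C := (Finset.mem_erase.mp hiCe).2
      by_contra hne0
      have hjSE : j ∈ S.erase u' := hDsub hj
      by_cases hjC : j ∈ C
      · have hjCe : j ∈ C.erase u' :=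
          Finset.mem_erase.mpr ⟨(Finset.mem_erase.mp hjSE).1, hjC⟩
        have hjCs : j ∈ Cs := by
          by_contra h
          exact hDnotC j hjCe h hj
        have hz : A j i = 0 := sep_branch T A hgraph hjCs hiCe hiCs
        rw [hsymm' i j, hz] at hne0
        exact hne0 rfl
      · obtain ⟨hjv, hib⟩ := hF1 i hiC j (Finset.mem_erase.mp hjSE).2 hjC hne0
        have hiu' : i ≠ u' := (Finset.mem_erase.mp hiCe).1
        have hb₀Cs : b₀ ∈ Cs :=
          self_mem_branchIn T (Finset.mem_erase.mpr ⟨hib ▸ hiu', hb₀C⟩)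
        exact hiCs (hib ▸ hb₀Cs))
    rw [hcompl] at hs
    exact hs
  have i1 : mOn A lam (S.erase u') ≤ mOn A lam S + 1 := mOn_erase_le A lam S u'
  have i2 : mOn A lam (D.erase v) ≤ mOn A lam D + 1 := mOn_erase_le A lam D v
  have hSE : mOn A lam (S.erase u') = mOn A lam S + 1 := by omega
  have hDeq : mOn A lam D + 1 = mOn A lam Cs + mOn A lam R := by omega
  refine ⟨hSE, ?_⟩
  have hnotvC : ∀ x (hx : x ∈ C.erase u') (hxCs : x ∉ Cs),
      v ∉ branchIn T S u' x := by
    intro x hx hxCs h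
    rw [htransfer x hx hxCs] at h
    exact hvC (Finset.mem_erase.mp (branchIn_subset T h)).2
  have hfinish : ∀ a b : Fin N, a ∈ C.erase u' → b ∈ C.erase u' →
      b ∉ branchIn T C u' a → 1 ≤ mOn A lam (branchIn T C u' a) →
      1 ≤ mOn A lam (branchIn T C u' b) → a ∉ Cs → b ∉ Cs → 1 ≤ mOn A lam Cs →
      Dec3 T A lam S u' ∨ (mOn A lam C = mOn A lam S + 1 ∧ Dec2 T A lam S u') := by
    intro a b ha hb hba ma mb haCs hbCs hmCs
    by_cases hD1 : 1 ≤ mOn A lam D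
    · left
      refine ⟨a, b, v, hCeSe ha, hCeSe hb, hvu', ?_, ?_, ?_, ?_, ?_, ?_⟩
      · rw [htransfer a ha haCs]; exact hba
      · exact hnotvC a ha haCs
      · exact hnotvC b hb hbCs
      · rw [htransfer a ha haCs]; exact ma
      · rw [htransfer b hb hbCs]; exact mb
      · exact hD1
    · right
      refine ⟨by omega, a, b, hCeSe ha, hCeSe hb, ?_, ?_, ?_⟩
      · rw [htransfer a ha haCs]; exact hba
      · rw [htransfer a ha haCs]; exact ma
      · rw [htransfer b hb hbCs]; exact mb
  obtain ⟨q₁, q₂, q₃, hq₁, hq₂, hq₃, h21, h31, h32, m1, m2, m3⟩ := hdec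
  have honeCs : ∀ {a b : Fin N}, b ∉ branchIn T C u' a →
      a ∈ Cs → b ∈ Cs → False := by
    intro a b hba haCs hbCs
    have h1 : branchIn T C u' a = Cs := branchIn_eq_of_mem T haCs
    exact hba (h1.symm ▸ hbCs)
  by_cases h1Cs : q₁ ∈ Cs
  · have h2Cs : q₂ ∉ Cs := fun h => honeCs h21 h1Cs h
    have h3Cs : q₃ ∉ Cs := fun h => honeCs h31 h1Cs h
    have hmCs : 1 ≤ mOn A lam Cs := by
      have heq : branchIn T C u' q₁ = Cs := branchIn_eq_of_mem T h1Cs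
      rw [heq] at m1
      exact m1
    exact hfinish q₂ q₃ hq₂ hq₃ h32 m2 m3 h2Cs h3Cs hmCs
  · by_cases h2Cs : q₂ ∈ Cs
    · have h3Cs : q₃ ∉ Cs := fun h => honeCs h32 h2Cs h
      have hmCs : 1 ≤ mOn A lam Cs := by
        have heq : branchIn T C u' q₂ = Cs := branchIn_eq_of_mem T h2Cs
        rw [heq] at m2
        exact m2
      exact hfinish q₁ q₃ hq₁ hq₃ h31 m1 m3 h1Cs h3Cs hmCs
    · by_cases h3Cs : q₃ ∈ Cs
      · have hmCs : 1 ≤ mOn A lam Cs := by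
          have heq : branchIn T C u' q₃ = Cs := branchIn_eq_of_mem T h3Cs
          rw [heq] at m3
          exact m3
        exact hfinish q₁ q₂ hq₁ hq₂ h21 m1 m2 h1Cs h2Cs hmCs
      · left
        refine ⟨q₁, q₂, q₃, hCeSe hq₁, hCeSe hq₂, hCeSe hq₃, ?_, ?_, ?_, ?_, ?_, ?_⟩
        · rw [htransfer q₁ hq₁ h1Cs]; exact h21
        · rw [htransfer q₁ hq₁ h1Cs]; exact h31
        · rw [htransfer q₂ hq₂ h2Cs]; exact h32
        · rw [htransfer q₁ hq₁ h1Cs]; exact m1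
        · rw [htransfer q₂ hq₂ h2Cs]; exact m2
        · rw [htransfer q₃ hq₃ h3Cs]; exact m3

lemma core (hsymm : A.IsSymm)
    (hgraph : ∀ i j : Fin N, i ≠ j → (A i j ≠ 0 ↔ T.Adj i j)) (hT : T.IsTree) :
    ∀ (k : ℕ) (S : Finset (Fin N)), S.card ≤ k → SConn T S → 2 ≤ mOn A lam S →
      ∃ u ∈ S, mOn A lam (S.erase u) = mOn A lam S + 1 ∧ Dec3 T A lam S u := by
  intro k
  induction k with
  | zero =>
    intro S hcard _ hm
    have hS : S = ∅ := Finset.card_eq_zero.mp (Nat.le_zero.mp hcard)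
    rw [hS, mOn_empty] at hm
    omega
  | succ k ih =>
    intro S hcard hSconn hm
    obtain ⟨v, hv, hparter⟩ := exists_parter_vertex T A lam hsymm hgraph hT hSconn hm
    rcases dichotomy T A lam hsymm hgraph hm hparter with hdec3 | ⟨c₀, hc₀, hC2, hCalt⟩
    · exact ⟨v, hv, hparter, hdec3⟩
    · have hCsub : branchIn T S v c₀ ⊆ S.erase v := branchIn_subset T
      have hCcard : (branchIn T S v c₀).card ≤ k := by
        have h1 : (branchIn T S v c₀).card ≤ (S.erase v).card := Finset.card_le_card hCsub
        have h2 : (S.erase v).card < S.card := Finset.card_erase_lt_of_mem hv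
        omega
      obtain ⟨u', hu'C, hCpart, hdecC⟩ := ih (branchIn T S v c₀) hCcard
        (branchIn_sconn T) hC2
      have hglue := glue T A lam hsymm hgraph hT hSconn hv hc₀ hparter hu'C hCpart hdecC
      have hu'S : u' ∈ S := (Finset.mem_erase.mp (hCsub hu'C)).2
      rcases hglue.2 with hdec3 | ⟨hCeq, hdec2⟩
      · exact ⟨u', hu'S, hglue.1, hdec3⟩
      · rcases dichotomy T A lam hsymm hgraph hm hglue.1 with hdec3 | ⟨c₁, hc₁, hC2', hCalt'⟩
        · exact ⟨u', hu'S, hglue.1, hdec3⟩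
        · have hle : mOn A lam (branchIn T S u' c₁) ≤ mOn A lam S := by
            rcases hCalt' with h | huniq
            · exact h
            · exfalso
              obtain ⟨a, b, haE, hbE, hba, ma, mb⟩ := hdec2
              have haC : a ∈ branchIn T S u' c₁ := huniq a haE ma
              have hbC : b ∈ branchIn T S u' c₁ := huniq b hbE mb
              have heq : branchIn T S u' a = branchIn T S u' c₁ :=
                branchIn_eq_of_mem T haC
              exact hba (heq.symm ▸ hbC)
          have hC1card : (branchIn T S u' c₁).card ≤ k := by
            have h1 : (branchIn T S u' c₁).card ≤ (S.erase u').card :=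
              Finset.card_le_card (branchIn_subset T)
            have h2 : (S.erase u').card < S.card := Finset.card_erase_lt_of_mem hu'S
            omega
          obtain ⟨u'', hu''C, hCpart', hdecC'⟩ := ih (branchIn T S u' c₁) hC1card
            (branchIn_sconn T) hC2'
          have hglue' := glue T A lam hsymm hgraph hT hSconn hu'S hc₁ hglue.1
            hu''C hCpart' hdecC'
          have hu''S : u'' ∈ S :=
            (Finset.mem_erase.mp (branchIn_subset T hu''C)).2
          rcases hglue'.2 with hdec3 | ⟨hCeq', _⟩
          · exact ⟨u'', hu''S, hglue'.1, hdec3⟩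
          · omega

end Mixed

end PW

/-- Parter–Wiener theorem (strong form): if a matrix whose graph is a tree has an
eigenvalue `lam` of multiplicity at least 2, then there is a vertex `u` of degree at
least 3 whose deletion increases the multiplicity by one, and at least three
components of `T - u` carry `lam` as an eigenvalue. -/
theorem parter_wiener_strong
    (n : ℕ) (T : SimpleGraph (Fin (n + 1))) (hT : T.IsTree)
    (A : Matrix (Fin (n + 1)) (Fin (n + 1)) ℝ) (hsymm : A.IsSymm)
    (hgraph : ∀ i j : Fin (n + 1), i ≠ j → (A i j ≠ 0 ↔ T.Adj i j))
    (lam : ℝ) (hmult : 2 ≤ A.charpoly.rootMultiplicity lam) :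
    ∃ u : Fin (n + 1),
      3 ≤ T.degree u ∧
      (A.submatrix u.succAbove u.succAbove).charpoly.rootMultiplicity lam =
        A.charpoly.rootMultiplicity lam + 1 ∧
      ∃ w₁ w₂ w₃ : Fin (n + 1),
        w₁ ≠ u ∧ w₂ ≠ u ∧ w₃ ≠ u ∧
        w₂ ∉ branchAt T u w₁ ∧ w₃ ∉ branchAt T u w₁ ∧ w₃ ∉ branchAt T u w₂ ∧
        (charpolyOn A (branchAt T u w₁)).IsRoot lam ∧
        (charpolyOn A (branchAt T u w₂)).IsRoot lam ∧
        (charpolyOn A (branchAt T u w₃)).IsRoot lam := by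
  classical
  have hSconn := PW.sconn_univ T hT
  have hcp_univ : charpolyOn A Finset.univ = A.charpoly := by
    have hsub : (A.submatrix
        (fun x : {a // a ∈ (Finset.univ : Finset (Fin (n+1)))} => (x : Fin (n+1)))
        (fun x : {a // a ∈ (Finset.univ : Finset (Fin (n+1)))} => (x : Fin (n+1))))
        = Matrix.reindex
            (Equiv.subtypeUnivEquiv (fun a : Fin (n+1) => Finset.mem_univ a)).symm
            (Equiv.subtypeUnivEquiv (fun a : Fin (n+1) => Finset.mem_univ a)).symm A := by
      ext i j
      rfl
    rw [charpolyOn, hsub, Matrix.charpoly_reindex]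
  have hm_univ : PW.mOn A lam Finset.univ = A.charpoly.rootMultiplicity lam := by
    rw [← PW.charpolyOn_rootMult A lam hsymm, hcp_univ]
  have hm2 : 2 ≤ PW.mOn A lam Finset.univ := by
    rw [hm_univ]; exact hmult
  obtain ⟨u, -, hpart, w₁, w₂, w₃, h1E, h2E, h3E, h21, h31, h32, hb1, hb2, hb3⟩ :=
    PW.core T A lam hsymm hgraph hT (n+1) Finset.univ (by simp) hSconn hm2
  have hbr : ∀ w : Fin (n+1), branchAt T u w = PW.branchIn T Finset.univ u w := by
    intro w
    ext j
    constructor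
    · intro hj
      obtain ⟨p, hp⟩ := (Finset.mem_filter.mp hj).2
      rw [PW.mem_branchIn_iff]
      refine ⟨p, fun z hz => Finset.mem_erase.mpr ⟨?_, Finset.mem_univ z⟩⟩
      rintro rfl
      exact hp hz
    · intro hj
      obtain ⟨p, hp⟩ := (PW.mem_branchIn_iff T).mp hj
      exact Finset.mem_filter.mpr ⟨Finset.mem_univ j,
        ⟨p, fun hu => (Finset.mem_erase.mp (hp u hu)).1 rfl⟩⟩
  obtain ⟨n₁, hadj1, hw1b⟩ := PW.exists_attach T hSconn (Finset.mem_univ u) h1E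
  obtain ⟨n₂, hadj2, hw2b⟩ := PW.exists_attach T hSconn (Finset.mem_univ u) h2E
  obtain ⟨n₃, hadj3, hw3b⟩ := PW.exists_attach T hSconn (Finset.mem_univ u) h3E
  have hbr1 := PW.branchIn_eq_of_mem T hw1b
  have hbr2 := PW.branchIn_eq_of_mem T hw2b
  have hbr3 := PW.branchIn_eq_of_mem T hw3b
  have hne12 : n₁ ≠ n₂ := by
    rintro rfl
    exact h21 (by rw [hbr1, ← hbr2]; exact PW.self_mem_branchIn T h2E)
  have hne13 : n₁ ≠ n₃ := by
    rintro rfl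
    exact h31 (by rw [hbr1, ← hbr3]; exact PW.self_mem_branchIn T h3E)
  have hne23 : n₂ ≠ n₃ := by
    rintro rfl
    exact h32 (by rw [hbr2, ← hbr3]; exact PW.self_mem_branchIn T h3E)
  have hdeg : 3 ≤ T.degree u := by
    have hsubn : ({n₁, n₂, n₃} : Finset (Fin (n+1))) ⊆ T.neighborFinset u := by
      intro z hz
      simp only [Finset.mem_insert, Finset.mem_singleton] at hz
      rcases hz with rfl | rfl | rfl
      · exact (SimpleGraph.mem_neighborFinset T u z).mpr hadj1
      · exact (SimpleGraph.mem_neighborFinset T u z).mpr hadj2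
      · exact (SimpleGraph.mem_neighborFinset T u z).mpr hadj3
    have hc3 : ({n₁, n₂, n₃} : Finset (Fin (n+1))).card = 3 := by
      rw [Finset.card_insert_of_notMem (by simp [hne12, hne13]),
        Finset.card_insert_of_notMem (by simp [hne23]), Finset.card_singleton]
    calc 3 = ({n₁, n₂, n₃} : Finset (Fin (n+1))).card := hc3.symm
      _ ≤ (T.neighborFinset u).card := Finset.card_le_card hsubn
      _ = T.degree u := rfl
  have hEq : ∀ i : Fin n, u.succAbove i ∈ Finset.univ.erase u := fun i =>
    Finset.mem_erase.mpr ⟨Fin.succAbove_ne u i, Finset.mem_univ _⟩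
  have hbij : Function.Bijective
      (fun i : Fin n => (⟨u.succAbove i, hEq i⟩ : {a // a ∈ Finset.univ.erase u})) := by
    constructor
    · intro i j hij
      exact Fin.succAbove_right_injective (congrArg Subtype.val hij)
    · rintro ⟨x, hx⟩
      obtain ⟨i, hi⟩ := Fin.exists_succAbove_eq ((Finset.mem_erase.mp hx).1)
      exact ⟨i, Subtype.ext hi⟩
  have hcp_erase : (A.submatrix u.succAbove u.succAbove).charpoly.rootMultiplicity lam
      = PW.mOn A lam (Finset.univ.erase u) := by
    have hsub2 : A.submatrix u.succAbove u.succAbove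
        = Matrix.reindex (Equiv.ofBijective _ hbij).symm (Equiv.ofBijective _ hbij).symm
          (A.submatrix
            (fun x : {a // a ∈ Finset.univ.erase u} => (x : Fin (n+1)))
            (fun x : {a // a ∈ Finset.univ.erase u} => (x : Fin (n+1)))) := by
      ext i j
      rfl
    rw [hsub2, Matrix.charpoly_reindex]
    exact PW.charpolyOn_rootMult A lam hsymm _
  have hroot : ∀ w : Fin (n+1), 1 ≤ PW.mOn A lam (PW.branchIn T Finset.univ u w) →
      (charpolyOn A (branchAt T u w)).IsRoot lam := by
    intro w hw
    rw [hbr w]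
    have hne : (charpolyOn A (PW.branchIn T Finset.univ u w)) ≠ 0 :=
      (Matrix.charpoly_monic _).ne_zero
    exact (Polynomial.rootMultiplicity_pos hne).mp
      (by rw [PW.charpolyOn_rootMult A lam hsymm]; omega)
  refine ⟨u, hdeg, ?_, w₁, w₂, w₃, (Finset.mem_erase.mp h1E).1,
    (Finset.mem_erase.mp h2E).1, (Finset.mem_erase.mp h3E).1, ?_, ?_, ?_,
    hroot w₁ hb1, hroot w₂ hb2, hroot w₃ hb3⟩
  · rw [hcp_erase, hpart, hm_univ]
  · rw [hbr w₁]; exact h21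
  · rw [hbr w₁]; exact h31
  · rw [hbr w₂]; exact h32
end

section
/- Let A be a real symmetric matrix whose graph is a tree T, let v be a vertex, and suppose λ ∈ σ(A) ∩ σ(A(v)). Then there exists a vertex u of T such that m_{A(u)}(λ) = m_A(λ) + 1. -/
set_option maxHeartbeats 1000000
set_option synthInstance.maxHeartbeats 400000
open Polynomial Module Matrix

lemma charpoly_sub_smul_one {n : Type*} [Fintype n] [DecidableEq n]
    (M : Matrix n n ℝ) (lam : ℝ) :
    (M - lam • 1).charpoly = M.charpoly.comp (X + C lam) := by
  have : M.charpoly.comp (X + C lam) = (eval₂RingHom C (X + C lam)) M.charpoly := rfl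
  rw [this, Matrix.charpoly, Matrix.charpoly, RingHom.map_det]
  congr 1
  ext i j
  by_cases h : i = j
  · subst h
    simp only [RingHom.mapMatrix_apply, Matrix.map_apply, Matrix.charmatrix_apply_eq,
      coe_eval₂RingHom, eval₂_sub, eval₂_X, eval₂_C, Matrix.sub_apply, Matrix.smul_apply,
      Matrix.one_apply_eq, smul_eq_mul, mul_one, map_sub]
    ring_nf
  · simp only [RingHom.mapMatrix_apply, Matrix.map_apply, Matrix.charmatrix_apply_ne _ _ _ h,
      coe_eval₂RingHom, eval₂_neg, eval₂_C, Matrix.sub_apply, Matrix.smul_apply,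
      Matrix.one_apply_ne h, smul_eq_mul, mul_zero, sub_zero]

lemma symm_ker_step {n : Type*} [Fintype n] {B : Matrix n n ℝ} (hB : B.IsSymm)
    (x : n → ℝ) (h : B *ᵥ (B *ᵥ x) = 0) : B *ᵥ x = 0 := by
  rw [← dotProduct_self_eq_zero]
  have key : (B *ᵥ x) ⬝ᵥ (B *ᵥ x) = x ⬝ᵥ (B *ᵥ (B *ᵥ x)) := by
    rw [Matrix.dotProduct_mulVec x B (B *ᵥ x)]
    congr 1
    rw [← Matrix.mulVec_transpose, hB]
  rw [key, h, dotProduct_zero]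

lemma rootMult_eq_nullity {n : Type*} [Fintype n] [DecidableEq n]
    (M : Matrix n n ℝ) (hM : M.IsSymm) (lam : ℝ) :
    M.charpoly.rootMultiplicity lam
      = finrank ℝ (LinearMap.ker (M - lam • 1).mulVecLin) := by
  set B : Matrix n n ℝ := M - lam • 1 with hBdef
  have hB : B.IsSymm := by
    show Bᵀ = B
    rw [hBdef, Matrix.transpose_sub, hM, Matrix.transpose_smul, Matrix.transpose_one]
  have h1 : M.charpoly.rootMultiplicity lam = B.charpoly.natTrailingDegree := by
    rw [rootMultiplicity_eq_natTrailingDegree, charpoly_sub_smul_one]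
  have hlin : Matrix.toLin' B = B.mulVecLin := by
    apply LinearMap.ext; intro v; rw [Matrix.toLin'_apply]; rfl
  have h2 : B.charpoly = LinearMap.charpoly (Matrix.toLin' B) := by
    conv_lhs => rw [← LinearMap.toMatrix'_toLin' B]
    rw [← LinearMap.toMatrix_eq_toMatrix', LinearMap.charpoly_toMatrix]
  have h3 := LinearMap.finrank_maxGenEigenspace_zero_eq (Matrix.toLin' B)
  have h4 : Module.End.maxGenEigenspace (Matrix.toLin' B) 0 = LinearMap.ker B.mulVecLin := by
    rw [← Module.End.iSup_genEigenspace_eq]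
    have hker : ∀ k : ℕ, LinearMap.ker ((Matrix.toLin' B) ^ k) ≤ LinearMap.ker B.mulVecLin := by
      intro k
      induction k with
      | zero => intro x hx; simp only [pow_zero, LinearMap.mem_ker, Module.End.one_apply] at hx
                subst hx; simp
      | succ k ih =>
        intro x hx
        simp only [LinearMap.mem_ker] at hx ⊢
        have : ((Matrix.toLin' B) ^ k) ((Matrix.toLin' B) x) = 0 := by
          rw [← Module.End.mul_apply, ← pow_succ]
          exact hx
        have h5 : B.mulVecLin ((Matrix.toLin' B) x) = 0 := ih this
        simp only [hlin, Matrix.mulVecLin_apply] at h5 ⊢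
        exact symm_ker_step hB x h5
    apply le_antisymm
    · apply iSup_le
      intro k
      rw [Module.End.genEigenspace_nat]
      have : Matrix.toLin' B - (0:ℝ) • 1 = Matrix.toLin' B := by simp
      rw [this]
      exact hker k
    · have h1le : LinearMap.ker B.mulVecLin ≤ LinearMap.ker ((Matrix.toLin' B)^(1:ℕ)) := by
        intro x hx; simp only [LinearMap.mem_ker, pow_one, hlin] at hx ⊢; exact hx
      refine le_trans h1le ?_
      have := le_iSup (fun k : ℕ => (Module.End.genEigenspace (Matrix.toLin' B) 0) (k : ℕ∞)) 1
      refine le_trans ?_ this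
      rw [Module.End.genEigenspace_nat]
      simp
  rw [h1, h2, ← h3, h4]

lemma nullity_eq_of_compat {m n : Type*} [Fintype m] [Fintype n] [DecidableEq m] [DecidableEq n]
    (e : m ≃ n) (P : Matrix m m ℝ) (Q : Matrix n n ℝ) (h : ∀ i j, P i j = Q (e i) (e j)) :
    finrank ℝ (LinearMap.ker P.mulVecLin) = finrank ℝ (LinearMap.ker Q.mulVecLin) := by
  have comp : ∀ u : m → ℝ, Q *ᵥ (u ∘ e.symm) = (P *ᵥ u) ∘ e.symm := by
    intro u
    funext j
    simp only [Matrix.mulVec, dotProduct, Function.comp]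
    refine (Fintype.sum_equiv e (fun k' => P (e.symm j) k' * u k')
      (fun k => Q j k * u (e.symm k)) ?_).symm
    intro a
    simp [h, Equiv.symm_apply_apply, Equiv.apply_symm_apply]
  let E : (m → ℝ) ≃ₗ[ℝ] (n → ℝ) := LinearEquiv.funCongrLeft ℝ ℝ e.symm
  have hE : ∀ u : m → ℝ, E u = u ∘ e.symm := fun _ => rfl
  have hmap : Submodule.map (E : (m → ℝ) →ₗ[ℝ] (n → ℝ)) (LinearMap.ker P.mulVecLin)
      = LinearMap.ker Q.mulVecLin := by
    ext v
    simp only [Submodule.mem_map, LinearMap.mem_ker, Matrix.mulVecLin_apply]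
    constructor
    · rintro ⟨u, hu, rfl⟩
      rw [LinearEquiv.coe_coe, hE, comp, hu]
      rfl
    · intro hv
      refine ⟨v ∘ e, ?_, ?_⟩
      · have : v ∘ e ∘ e.symm = v := by funext j; simp
        have h2 := comp (v ∘ e)
        rw [show (v ∘ e) ∘ e.symm = v by funext j; simp] at h2
        rw [hv] at h2
        have h3 : ∀ j : m, (P *ᵥ (v ∘ e)) (e.symm (e j)) = 0 := fun j => congrFun h2.symm (e j)
        funext i
        have := h3 i
        simpa using this
      · rw [LinearEquiv.coe_coe, hE]; funext j; simp
  rw [← hmap]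
  exact (LinearEquiv.finrank_map_eq E (LinearMap.ker P.mulVecLin)).symm
open Polynomial Module Matrix

lemma parter_core {N : Type*} [Fintype N] [DecidableEq N]
    (B : Matrix N N ℝ) (hB : B.IsSymm)
    (z : N) (C : Set N) [DecidablePred (· ∈ C)]
    (hzC : z ∉ C) (w : N) (hw : w ∈ C)
    (H1 : ∀ j ∈ C, ∀ k, k ∉ C → k ≠ z → B j k = 0)
    (H2 : ∀ j ∈ C, j ≠ w → B j z = 0)
    (H3 : B w z ≠ 0)
    (y : C → ℝ) (hy : ∀ j : C, ∑ k : C, B (j:N) (k:N) * y k = 0)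
    (hyw : y ⟨w, hw⟩ ≠ 0) :
    finrank ℝ (LinearMap.ker
        (B.submatrix (Subtype.val : {j : N // j ≠ z} → N) (Subtype.val : {j : N // j ≠ z} → N)).mulVecLin)
      = finrank ℝ (LinearMap.ker B.mulVecLin) + 1 := by
  classical
  have hsy : ∀ a b : N, B a b = B b a := by
    intro a b
    have := congrFun (congrFun hB b) a
    simpa [Matrix.transpose_apply] using this
  -- Step A : every global kernel vector vanishes at z
  have stepA : ∀ x : N → ℝ, B *ᵥ x = 0 → x z = 0 := by
    intro x hx
    have hrow : ∀ j : C, ∑ k : C, B (j:N) (k:N) * x (k:N) = - (B (j:N) z * x z) := by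
      intro j
      have h0 : (0:ℝ) = ∑ k : N, B (j:N) k * x k := (congrFun hx (j:N)).symm
      rw [← Finset.sum_filter_add_sum_filter_not Finset.univ (· ∈ C)
        (fun k => B (j:N) k * x k)] at h0
      have hout : ∑ k ∈ Finset.univ.filter (fun k => ¬ k ∈ C), B (j:N) k * x k
          = B (j:N) z * x z := by
        apply Finset.sum_eq_single_of_mem z (by simpa using hzC)
        intro k hk hkz
        simp only [Finset.mem_filter] at hk
        rw [H1 (j:N) j.2 k hk.2 hkz, zero_mul]
      have hin : ∑ k ∈ Finset.univ.filter (fun k => k ∈ C), B (j:N) k * x k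
          = ∑ k : C, B (j:N) (k:N) * x (k:N) :=
        Finset.sum_subtype (p := fun k => k ∈ C) (Finset.univ.filter (fun k => k ∈ C)) (by simp) _
      rw [hout, hin] at h0
      linarith
    have hswap : (∑ j : C, y j * ∑ k : C, B (j:N) (k:N) * x (k:N))
        = ∑ k : C, (∑ j : C, B (k:N) (j:N) * y j) * x (k:N) := by
      simp_rw [Finset.mul_sum, Finset.sum_mul]
      rw [Finset.sum_comm]
      apply Finset.sum_congr rfl; intro k _
      apply Finset.sum_congr rfl; intro j _
      rw [hsy (j:N) (k:N)]; ring
    have hL : (∑ j : C, y j * ∑ k : C, B (j:N) (k:N) * x (k:N))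
        = y ⟨w, hw⟩ * (- (B w z * x z)) := by
      have : ∀ j : C, y j * (∑ k : C, B (j:N) (k:N) * x (k:N))
          = y j * (- (B (j:N) z * x z)) := fun j => by rw [hrow j]
      rw [Finset.sum_congr rfl (fun j _ => this j)]
      refine Finset.sum_eq_single_of_mem (⟨w, hw⟩ : C) (Finset.mem_univ _) ?_
      intro j _ hj
      have hjw : (j:N) ≠ w := fun h => hj (Subtype.ext h)
      rw [H2 (j:N) j.2 hjw]
      ring
    have hR : (∑ k : C, (∑ j : C, B (k:N) (j:N) * y j) * x (k:N)) = 0 := by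
      apply Finset.sum_eq_zero
      intro k _
      rw [hy k, zero_mul]
    rw [hswap, hR] at hL
    have := hL.symm
    have hprod : y ⟨w, hw⟩ * B w z * x z = 0 := by linarith [this]
    rcases mul_eq_zero.mp hprod with h | h
    · rcases mul_eq_zero.mp h with h' | h'
      · exact absurd h' hyw
      · exact absurd h' H3
    · exact h
  -- the linear maps
  set D := {j : N // j ≠ z} with hD
  let eps : (D → ℝ) →ₗ[ℝ] (N → ℝ) :=
  { toFun := fun u j => if h : j = z then 0 else u ⟨j, h⟩
    map_add' := by intro u v; funext j; by_cases h : j = z <;> simp [h]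
    map_smul' := by intro c u; funext j; by_cases h : j = z <;> simp [h] }
  let psi : (D → ℝ) →ₗ[ℝ] ℝ :=
  { toFun := fun u => ∑ j : D, B z (j:N) * u j
    map_add' := by intro u v; simp [mul_add, Finset.sum_add_distrib]
    map_smul' := by
      intro c u
      simp only [Pi.smul_apply, smul_eq_mul, RingHom.id_apply, Finset.mul_sum]
      apply Finset.sum_congr rfl; intros; ring }
  set B' : Matrix D D ℝ := B.submatrix (Subtype.val : D → N) (Subtype.val : D → N) with hB'
  have hmulB' : ∀ (u : D → ℝ) (i : D), (B' *ᵥ u) i = ∑ k : D, B (i:N) (k:N) * u k := by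
    intro u i; rfl
  have hmulB : ∀ (x : N → ℝ) (i : N), (B *ᵥ x) i = ∑ k : N, B i k * x k := by
    intro x i; rfl
  -- F0 : multiplication against extended vectors
  have F0 : ∀ (u : D → ℝ) (i : N), (B *ᵥ (eps u)) i = ∑ k : D, B i (k:N) * u k := by
    intro u i
    rw [hmulB]
    rw [← Finset.sum_filter_add_sum_filter_not Finset.univ (fun k => k ≠ z)
      (fun k => B i k * (eps u) k)]
    have hz : ∑ k ∈ Finset.univ.filter (fun k => ¬ k ≠ z), B i k * (eps u) k = 0 := by
      apply Finset.sum_eq_zero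
      intro k hk
      simp only [Finset.mem_filter, not_not] at hk
      rcases hk with ⟨-, rfl⟩
      simp [eps]
    rw [hz, add_zero,
      Finset.sum_subtype (p := fun k => k ≠ z) (Finset.univ.filter (fun k => k ≠ z)) (by simp)
        (fun k => B i k * (eps u) k)]
    apply Finset.sum_congr rfl
    intro k _
    have : (eps u) (k : N) = u k := by simp [eps, k.2]
    rw [this]
  -- F1 : restriction of vectors vanishing at z
  have F1 : ∀ (x : N → ℝ), x z = 0 → ∀ i : D,
      (B' *ᵥ (fun k : D => x (k : N))) i = (B *ᵥ x) (i : N) := by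
    intro x hxz i
    rw [hmulB', hmulB]
    rw [← Finset.sum_filter_add_sum_filter_not Finset.univ (fun k => k ≠ z)
      (fun k => B (i:N) k * x k)]
    have hz : ∑ k ∈ Finset.univ.filter (fun k => ¬ k ≠ z), B (i:N) k * x k = 0 := by
      apply Finset.sum_eq_zero
      intro k hk
      simp only [Finset.mem_filter, not_not] at hk
      rcases hk with ⟨-, rfl⟩
      rw [hxz, mul_zero]
    rw [hz, add_zero,
      Finset.sum_subtype (p := fun k => k ≠ z) (Finset.univ.filter (fun k => k ≠ z)) (by simp)
        (fun k => B (i:N) k * x k)]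
  have Fpsi : ∀ (x : N → ℝ), x z = 0 → psi (fun k : D => x (k : N)) = (B *ᵥ x) z := by
    intro x hxz
    show (∑ j : D, B z (j:N) * x (j:N)) = _
    rw [hmulB]
    rw [← Finset.sum_filter_add_sum_filter_not Finset.univ (fun k => k ≠ z)
      (fun k => B z k * x k)]
    have hz : ∑ k ∈ Finset.univ.filter (fun k => ¬ k ≠ z), B z k * x k = 0 := by
      apply Finset.sum_eq_zero
      intro k hk
      simp only [Finset.mem_filter, not_not] at hk
      rcases hk with ⟨-, rfl⟩
      rw [hxz, mul_zero]
    rw [hz, add_zero,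
      Finset.sum_subtype (p := fun k => k ≠ z) (Finset.univ.filter (fun k => k ≠ z)) (by simp)
        (fun k => B z k * x k)]
  set K : Submodule ℝ (N → ℝ) := LinearMap.ker B.mulVecLin with hK
  set K' : Submodule ℝ (D → ℝ) := LinearMap.ker B'.mulVecLin with hK'
  let L : K' →ₗ[ℝ] ℝ := psi.domRestrict K'
  -- restriction map K → K'
  have mem1 : ∀ x : K, (fun k : D => (x : N → ℝ) (k : N)) ∈ K' := by
    intro x
    have hx : B *ᵥ (x : N → ℝ) = 0 := x.2
    have hxz : (x : N → ℝ) z = 0 := stepA _ hx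
    simp only [hK', LinearMap.mem_ker, Matrix.mulVecLin_apply]
    funext i
    rw [F1 _ hxz i, hx]
    rfl
  let r1 : K →ₗ[ℝ] K' :=
  { toFun := fun x => ⟨fun k : D => (x : N → ℝ) (k : N), mem1 x⟩
    map_add' := by intro a b; apply Subtype.ext; funext k; rfl
    map_smul' := by intro c a; apply Subtype.ext; funext k; rfl }
  have mem2 : ∀ x : K, r1 x ∈ LinearMap.ker L := by
    intro x
    have hx : B *ᵥ (x : N → ℝ) = 0 := x.2
    have hxz : (x : N → ℝ) z = 0 := stepA _ hx
    simp only [LinearMap.mem_ker]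
    show psi (fun k : D => (x : N → ℝ) (k : N)) = 0
    rw [Fpsi _ hxz, hx]
    rfl
  let f : K →ₗ[ℝ] LinearMap.ker L := LinearMap.codRestrict (LinearMap.ker L) r1 mem2
  -- extension map ker L → K
  have mem3 : ∀ u : LinearMap.ker L, eps ((u : K') : D → ℝ) ∈ K := by
    intro u
    have hu : B' *ᵥ ((u : K') : D → ℝ) = 0 := (u : K').2
    have hpsiu : psi ((u : K') : D → ℝ) = 0 := u.2
    simp only [hK, LinearMap.mem_ker, Matrix.mulVecLin_apply]
    funext i
    rw [F0]
    by_cases h : i = z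
    · subst h; exact hpsiu
    · have := congrFun hu ⟨i, h⟩
      rw [hmulB'] at this
      exact this
  let g : LinearMap.ker L →ₗ[ℝ] K :=
    LinearMap.codRestrict K (eps ∘ₗ K'.subtype ∘ₗ (LinearMap.ker L).subtype) mem3
  have hgf : ∀ x : K, g (f x) = x := by
    intro x
    apply Subtype.ext
    funext j
    show (eps (fun k : D => (x : N → ℝ) (k : N))) j = (x : N → ℝ) j
    by_cases h : j = z
    · rw [h]
      have hx : B *ᵥ (x : N → ℝ) = 0 := x.2
      rw [stepA _ hx]
      simp [eps]
    · simp [eps, h]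
  have hfg : ∀ u : LinearMap.ker L, f (g u) = u := by
    intro u
    apply Subtype.ext
    apply Subtype.ext
    funext k
    show (eps ((u : K') : D → ℝ)) (k : N) = ((u : K') : D → ℝ) k
    simp [eps, k.2]
  have hdimK : finrank ℝ K = finrank ℝ (LinearMap.ker L) := by
    have E : K ≃ₗ[ℝ] LinearMap.ker L :=
      LinearEquiv.ofLinear f g (LinearMap.ext hfg) (LinearMap.ext hgf)
    exact E.finrank_eq
  -- range of L is everything
  let Y : D → ℝ := fun j => if h : (j : N) ∈ C then y ⟨(j : N), h⟩ else 0
  have sumDC : ∀ gg : N → ℝ,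
      (∑ k : D, gg (k : N) * Y k) = ∑ k : C, gg (k : N) * y k := by
    intro gg
    have e1 : (∑ k : D, gg (k : N) * Y k)
        = ∑ k ∈ Finset.univ.filter (fun k => k ≠ z),
            gg k * (if h : k ∈ C then y ⟨k, h⟩ else 0) := by
      rw [Finset.sum_subtype (p := fun k => k ≠ z) (Finset.univ.filter (fun k => k ≠ z)) (by simp)
        (fun k => gg k * (if h : k ∈ C then y ⟨k, h⟩ else 0))]
    have e2 : (∑ k : C, gg (k : N) * y k)
        = ∑ k ∈ Finset.univ.filter (fun k => k ∈ C),
            gg k * (if h : k ∈ C then y ⟨k, h⟩ else 0) := by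
      rw [Finset.sum_subtype (p := fun k => k ∈ C) (Finset.univ.filter (fun k => k ∈ C)) (by simp)
        (fun k => gg k * (if h : k ∈ C then y ⟨k, h⟩ else 0))]
      apply Finset.sum_congr rfl
      intro k _
      rw [dif_pos k.2]
    rw [e1, e2]
    refine (Finset.sum_subset ?_ ?_).symm
    · intro k hk
      simp only [Finset.mem_filter, Finset.mem_univ, true_and] at hk ⊢
      exact fun h => hzC (h ▸ hk)
    · intro k _ hk
      simp only [Finset.mem_filter, Finset.mem_univ, true_and] at hk
      rw [dif_neg hk, mul_zero]
  have hYmem : Y ∈ K' := by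
    simp only [hK', LinearMap.mem_ker, Matrix.mulVecLin_apply]
    funext i
    show (B' *ᵥ Y) i = 0
    rw [hmulB' Y i, sumDC (fun k => B (i:N) k)]
    by_cases hiC : (i : N) ∈ C
    · have := hy ⟨(i:N), hiC⟩
      simpa using this
    · apply Finset.sum_eq_zero
      intro k _
      rw [hsy (i:N) (k:N), H1 (k:N) k.2 (i:N) hiC i.2, zero_mul]
  have hLY : psi Y = B z w * y ⟨w, hw⟩ := by
    show (∑ j : D, B z (j:N) * Y j) = _
    rw [sumDC (fun k => B z k)]
    refine Finset.sum_eq_single_of_mem (⟨w, hw⟩ : C) (Finset.mem_univ _) ?_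
    intro j _ hj
    have hjw : (j:N) ≠ w := fun h => hj (Subtype.ext h)
    rw [hsy z (j:N), H2 (j:N) j.2 hjw, zero_mul]
  have hLYne : psi Y ≠ 0 := by
    rw [hLY]
    exact mul_ne_zero (by rw [hsy z w]; exact H3) hyw
  have hrange : LinearMap.range L = ⊤ := by
    rw [eq_top_iff]
    rintro r -
    refine ⟨(r / psi Y) • (⟨Y, hYmem⟩ : K'), ?_⟩
    have hh : L ⟨Y, hYmem⟩ = psi Y := rfl
    rw [_root_.map_smul, hh, smul_eq_mul, div_mul_cancel₀ r hLYne]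
  have hrank : finrank ℝ (LinearMap.range L) = 1 := by
    rw [hrange]
    simpa using finrank_top ℝ ℝ
  have hsum := LinearMap.finrank_range_add_finrank_ker L
  show finrank ℝ K' = finrank ℝ K + 1
  rw [hdimK, hrank] at *
  omega

lemma exists_adj_zero_ne {V : Type*} (T : SimpleGraph V) (x : V → ℝ)
    {a b : V} (p : T.Walk a b) :
    x a = 0 → x b ≠ 0 → ∃ z w, T.Adj z w ∧ x z = 0 ∧ x w ≠ 0 := by
  induction p with
  | nil => intro ha hb; exact absurd ha hb
  | @cons u v c huv q ih =>
    intro ha hb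
    by_cases hv : x v = 0
    · exact ih hv hb
    · exact ⟨u, v, huv, ha, hv⟩

lemma tree_component {V : Type*} [DecidableEq V] {T : SimpleGraph V} (hT : T.IsTree)
    {z w : V} (hadj : T.Adj z w) :
    ∃ C : Set V, w ∈ C ∧ z ∉ C ∧
      (∀ j ∈ C, ∀ k, T.Adj j k → k ≠ z → k ∈ C) ∧
      (∀ j ∈ C, T.Adj z j → j = w) := by
  refine ⟨{j | ∃ p : T.Walk w j, z ∉ p.support}, ⟨SimpleGraph.Walk.nil, ?_⟩, ?_, ?_, ?_⟩
  · simp only [SimpleGraph.Walk.support_nil, List.mem_singleton]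
    exact fun h => (T.irrefl (h ▸ hadj))
  · rintro ⟨p, hp⟩
    exact hp p.end_mem_support
  · rintro j ⟨p, hp⟩ k hjk hkz
    refine ⟨p.concat hjk, ?_⟩
    rw [SimpleGraph.Walk.support_concat]
    intro hz
    rcases List.mem_append.mp hz with h | h
    · exact hp h
    · rw [List.mem_singleton] at h
      exact hkz h.symm
  · rintro j ⟨p, hp⟩ hzj
    by_contra hjw
    have hwz : w ≠ z := fun h => T.irrefl (h ▸ hadj).symm
    have hp' : z ∉ p.toPath.1.support := fun h => hp (p.support_toPath_subset h)
    have hq : (SimpleGraph.Walk.cons hadj.symm (SimpleGraph.Walk.cons hzj .nil)).IsPath := by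
      apply SimpleGraph.Walk.IsPath.cons
      · apply SimpleGraph.Walk.IsPath.cons SimpleGraph.Walk.IsPath.nil ?_
        simp only [SimpleGraph.Walk.support_nil, List.mem_singleton]
        exact fun h => hzj.ne h
      · simp only [SimpleGraph.Walk.support_cons, SimpleGraph.Walk.support_nil,
          List.mem_cons, List.mem_singleton]
        rintro (h | h | h)
        · exact hwz h
        · exact hjw h.symm
        · exact absurd h List.not_mem_nil
    obtain ⟨q, -, huniq⟩ := hT.existsUnique_path w j
    have h1 := huniq _ hq
    have h2 := huniq _ p.toPath.2
    rw [← h2] at h1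
    have hzin : z ∈ p.toPath.1.support := by
      rw [← h1]
      simp
    exact hp' hzin

/-- Parter–Wiener theorem (basic form): if `lam` is an eigenvalue of both `A` and
`A(v)` for some vertex `v` of the tree, then some vertex `u` is Parter:
deleting it increases the multiplicity of `lam` by one. -/
theorem parter_wiener_basic
    (n : ℕ) (T : SimpleGraph (Fin (n + 1))) (hT : T.IsTree)
    (A : Matrix (Fin (n + 1)) (Fin (n + 1)) ℝ) (hsymm : A.IsSymm)
    (hgraph : ∀ i j : Fin (n + 1), i ≠ j → (A i j ≠ 0 ↔ T.Adj i j))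
    (v : Fin (n + 1)) (lam : ℝ)
    (hA : A.charpoly.IsRoot lam)
    (hAv : (A.submatrix v.succAbove v.succAbove).charpoly.IsRoot lam) :
    ∃ u : Fin (n + 1),
      (A.submatrix u.succAbove u.succAbove).charpoly.rootMultiplicity lam =
        A.charpoly.rootMultiplicity lam + 1 := by
  classical
  set B : Matrix (Fin (n + 1)) (Fin (n + 1)) ℝ := A - lam • 1 with hBdef
  have hBsymm : B.IsSymm := by
    show Bᵀ = B
    rw [hBdef, Matrix.transpose_sub, hsymm, Matrix.transpose_smul, Matrix.transpose_one]
  have hBoff : ∀ i j : Fin (n + 1), i ≠ j → B i j = A i j := by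
    intro i j h
    simp [hBdef, Matrix.one_apply_ne h]
  have hsubsymm : ∀ u : Fin (n + 1), (A.submatrix u.succAbove u.succAbove).IsSymm := by
    intro u
    show _ᵀ = _
    rw [Matrix.transpose_submatrix, hsymm]
  have hsubB : ∀ u : Fin (n + 1),
      A.submatrix u.succAbove u.succAbove - lam • 1 = B.submatrix u.succAbove u.succAbove := by
    intro u
    ext i j
    by_cases h : i = j
    · subst h
      simp [hBdef]
    · have h2 : u.succAbove i ≠ u.succAbove j :=
        fun hh => h (Fin.succAbove_right_injective hh)
      simp [hBdef, Matrix.one_apply_ne h, Matrix.one_apply_ne h2]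
  -- a nonzero kernel vector for the v-deleted matrix
  have hpos : 0 < (A.submatrix v.succAbove v.succAbove).charpoly.rootMultiplicity lam :=
    (Polynomial.rootMultiplicity_pos (Matrix.charpoly_monic _).ne_zero).mpr hAv
  have hker : ∃ u0 : Fin n → ℝ, u0 ≠ 0 ∧ (B.submatrix v.succAbove v.succAbove) *ᵥ u0 = 0 := by
    by_contra hcon
    push_neg at hcon
    have hbot : LinearMap.ker (B.submatrix v.succAbove v.succAbove).mulVecLin = ⊥ := by
      rw [Submodule.eq_bot_iff]
      intro u0 hu0
      simp only [LinearMap.mem_ker, Matrix.mulVecLin_apply] at hu0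
      by_contra hu0ne
      exact absurd hu0 (hcon u0 hu0ne)
    have := rootMult_eq_nullity (A.submatrix v.succAbove v.succAbove) (hsubsymm v) lam
    rw [hsubB v, hbot] at this
    rw [this] at hpos
    simp at hpos
  obtain ⟨u0, hu0ne, hu0⟩ := hker
  -- extend u0 by zero at v
  set x : Fin (n + 1) → ℝ :=
    fun j => if h : j = v then 0 else u0 ((finSuccAboveEquiv v).symm ⟨j, h⟩) with hxdef
  have hxv : x v = 0 := by simp [hxdef]
  have hxsucc : ∀ k : Fin n, x (v.succAbove k) = u0 k := by
    intro k
    have h : v.succAbove k ≠ v := Fin.succAbove_ne v k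
    rw [hxdef]
    simp only [dif_neg h]
    congr 1
    have : (⟨v.succAbove k, h⟩ : {j : Fin (n + 1) // j ≠ v}) = finSuccAboveEquiv v k := by
      apply Subtype.ext
      simp [finSuccAboveEquiv_apply]
    rw [this, Equiv.symm_apply_apply]
  have hBx : ∀ i : Fin (n + 1), i ≠ v → (B *ᵥ x) i = 0 := by
    intro i hi
    obtain ⟨i', hi'⟩ := Fin.exists_succAbove_eq hi
    have expand : (B *ᵥ x) i = B i v * x v + ∑ k : Fin n, B i (v.succAbove k) * x (v.succAbove k) := by
      show ∑ j, B i j * x j = _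
      rw [Fin.sum_univ_succAbove (fun j => B i j * x j) v]
    rw [expand, hxv, mul_zero, zero_add]
    have : ∀ k : Fin n, B i (v.succAbove k) * x (v.succAbove k)
        = B (v.succAbove i') (v.succAbove k) * u0 k := by
      intro k
      rw [hxsucc, hi']
    rw [Finset.sum_congr rfl (fun k _ => this k)]
    have := congrFun hu0 i'
    exact this
  have hxne : ∃ w0, x w0 ≠ 0 := by
    obtain ⟨k, hk⟩ := Function.ne_iff.mp hu0ne
    exact ⟨v.succAbove k, by rw [hxsucc]; exact hk⟩
  -- find the pivot pair (z, w)
  have hzw : ∃ z w, T.Adj z w ∧ x z = 0 ∧ x w ≠ 0 ∧ ∀ i, i ≠ z → (B *ᵥ x) i = 0 := by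
    by_cases h0 : (B *ᵥ x) v = 0
    · have hBx0 : B *ᵥ x = 0 := by
        funext i
        by_cases hi : i = v
        · rw [hi]; exact h0
        · exact hBx i hi
      obtain ⟨w0, hw0⟩ := hxne
      obtain ⟨p⟩ := (hT.isConnected.preconnected v w0 : T.Reachable v w0)
      obtain ⟨z, w, hadj, hz, hw⟩ := exists_adj_zero_ne T x p hxv hw0
      exact ⟨z, w, hadj, hz, hw, fun i _ => congrFun hBx0 i⟩
    · have hsum : (∑ j, B v j * x j) ≠ 0 := h0
      obtain ⟨j, -, hj⟩ := Finset.exists_ne_zero_of_sum_ne_zero hsum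
      have hxj : x j ≠ 0 := fun h => hj (by rw [h, mul_zero])
      have hBvj : B v j ≠ 0 := fun h => hj (by rw [h, zero_mul])
      have hjv : j ≠ v := fun h => hxj (h ▸ hxv)
      have hadj : T.Adj v j := by
        rw [← hgraph v j (Ne.symm hjv)]
        rw [← hBoff v j (Ne.symm hjv)]
        exact hBvj
      exact ⟨v, j, hadj, hxv, hxj, hBx⟩
  obtain ⟨z, w, hadj, hxz, hxw, hBxz⟩ := hzw
  -- the branch C at z containing w
  obtain ⟨C, hwC, hzC, hclose, huniqnb⟩ := tree_component hT hadj
  haveI : DecidablePred (· ∈ C) := Classical.decPred _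
  have hzw' : z ≠ w := hadj.ne
  have H1 : ∀ j ∈ C, ∀ k, k ∉ C → k ≠ z → B j k = 0 := by
    intro j hj k hk hkz
    have hjk : j ≠ k := fun h => hk (h ▸ hj)
    have hnadj : ¬ T.Adj j k := fun h => hk (hclose j hj k h hkz)
    rw [hBoff j k hjk]
    by_contra hne
    exact hnadj ((hgraph j k hjk).mp hne)
  have H2 : ∀ j ∈ C, j ≠ w → B j z = 0 := by
    intro j hj hjw
    have hjz : j ≠ z := fun h => hzC (h ▸ hj)
    have hnadj : ¬ T.Adj z j := fun h => hjw (huniqnb j hj h)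
    rw [hBoff j z hjz]
    by_contra hne
    exact hnadj ((hgraph j z hjz).mp hne).symm
  have H3 : B w z ≠ 0 := by
    rw [hBoff w z (Ne.symm hzw')]
    rw [hgraph w z (Ne.symm hzw')]
    exact hadj.symm
  -- restriction of x to C is a kernel vector of B[C]
  have hy : ∀ j : C, ∑ k : C, B (j : Fin (n+1)) (k : Fin (n+1)) * x (k : Fin (n+1)) = 0 := by
    intro j
    have hjz : (j : Fin (n+1)) ≠ z := fun h => hzC (h ▸ j.2)
    have h0 : (0:ℝ) = ∑ k, B (j : Fin (n+1)) k * x k := (hBxz (j : Fin (n+1)) hjz).symm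
    rw [← Finset.sum_filter_add_sum_filter_not Finset.univ (· ∈ C)
      (fun k => B (j : Fin (n+1)) k * x k)] at h0
    have hout : ∑ k ∈ Finset.univ.filter (fun k => ¬ k ∈ C), B (j : Fin (n+1)) k * x k = 0 := by
      apply Finset.sum_eq_zero
      intro k hk
      simp only [Finset.mem_filter, Finset.mem_univ, true_and] at hk
      by_cases hkz : k = z
      · rw [hkz, hxz, mul_zero]
      · rw [H1 (j : Fin (n+1)) j.2 k hk hkz, zero_mul]
    have hin : ∑ k ∈ Finset.univ.filter (fun k => k ∈ C), B (j : Fin (n+1)) k * x k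
        = ∑ k : C, B (j : Fin (n+1)) (k : Fin (n+1)) * x (k : Fin (n+1)) :=
      Finset.sum_subtype (p := fun k => k ∈ C) (Finset.univ.filter (fun k => k ∈ C)) (by simp) _
    rw [hout, add_zero, hin] at h0
    exact h0.symm
  -- apply the core lemma
  have hcore := parter_core B hBsymm z C hzC w hwC H1 H2 H3
    (fun k : C => x (k : Fin (n+1))) hy hxw
  refine ⟨z, ?_⟩
  rw [rootMult_eq_nullity (A.submatrix z.succAbove z.succAbove) (hsubsymm z) lam,
    rootMult_eq_nullity A hsymm lam, hsubB z]
  rw [nullity_eq_of_compat (finSuccAboveEquiv z) (B.submatrix z.succAbove z.succAbove)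
    (B.submatrix (Subtype.val : {j : Fin (n+1) // j ≠ z} → Fin (n+1))
      (Subtype.val : {j : Fin (n+1) // j ≠ z} → Fin (n+1)))
    (by intro i j; simp [finSuccAboveEquiv_apply])]
  exact hcore
end
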